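/- arXiv:1811.08137 — 4 statements merged into one kernel-verified Lean document; each statement's English description precedes it below -/
import Mathlib

section
/- Martingale Hardy–Littlewood–Sobolev inequality: for all real numbers 1 < p < q < ∞, setting α := 1/p − 1/q, there is a constant C = C(m,p,q) such that every real-valued martingale F adapted to (ℱ_n) with sup_n ‖F_n‖_{L_p(P)} < ∞ satisfies, for every N ≥ 1, ‖Σ_{n=1}^N m^{−α·n}·f_n‖_{L_q(P)} ≤ C·sup_n ‖F_n‖_{L_p(P)}. -/
open MeasureTheory ENNReal NNReal

noncomputable section

namespace MartingaleModel


/-- The cylinder in `ℕ → Fin m` determined by a word `w` of length `n`. -/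
def cyl (m n : ℕ) (w : Fin n → Fin m) : Set (ℕ → Fin m) :=
  {x | ∀ i : Fin n, x (i : ℕ) = w i}

/-- `F` is adapted: `F n` depends only on the first `n` coordinates. -/
def AdaptedFun (m : ℕ) {E : Type*} (F : ℕ → (ℕ → Fin m) → E) : Prop :=
  ∀ n (x y : ℕ → Fin m), (∀ i < n, x i = y i) → F n x = F n y

/-- `F` is a martingale for the uniform `m`-adic filtration:
adapted, and each value is the average of the values on the children. -/
def IsMartingaleFun (m : ℕ) {E : Type*} [AddCommGroup E] [Module ℝ E]
    (F : ℕ → (ℕ → Fin m) → E) : Prop :=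
  AdaptedFun m F ∧
    ∀ n (x : ℕ → Fin m), (m : ℝ) • F n x = ∑ j : Fin m, F (n + 1) (Function.update x n j)

/-- Partial sums of the Riesz potential `I_α` applied to the martingale `F`,
`(I_α F)_N = ∑_{n=1}^N m^{-α n} f_n` where `f_n = F_n - F_{n-1}`. -/
def rieszSum (m : ℕ) {E : Type*} [AddCommGroup E] [Module ℝ E] (α : ℝ)
    (F : ℕ → (ℕ → Fin m) → E) (N : ℕ) (x : ℕ → Fin m) : E :=
  ∑ n ∈ Finset.Icc 1 N, ((m : ℝ) ^ (-(α * n)) : ℝ) • (F n x - F (n - 1) x)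

end MartingaleModel

open MartingaleModel

namespace MHLSAux
open Finset


lemma geomA {r : ℝ} (hr : 1 < r) (τ : ℝ) (N : ℕ) :
    ∑ n ∈ Finset.Icc 1 N, (if (n : ℝ) ≤ τ then r ^ n else 0) ≤ r ^ τ * (r / (r - 1)) := by
  have hr0 : (0:ℝ) < r := by linarith
  have hr1 : (0:ℝ) < r - 1 := by linarith
  have hrpos : 0 < r ^ τ := Real.rpow_pos_of_pos hr0 τ
  by_cases hτ : τ < 1
  · have hz : ∀ n ∈ Finset.Icc 1 N, (if (n : ℝ) ≤ τ then r ^ n else 0) = 0 := by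
      intro n hn
      have h1 : 1 ≤ n := (Finset.mem_Icc.1 hn).1
      have : ¬((n : ℝ) ≤ τ) := by
        push_neg
        calc τ < 1 := hτ
        _ ≤ (n : ℝ) := by exact_mod_cast h1
      simp [this]
    rw [Finset.sum_congr rfl hz]
    simp only [Finset.sum_const_zero]
    positivity
  · push_neg at hτ
    have hτ0 : (0:ℝ) ≤ τ := by linarith
    have hsub : (Finset.Icc 1 N).filter (fun n : ℕ => (n : ℝ) ≤ τ) ⊆ Finset.range (⌊τ⌋₊ + 1) := by
      intro n hn
      rw [Finset.mem_filter] at hn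
      exact Finset.mem_range.2 (Nat.lt_succ_of_le (Nat.le_floor hn.2))
    calc ∑ n ∈ Finset.Icc 1 N, (if (n : ℝ) ≤ τ then r ^ n else 0)
        = ∑ n ∈ (Finset.Icc 1 N).filter (fun n : ℕ => (n : ℝ) ≤ τ), r ^ n :=
          (Finset.sum_filter _ _).symm
      _ ≤ ∑ n ∈ Finset.range (⌊τ⌋₊ + 1), r ^ n :=
          Finset.sum_le_sum_of_subset_of_nonneg hsub (by intros; positivity)
      _ = (r ^ (⌊τ⌋₊ + 1) - 1) / (r - 1) := geom_sum_eq (ne_of_gt hr) _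
      _ ≤ r ^ (⌊τ⌋₊ + 1) / (r - 1) := by gcongr; linarith
      _ ≤ r ^ τ * (r / (r - 1)) := by
          rw [pow_succ, mul_div_assoc]
          gcongr
          calc r ^ (⌊τ⌋₊ : ℕ) = r ^ ((⌊τ⌋₊ : ℕ) : ℝ) := (Real.rpow_natCast r _).symm
          _ ≤ r ^ τ := Real.rpow_le_rpow_of_exponent_le (le_of_lt hr) (Nat.floor_le hτ0)

lemma geomB {s : ℝ} (hs : 1 < s) (τ : ℝ) (N : ℕ) :
    ∑ n ∈ Finset.Icc 1 N, (if τ < (n : ℝ) then (s⁻¹) ^ n else 0) ≤ s ^ (-τ) * (s / (s - 1)) := by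
  have hs0 : (0:ℝ) < s := by linarith
  have hs1 : (0:ℝ) < s - 1 := by linarith
  set x := s⁻¹ with hxdef
  have hx0 : 0 < x := by positivity
  have hx1 : x < 1 := by rw [hxdef, inv_lt_one_iff₀]; right; exact hs
  set J := ⌈τ⌉₊ with hJ
  have hsub : (Finset.Icc 1 N).filter (fun n : ℕ => τ < (n : ℝ)) ⊆ Finset.Ico J (N + 1) := by
    intro n hn
    rw [Finset.mem_filter, Finset.mem_Icc] at hn
    refine Finset.mem_Ico.2 ⟨Nat.ceil_le.2 (le_of_lt hn.2), by omega⟩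
  calc ∑ n ∈ Finset.Icc 1 N, (if τ < (n : ℝ) then x ^ n else 0)
      = ∑ n ∈ (Finset.Icc 1 N).filter (fun n : ℕ => τ < (n : ℝ)), x ^ n :=
        (Finset.sum_filter _ _).symm
    _ ≤ ∑ n ∈ Finset.Ico J (N + 1), x ^ n :=
        Finset.sum_le_sum_of_subset_of_nonneg hsub (by intros; positivity)
    _ = ∑ i ∈ Finset.range (N + 1 - J), x ^ (J + i) := Finset.sum_Ico_eq_sum_range _ _ _
    _ = x ^ J * ∑ i ∈ Finset.range (N + 1 - J), x ^ i := by
        rw [Finset.mul_sum]; exact Finset.sum_congr rfl fun i _ => pow_add x J i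
    _ ≤ x ^ J * (1 / (1 - x)) := by
        have hgs : ∑ i ∈ Finset.range (N + 1 - J), x ^ i ≤ 1 / (1 - x) := by
          rw [geom_sum_eq (ne_of_lt hx1), ← neg_div_neg_eq, neg_sub, neg_sub]
          gcongr
          nlinarith [pow_nonneg (le_of_lt hx0) (N + 1 - J)]
        exact mul_le_mul_of_nonneg_left hgs (by positivity)
    _ ≤ s ^ (-τ) * (s / (s - 1)) := by
        have h1 : x ^ J ≤ s ^ (-τ) := by
          have hxj : x ^ J = s ^ (-(J : ℝ)) := by
            rw [Real.rpow_neg (le_of_lt hs0), Real.rpow_natCast s J, hxdef, inv_pow]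
          rw [hxj]
          exact Real.rpow_le_rpow_of_exponent_le (le_of_lt hs) (neg_le_neg (Nat.le_ceil τ))
        have h2 : 1 / (1 - x) = s / (s - 1) := by
          rw [hxdef]; field_simp
        rw [h2]
        have hpos : (0:ℝ) ≤ s / (s - 1) := by positivity
        exact mul_le_mul_of_nonneg_right h1 hpos
lemma sum_min_le {m p q : ℝ} (hm : 1 < m) (hp : 1 < p) (hpq : p < q) (hq : 1 < q)
    {a g : ℝ} (ha : 0 ≤ a) (hg : 0 ≤ g) (N : ℕ) :
    ∑ n ∈ Finset.Icc 1 N, m ^ (-((1/p - 1/q) * (n:ℝ))) * min (m ^ ((n:ℝ)/p) * a) g ≤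
      (m ^ (1/q:ℝ) / (m ^ (1/q:ℝ) - 1) + m ^ (1/p - 1/q) / (m ^ (1/p - 1/q) - 1)) *
        (a ^ (1 - p/q) * g ^ (p/q)) := by
  have hm0 : (0:ℝ) < m := by linarith
  have hp0 : (0:ℝ) < p := by linarith
  have hq0 : (0:ℝ) < q := by linarith
  have hα : (0:ℝ) < 1/p - 1/q := by
    have := one_div_lt_one_div_of_lt hp0 hpq
    linarith
  set α := 1/p - 1/q with hαdef
  set r := m ^ (1/q:ℝ) with hrdef
  set s := m ^ α with hsdef
  have hr : 1 < r := Real.one_lt_rpow_iff_of_pos hm0 |>.2 (Or.inl ⟨hm, by positivity⟩)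
  have hs : 1 < s := Real.one_lt_rpow_iff_of_pos hm0 |>.2 (Or.inl ⟨hm, hα⟩)
  have hr0 : (0:ℝ) < r := by linarith
  have hs0 : (0:ℝ) < s := by linarith
  have hC : (0:ℝ) ≤ r / (r - 1) + s / (s - 1) := by
    have : (0:ℝ) < r - 1 := by linarith
    have : (0:ℝ) < s - 1 := by linarith
    positivity
  have hppos : (0:ℝ) < 1 - p/q := by
    rw [sub_pos, div_lt_one hq0]; exact hpq
  rcases eq_or_lt_of_le ha with ha0 | ha0
  · -- a = 0
    have hz : ∀ n ∈ Finset.Icc 1 N, m ^ (-(α * (n:ℝ))) * min (m ^ ((n:ℝ)/p) * a) g = 0 := by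
      intro n _
      rw [← ha0, mul_zero, min_eq_left hg, mul_zero]
    rw [Finset.sum_congr rfl hz, Finset.sum_const_zero, ← ha0,
      Real.zero_rpow (ne_of_gt hppos), zero_mul, mul_zero]
  rcases eq_or_lt_of_le hg with hg0 | hg0
  · -- g = 0
    have hz : ∀ n ∈ Finset.Icc 1 N, m ^ (-(α * (n:ℝ))) * min (m ^ ((n:ℝ)/p) * a) g = 0 := by
      intro n _
      rw [← hg0, min_eq_right (by positivity), mul_zero]
    rw [Finset.sum_congr rfl hz, Finset.sum_const_zero, ← hg0,
      Real.zero_rpow (by positivity), mul_zero, mul_zero]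
  -- main case
  set τ := p * Real.logb m (g/a) with hτdef
  have hlogm : 0 < Real.log m := Real.log_pos hm
  have hτ : τ * Real.log m = p * (Real.log g - Real.log a) := by
    rw [hτdef, Real.logb, Real.log_div (ne_of_gt hg0) (ne_of_gt ha0)]
    field_simp
  have hrlog : Real.log r = (1/q) * Real.log m := by
    rw [hrdef, Real.log_rpow hm0]
  have hslog : Real.log s = α * Real.log m := by
    rw [hsdef, Real.log_rpow hm0]
  have h1 : r ^ τ * a = a ^ (1 - p/q) * g ^ (p/q) := by
    have e1 : Real.log (r ^ τ * a) = Real.log (a ^ (1 - p/q) * g ^ (p/q)) := by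
      rw [Real.log_mul (by positivity) (ne_of_gt ha0),
        Real.log_mul (by positivity) (by positivity),
        Real.log_rpow hr0, Real.log_rpow ha0, Real.log_rpow hg0, hrlog]
      have hq' : q ≠ 0 := ne_of_gt hq0
      field_simp
      linear_combination hτ
    have := congrArg Real.exp e1
    rwa [Real.exp_log (by positivity), Real.exp_log (by positivity)] at this
  have h2 : s ^ (-τ) * g = a ^ (1 - p/q) * g ^ (p/q) := by
    have hαp : α * p = 1 - p/q := by
      rw [hαdef]; field_simp
    have e1 : Real.log (s ^ (-τ) * g) = Real.log (a ^ (1 - p/q) * g ^ (p/q)) := by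
      rw [Real.log_mul (by positivity) (ne_of_gt hg0),
        Real.log_mul (by positivity) (by positivity),
        Real.log_rpow hs0, Real.log_rpow ha0, Real.log_rpow hg0, hslog]
      have hq' : q ≠ 0 := ne_of_gt hq0
      have hp' : p ≠ 0 := ne_of_gt hp0
      have hτ' : τ * (α * Real.log m) = (α * p) * (Real.log g - Real.log a) := by
        linear_combination α * hτ
      rw [hαp] at hτ'
      linear_combination (-1 : ℝ) * hτ'
    have := congrArg Real.exp e1
    rwa [Real.exp_log (by positivity), Real.exp_log (by positivity)] at this
  have hterm : ∀ n ∈ Finset.Icc 1 N, m ^ (-(α * (n:ℝ))) * min (m ^ ((n:ℝ)/p) * a) g ≤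
      (if (n : ℝ) ≤ τ then r ^ n else 0) * a + (if τ < (n : ℝ) then (s⁻¹) ^ n else 0) * g := by
    intro n _
    by_cases hc : (n : ℝ) ≤ τ
    · rw [if_pos hc, if_neg (not_lt.2 hc), zero_mul, add_zero]
      have hmin : min (m ^ ((n:ℝ)/p) * a) g ≤ m ^ ((n:ℝ)/p) * a := min_le_left _ _
      calc m ^ (-(α * (n:ℝ))) * min (m ^ ((n:ℝ)/p) * a) g
          ≤ m ^ (-(α * (n:ℝ))) * (m ^ ((n:ℝ)/p) * a) := by
            exact mul_le_mul_of_nonneg_left hmin (by positivity)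
        _ = r ^ n * a := by
            rw [hrdef, ← Real.rpow_natCast (m ^ (1/q:ℝ)) n, ← Real.rpow_mul (le_of_lt hm0),
              ← mul_assoc, ← Real.rpow_add hm0]
            congr 2
            rw [hαdef]; ring
    · rw [if_neg hc, if_pos (not_le.1 hc), zero_mul, zero_add]
      have hmin : min (m ^ ((n:ℝ)/p) * a) g ≤ g := min_le_right _ _
      calc m ^ (-(α * (n:ℝ))) * min (m ^ ((n:ℝ)/p) * a) g
          ≤ m ^ (-(α * (n:ℝ))) * g := mul_le_mul_of_nonneg_left hmin (by positivity)
        _ = (s⁻¹) ^ n * g := by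
            congr 1
            rw [hsdef, ← Real.rpow_neg_one (m ^ α), ← Real.rpow_natCast ((m^α) ^ (-1:ℝ)) n,
              ← Real.rpow_mul (le_of_lt hm0), ← Real.rpow_mul (le_of_lt hm0)]
            congr 1
            ring
  calc ∑ n ∈ Finset.Icc 1 N, m ^ (-(α * (n:ℝ))) * min (m ^ ((n:ℝ)/p) * a) g
      ≤ ∑ n ∈ Finset.Icc 1 N, ((if (n : ℝ) ≤ τ then r ^ n else 0) * a
          + (if τ < (n : ℝ) then (s⁻¹) ^ n else 0) * g) := Finset.sum_le_sum hterm
    _ = (∑ n ∈ Finset.Icc 1 N, (if (n : ℝ) ≤ τ then r ^ n else 0)) * a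
          + (∑ n ∈ Finset.Icc 1 N, (if τ < (n : ℝ) then (s⁻¹) ^ n else 0)) * g := by
        rw [Finset.sum_add_distrib, Finset.sum_mul, Finset.sum_mul]
    _ ≤ (r ^ τ * (r / (r - 1))) * a + (s ^ (-τ) * (s / (s - 1))) * g := by
        have hb1 := geomA hr τ N
        have hb2 := geomB hs τ N
        have hd1 : (0:ℝ) < r - 1 := by linarith
        have hd2 : (0:ℝ) < s - 1 := by linarith
        gcongr
    _ = (r / (r - 1)) * (r ^ τ * a) + (s / (s - 1)) * (s ^ (-τ) * g) := by ring
    _ = (r / (r - 1)) * (a ^ (1 - p/q) * g ^ (p/q))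
          + (s / (s - 1)) * (a ^ (1 - p/q) * g ^ (p/q)) := by rw [h1, h2]
    _ = (r / (r - 1) + s / (s - 1)) * (a ^ (1 - p/q) * g ^ (p/q)) := by ring

lemma hedberg {m p q : ℝ} (hm : 1 < m) (hp : 1 < p) (hpq : p < q) (hq : 1 < q)
    {a g : ℝ} (ha : 0 ≤ a) (hg : 0 ≤ g) (N : ℕ) (u : ℕ → ℝ)
    (h1 : ∀ n ≤ N, |u n| ≤ m ^ ((n:ℝ)/p) * a) (h2 : ∀ n ≤ N, |u n| ≤ g) :
    |∑ n ∈ Finset.Icc 1 N, m ^ (-((1/p - 1/q) * (n:ℝ))) * (u n - u (n-1))| ≤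
      2 * ((m ^ (1/q:ℝ) / (m ^ (1/q:ℝ) - 1) + m ^ (1/p - 1/q) / (m ^ (1/p - 1/q) - 1)) *
        (a ^ (1 - p/q) * g ^ (p/q))) := by
  have hm0 : (0:ℝ) < m := by linarith
  have hp0 : (0:ℝ) < p := by linarith
  have hterm : ∀ n ∈ Finset.Icc 1 N, |m ^ (-((1/p - 1/q) * (n:ℝ))) * (u n - u (n-1))| ≤
      2 * (m ^ (-((1/p - 1/q) * (n:ℝ))) * min (m ^ ((n:ℝ)/p) * a) g) := by
    intro n hn
    obtain ⟨hn1, hn2⟩ := Finset.mem_Icc.1 hn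
    have hb1 : |u n| ≤ min (m ^ ((n:ℝ)/p) * a) g := le_min (h1 n hn2) (h2 n hn2)
    have hb2 : |u (n-1)| ≤ min (m ^ ((n:ℝ)/p) * a) g := by
      refine le_min ?_ (h2 (n-1) (le_trans (Nat.sub_le _ _) hn2))
      refine le_trans (h1 (n-1) (le_trans (Nat.sub_le _ _) hn2)) ?_
      have hcast : ((n-1 : ℕ) : ℝ) ≤ (n : ℝ) := by exact_mod_cast Nat.sub_le n 1
      have : m ^ (((n-1:ℕ):ℝ)/p) ≤ m ^ ((n:ℝ)/p) := by
        apply Real.rpow_le_rpow_of_exponent_le (le_of_lt hm)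
        gcongr
      exact mul_le_mul_of_nonneg_right this ha
    have hdiff : |u n - u (n-1)| ≤ 2 * min (m ^ ((n:ℝ)/p) * a) g := by
      calc |u n - u (n-1)| ≤ |u n| + |u (n-1)| := abs_sub _ _
        _ ≤ _ := by linarith
    rw [abs_mul, abs_of_nonneg (by positivity : (0:ℝ) ≤ m ^ (-((1/p - 1/q) * (n:ℝ))))]
    calc m ^ (-((1/p - 1/q) * (n:ℝ))) * |u n - u (n-1)|
        ≤ m ^ (-((1/p - 1/q) * (n:ℝ))) * (2 * min (m ^ ((n:ℝ)/p) * a) g) :=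
          mul_le_mul_of_nonneg_left hdiff (by positivity)
      _ = 2 * (m ^ (-((1/p - 1/q) * (n:ℝ))) * min (m ^ ((n:ℝ)/p) * a) g) := by ring
  calc |∑ n ∈ Finset.Icc 1 N, m ^ (-((1/p - 1/q) * (n:ℝ))) * (u n - u (n-1))|
      ≤ ∑ n ∈ Finset.Icc 1 N, |m ^ (-((1/p - 1/q) * (n:ℝ))) * (u n - u (n-1))| :=
        Finset.abs_sum_le_sum_abs _ _
    _ ≤ ∑ n ∈ Finset.Icc 1 N, 2 * (m ^ (-((1/p - 1/q) * (n:ℝ))) * min (m ^ ((n:ℝ)/p) * a) g) :=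
        Finset.sum_le_sum hterm
    _ = 2 * ∑ n ∈ Finset.Icc 1 N, m ^ (-((1/p - 1/q) * (n:ℝ))) * min (m ^ ((n:ℝ)/p) * a) g := by
        rw [Finset.mul_sum]
    _ ≤ _ := by
        have := sum_min_le hm hp hpq hq ha hg N
        linarith
variable {m N : ℕ}

/-- Words agreeing with `v` on the first `n` letters. -/
def agree (m N n : ℕ) (v : Fin N → Fin m) : Finset (Fin N → Fin m) :=
  Finset.univ.filter (fun w => ∀ i : Fin N, (i : ℕ) < n → w i = v i)

lemma mem_agree {n : ℕ} {v w : Fin N → Fin m} :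
    w ∈ agree m N n v ↔ ∀ i : Fin N, (i : ℕ) < n → w i = v i := by
  simp [agree]

lemma tower (u : ℕ → (Fin N → Fin m) → ℝ)
    (avg : ∀ n, ∀ h : n < N, ∀ w, (m : ℝ) * u n w =
      ∑ j : Fin m, u (n + 1) (Function.update w ⟨n, h⟩ j)) :
    ∀ k n, n + k = N → ∀ v, ∑ w ∈ agree m N n v, u N w = (m : ℝ) ^ k * u n v := by
  intro k
  induction k with
  | zero =>
    intro n hn v
    have : agree m N n v = {v} := by
      ext w
      rw [mem_agree, Finset.mem_singleton]
      constructor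
      · intro h; funext i; exact h i (by omega)
      · intro h i _; rw [h]
    have hnN : n = N := by omega
    subst hnN
    rw [this, Finset.sum_singleton]
    simp
  | succ k ih =>
    intro n hn v
    have hnN : n < N := by omega
    have hsplit : ∀ j : Fin m, (agree m N n v).filter (fun w => w ⟨n, hnN⟩ = j)
        = agree m N (n + 1) (Function.update v ⟨n, hnN⟩ j) := by
      intro j
      ext w
      rw [Finset.mem_filter, mem_agree, mem_agree]
      constructor
      · rintro ⟨h1, h2⟩ i hi
        rcases Nat.lt_or_ge (i : ℕ) n with hlt | hge
        · rw [h1 i hlt, Function.update_of_ne (by simp [Fin.ext_iff]; omega)]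
        · have : (i : ℕ) = n := by omega
          have hii : i = ⟨n, hnN⟩ := by simp [Fin.ext_iff, this]
          rw [hii, h2, Function.update_self]
      · intro h
        constructor
        · intro i hi
          have := h i (by omega)
          rwa [Function.update_of_ne (by simp [Fin.ext_iff]; omega)] at this
        · have := h ⟨n, hnN⟩ (by simp)
          rwa [Function.update_self] at this
    calc ∑ w ∈ agree m N n v, u N w
        = ∑ j : Fin m, ∑ w ∈ (agree m N n v).filter (fun w => w ⟨n, hnN⟩ = j), u N w :=
          (Finset.sum_fiberwise_of_maps_to (fun w _ => Finset.mem_univ _) _).symm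
      _ = ∑ j : Fin m, (m : ℝ) ^ k * u (n+1) (Function.update v ⟨n, hnN⟩ j) := by
          refine Finset.sum_congr rfl fun j _ => ?_
          rw [hsplit j]
          exact ih (n+1) (by omega) _
      _ = (m : ℝ) ^ k * ((m : ℝ) * u n v) := by
          rw [← Finset.mul_sum, ← avg n hnN v]
      _ = (m : ℝ) ^ (k+1) * u n v := by ring

lemma card_agree (hm : 0 < m) {n : ℕ} (hn : n ≤ N) (v : Fin N → Fin m) :
    ((agree m N n v).card : ℝ) = (m : ℝ) ^ (N - n) := by
  have h0 : n + (N - n) = N := by omega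
  have := tower (m := m) (N := N) (fun _ _ => (1:ℝ)) (by
    intro n h w
    simp) (N - n) n h0 v
  simpa using this

/-- The maximal function. -/
def mx (u : ℕ → (Fin N → Fin m) → ℝ) (w : Fin N → Fin m) : ℝ :=
  (Finset.range (N + 1)).sup' (by simp) (fun n => |u n w|)

lemma le_mx (u : ℕ → (Fin N → Fin m) → ℝ) {n : ℕ} (hn : n ≤ N) (w : Fin N → Fin m) :
    |u n w| ≤ mx u w := by
  have hmem : n ∈ Finset.range (N + 1) := Finset.mem_range.2 (by omega)
  exact Finset.le_sup' (fun k => |u k w|) hmem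

lemma mx_nonneg (u : ℕ → (Fin N → Fin m) → ℝ) (w : Fin N → Fin m) : 0 ≤ mx u w :=
  le_trans (abs_nonneg _) (le_mx u (Nat.zero_le N) w)

lemma exists_mx (u : ℕ → (Fin N → Fin m) → ℝ) (w : Fin N → Fin m) :
    ∃ n ≤ N, mx u w = |u n w| := by
  obtain ⟨n, hn, h⟩ := Finset.exists_mem_eq_sup' (by simp : (Finset.range (N+1)).Nonempty)
    (fun n => |u n w|)
  exact ⟨n, by have := Finset.mem_range.1 hn; omega, h⟩

/-- Doob's weak maximal inequality, counting form. -/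
lemma weak_ineq (hm : 0 < m) (u : ℕ → (Fin N → Fin m) → ℝ)
    (loc : ∀ n ≤ N, ∀ w w', (∀ i : Fin N, (i : ℕ) < n → w i = w' i) → u n w = u n w')
    (avg : ∀ n, ∀ h : n < N, ∀ w, (m : ℝ) * u n w =
      ∑ j : Fin m, u (n + 1) (Function.update w ⟨n, h⟩ j))
    (t : ℝ) (ht : 0 < t) :
    t * ((Finset.univ.filter (fun w : Fin N → Fin m => t < mx u w)).card : ℝ) ≤
      ∑ w ∈ Finset.univ.filter (fun w : Fin N → Fin m => t < mx u w), |u N w| := by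
  set B := Finset.univ.filter (fun w : Fin N → Fin m => t < mx u w) with hB
  -- first hitting time
  set σ : (Fin N → Fin m) → ℕ := fun w =>
    if h : ((Finset.range (N+1)).filter (fun n => t < |u n w|)).Nonempty
    then (((Finset.range (N+1)).filter (fun n => t < |u n w|))).min' h else 0 with hσ
  have hBne : ∀ w ∈ B, ((Finset.range (N+1)).filter (fun n => t < |u n w|)).Nonempty := by
    intro w hw
    rw [hB, Finset.mem_filter] at hw
    obtain ⟨n, hn, he⟩ := exists_mx u w
    exact ⟨n, Finset.mem_filter.2 ⟨Finset.mem_range.2 (by omega), by rw [← he]; exact hw.2⟩⟩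
  have hσ_le : ∀ w ∈ B, σ w ≤ N := by
    intro w hw
    rw [hσ]; simp only [dif_pos (hBne w hw)]
    have := Finset.min'_mem _ (hBne w hw)
    rw [Finset.mem_filter, Finset.mem_range] at this
    omega
  have hσ_hit : ∀ w ∈ B, t < |u (σ w) w| := by
    intro w hw
    rw [hσ]; simp only [dif_pos (hBne w hw)]
    have := Finset.min'_mem _ (hBne w hw)
    exact (Finset.mem_filter.1 this).2
  have hσ_min : ∀ w ∈ B, ∀ k, k ∈ ((Finset.range (N+1)).filter (fun n => t < |u n w|)) →
      σ w ≤ k := by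
    intro w hw k hk
    rw [hσ]; simp only [dif_pos (hBne w hw)]
    exact Finset.min'_le _ _ hk
  -- agreement transfers membership and σ
  have key : ∀ w ∈ B, ∀ w', (∀ i : Fin N, (i : ℕ) < σ w → w' i = w i) →
      w' ∈ B ∧ σ w' = σ w := by
    intro w hw w' hagree
    have huk : ∀ k ≤ σ w, u k w' = u k w := by
      intro k hk
      exact loc k (le_trans hk (hσ_le w hw)) w' w (fun i hi => hagree i (by omega))
    have hw'B : w' ∈ B := by
      rw [hB, Finset.mem_filter]
      refine ⟨Finset.mem_univ _, lt_of_lt_of_le ?_ (le_mx u (hσ_le w hw) w')⟩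
      rw [huk (σ w) le_rfl]
      exact hσ_hit w hw
    refine ⟨hw'B, ?_⟩
    have h1 : σ w' ≤ σ w := by
      apply hσ_min w' hw'B
      rw [Finset.mem_filter, Finset.mem_range]
      refine ⟨by have := hσ_le w hw; omega, ?_⟩
      rw [huk (σ w) le_rfl]; exact hσ_hit w hw
    rcases Nat.lt_or_ge (σ w') (σ w) with hlt | hge
    · exfalso
      have hhit' : t < |u (σ w') w'| := hσ_hit w' hw'B
      rw [huk (σ w') (le_of_lt hlt)] at hhit'
      have : σ w ≤ σ w' := hσ_min w hw (σ w') (by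
        rw [Finset.mem_filter, Finset.mem_range]
        exact ⟨by have := hσ_le w hw; omega, hhit'⟩)
      omega
    · omega
  -- representative map
  set rep : (Fin N → Fin m) → (Fin N → Fin m) := fun w i =>
    if (i : ℕ) < σ w then w i else ⟨0, hm⟩ with hrep
  have hrep_agree : ∀ w, ∀ i : Fin N, (i : ℕ) < σ w → rep w i = w i := by
    intro w i hi; rw [hrep]; simp only [hi, if_pos]
  have hrep_key : ∀ w ∈ B, rep w ∈ B ∧ σ (rep w) = σ w := by
    intro w hw; exact key w hw (rep w) (hrep_agree w)
  have hrep_eq : ∀ w ∈ B, ∀ w', (∀ i : Fin N, (i : ℕ) < σ w → w' i = w i) → rep w' = rep w := by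
    intro w hw w' hagree
    have hσ' : σ w' = σ w := (key w hw w' hagree).2
    funext i
    rw [hrep]
    simp only [hσ']
    by_cases hi : (i : ℕ) < σ w
    · rw [if_pos hi, if_pos hi]; exact hagree i hi
    · rw [if_neg hi, if_neg hi]
  -- fibers are agree-sets
  have hfiber : ∀ w₀ ∈ B, B.filter (fun w => rep w = rep w₀) = agree m N (σ w₀) (rep w₀) := by
    intro w₀ hw₀
    have hrw₀ : rep w₀ ∈ B := (hrep_key w₀ hw₀).1
    have hσrw₀ : σ (rep w₀) = σ w₀ := (hrep_key w₀ hw₀).2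
    ext w
    rw [Finset.mem_filter, mem_agree]
    constructor
    · rintro ⟨hwB, hww₀⟩
      intro i hi
      have : σ w = σ (rep w) := ((key w hwB (rep w) (hrep_agree w)).2).symm
      have hσw : σ w = σ w₀ := by rw [this, hww₀, hσrw₀]
      rw [← hww₀]
      exact (hrep_agree w i (by omega)).symm
    · intro hagree
      have hagree' : ∀ i : Fin N, (i : ℕ) < σ (rep w₀) → w i = rep w₀ i := by
        intro i hi; exact hagree i (by rwa [hσrw₀] at hi)
      obtain ⟨hwB, hσw⟩ := key (rep w₀) hrw₀ w hagree'
      refine ⟨hwB, ?_⟩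
      rw [hrep_eq (rep w₀) hrw₀ w hagree', hrep_eq w₀ hw₀ (rep w₀) (hrep_agree w₀)]
  -- now sum fiberwise
  have hmaps : ∀ w ∈ B, rep w ∈ B.image rep := fun w hw => Finset.mem_image_of_mem _ hw
  have hsum1 : ∑ v ∈ B.image rep, ∑ w ∈ B.filter (fun w => rep w = v), |u N w|
      = ∑ w ∈ B, |u N w| := Finset.sum_fiberwise_of_maps_to hmaps _
  have hsum2 : ∑ v ∈ B.image rep, ∑ w ∈ B.filter (fun w => rep w = v), (1:ℝ)
      = ∑ w ∈ B, (1:ℝ) := Finset.sum_fiberwise_of_maps_to hmaps _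
  -- per-fiber estimate
  have hperfiber : ∀ v ∈ B.image rep,
      t * ∑ w ∈ B.filter (fun w => rep w = v), (1:ℝ) ≤
        ∑ w ∈ B.filter (fun w => rep w = v), |u N w| := by
    intro v hv
    obtain ⟨w₀, hw₀, rfl⟩ := Finset.mem_image.1 hv
    rw [hfiber w₀ hw₀]
    have hσle := hσ_le w₀ hw₀
    have htower := tower u avg (N - σ w₀) (σ w₀) (by omega) (rep w₀)
    have hcard := card_agree (m := m) (N := N) hm hσle (rep w₀)
    have huval : u (σ w₀) (rep w₀) = u (σ w₀) w₀ := by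
      apply loc (σ w₀) hσle
      intro i hi; exact hrep_agree w₀ i hi
    calc t * ∑ w ∈ agree m N (σ w₀) (rep w₀), (1:ℝ)
        = t * ((agree m N (σ w₀) (rep w₀)).card : ℝ) := by rw [Finset.sum_const, nsmul_eq_mul, mul_one]
      _ = t * (m:ℝ) ^ (N - σ w₀) := by rw [hcard]
      _ ≤ |u (σ w₀) w₀| * (m:ℝ) ^ (N - σ w₀) := by
          have := hσ_hit w₀ hw₀
          have hpow : (0:ℝ) ≤ (m:ℝ) ^ (N - σ w₀) := by positivity
          nlinarith
      _ = |(m:ℝ) ^ (N - σ w₀) * u (σ w₀) (rep w₀)| := by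
          rw [abs_mul, abs_of_nonneg (by positivity : (0:ℝ) ≤ (m:ℝ) ^ (N - σ w₀)), huval, mul_comm]
      _ = |∑ w ∈ agree m N (σ w₀) (rep w₀), u N w| := by rw [htower]
      _ ≤ ∑ w ∈ agree m N (σ w₀) (rep w₀), |u N w| := Finset.abs_sum_le_sum_abs _ _
  calc t * (B.card : ℝ)
      = t * ∑ w ∈ B, (1:ℝ) := by rw [Finset.sum_const, nsmul_eq_mul, mul_one]
    _ = ∑ v ∈ B.image rep, t * ∑ w ∈ B.filter (fun w => rep w = v), (1:ℝ) := by
        rw [← hsum2, Finset.mul_sum]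
    _ ≤ ∑ v ∈ B.image rep, ∑ w ∈ B.filter (fun w => rep w = v), |u N w| :=
        Finset.sum_le_sum hperfiber
    _ = ∑ w ∈ B, |u N w| := hsum1

lemma ptwise (hm : 0 < m) {p : ℝ} (hp : 1 < p) (u : ℕ → (Fin N → Fin m) → ℝ)
    (loc : ∀ n ≤ N, ∀ w w', (∀ i : Fin N, (i : ℕ) < n → w i = w' i) → u n w = u n w')
    {a : ℝ} (ha : 0 ≤ a) {n : ℕ} (hn : n ≤ N)
    (hA : ∑ w, |u n w| ^ p ≤ (m:ℝ)^N * a ^ p) (v : Fin N → Fin m) :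
    |u n v| ≤ (m:ℝ) ^ ((n:ℝ)/p) * a := by
  have hp0 : (0:ℝ) < p := by linarith
  have h1 : ∑ w ∈ agree m N n v, |u n w| ^ p = (m:ℝ)^(N-n) * |u n v| ^ p := by
    rw [Finset.sum_congr rfl (fun w hw => by rw [loc n hn w v (mem_agree.1 hw)]),
      Finset.sum_const, nsmul_eq_mul, card_agree hm hn v]
  have h2 : ∑ w ∈ agree m N n v, |u n w| ^ p ≤ ∑ w, |u n w| ^ p :=
    Finset.sum_le_sum_of_subset_of_nonneg (Finset.subset_univ _)
      (fun w _ _ => by positivity)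
  have h3 : (m:ℝ)^(N-n) * |u n v| ^ p ≤ (m:ℝ)^(N-n) * ((m:ℝ)^n * a ^ p) := by
    rw [← h1]
    refine le_trans h2 (le_of_le_of_eq hA ?_)
    rw [← mul_assoc, ← pow_add]
    congr 2
    omega
  have hmn : (0:ℝ) < (m:ℝ)^(N-n) := by positivity
  have h4 : |u n v| ^ p ≤ (m:ℝ)^n * a ^ p := le_of_mul_le_mul_left h3 hmn
  have h5 : (|u n v| ^ p) ^ (1/p) ≤ ((m:ℝ)^n * a^p) ^ (1/p) :=
    Real.rpow_le_rpow (by positivity) h4 (by positivity)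
  have e1 : (|u n v| ^ p) ^ (1/p) = |u n v| := by
    rw [← Real.rpow_mul (abs_nonneg _), mul_one_div, div_self (ne_of_gt hp0), Real.rpow_one]
  have e2 : ((m:ℝ)^n * a^p) ^ (1/p) = (m:ℝ) ^ ((n:ℝ)/p) * a := by
    rw [Real.mul_rpow (by positivity) (by positivity), ← Real.rpow_natCast (m:ℝ) n,
      ← Real.rpow_mul (by positivity), ← Real.rpow_mul ha, mul_one_div, mul_one_div,
      div_self (ne_of_gt hp0), Real.rpow_one]
  rw [e1, e2] at h5
  exact h5

open MeasureTheory in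
lemma layer_int {r : ℝ} (hr : (-1:ℝ) < r) {c T : ℝ} (hc : 0 ≤ c) (hcT : c ≤ T) :
    ∫ t in Set.Ioc (0:ℝ) T, (Set.Iio c).indicator (fun t => t ^ r) t = c ^ (r+1) / (r+1) := by
  rw [MeasureTheory.integral_indicator measurableSet_Iio,
    MeasureTheory.Measure.restrict_restrict measurableSet_Iio]
  have hset : Set.Iio c ∩ Set.Ioc (0:ℝ) T = Set.Ioo 0 c := by
    ext t
    simp only [Set.mem_inter_iff, Set.mem_Iio, Set.mem_Ioc, Set.mem_Ioo]
    constructor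
    · rintro ⟨h1, h2, h3⟩; exact ⟨h2, h1⟩
    · rintro ⟨h1, h2⟩; exact ⟨h2, h1, le_trans (le_of_lt h2) hcT⟩
  rw [hset, ← MeasureTheory.integral_Ioc_eq_integral_Ioo,
    ← intervalIntegral.integral_of_le hc, integral_rpow (Or.inl hr),
    Real.zero_rpow (by linarith : r + 1 ≠ 0), sub_zero]

open MeasureTheory in
lemma layer_intg {r : ℝ} (hr : (-1:ℝ) < r) (c : ℝ) {T : ℝ} (hT : 0 ≤ T) :
    MeasureTheory.IntegrableOn (fun t => (Set.Iio c).indicator (fun t => t ^ r) t)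
      (Set.Ioc (0:ℝ) T) := by
  apply MeasureTheory.Integrable.indicator ?_ measurableSet_Iio
  have := intervalIntegral.intervalIntegrable_rpow' (a := 0) (b := T) hr
  rwa [intervalIntegrable_iff_integrableOn_Ioc_of_le hT] at this

open MeasureTheory in
lemma doob (hm : 0 < m) {p : ℝ} (hp : 1 < p) (u : ℕ → (Fin N → Fin m) → ℝ)
    (loc : ∀ n ≤ N, ∀ w w', (∀ i : Fin N, (i : ℕ) < n → w i = w' i) → u n w = u n w')
    (avg : ∀ n, ∀ h : n < N, ∀ w, (m : ℝ) * u n w =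
      ∑ j : Fin m, u (n + 1) (Function.update w ⟨n, h⟩ j)) :
    ∑ w, (mx u w) ^ p ≤ (p/(p-1)) ^ p * ∑ w, |u N w| ^ p := by
  have hp0 : (0:ℝ) < p := by linarith
  have hp1 : (0:ℝ) < p - 1 := by linarith
  set g := mx u with hgdef
  have hgnn : ∀ w, 0 ≤ g w := mx_nonneg u
  set T : ℝ := 1 + ∑ w, g w with hTdef
  have hsum_nn : (0:ℝ) ≤ ∑ w, g w := Finset.sum_nonneg fun w _ => hgnn w
  have hgT : ∀ w : Fin N → Fin m, g w ≤ T := by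
    intro w
    have h1 : g w ≤ ∑ w', g w' := Finset.single_le_sum (fun w' _ => hgnn w') (Finset.mem_univ w)
    rw [hTdef]; linarith
  have hT0 : (0:ℝ) ≤ T := by rw [hTdef]; linarith
  set X := ∑ w, g w ^ p with hXdef
  set Y := ∑ w, |u N w| ^ p with hYdef
  set Z := ∑ w, |u N w| * g w ^ (p-1) with hZdef
  have hX0 : 0 ≤ X := Finset.sum_nonneg fun w _ => Real.rpow_nonneg (hgnn w) _
  have hY0 : 0 ≤ Y := Finset.sum_nonneg fun w _ => by positivity
  -- Step 1: X ≤ (p/(p-1)) * Z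
  have step1 : X ≤ (p/(p-1)) * Z := by
    have hint1 : ∀ w : Fin N → Fin m, MeasureTheory.IntegrableOn
        (fun t => (Set.Iio (g w)).indicator (fun t => t ^ (p-1)) t) (Set.Ioc (0:ℝ) T) :=
      fun w => layer_intg (by linarith) _ hT0
    have hint2 : ∀ w : Fin N → Fin m, MeasureTheory.IntegrableOn
        (fun t => (Set.Iio (g w)).indicator (fun t => t ^ (p-2)) t * |u N w|) (Set.Ioc (0:ℝ) T) :=
      fun w => (layer_intg (by linarith) _ hT0).mul_const _
    have hXeq : X = p * ∫ t in Set.Ioc (0:ℝ) T,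
        ∑ w, (Set.Iio (g w)).indicator (fun t => t ^ (p-1)) t := by
      rw [MeasureTheory.integral_finset_sum _ (fun w _ => hint1 w), Finset.mul_sum, hXdef]
      refine Finset.sum_congr rfl fun w _ => ?_
      rw [layer_int (by linarith) (hgnn w) (hgT w)]
      rw [show p - 1 + 1 = p by ring]
      field_simp
    have hZeq : (∫ t in Set.Ioc (0:ℝ) T,
        ∑ w, (Set.Iio (g w)).indicator (fun t => t ^ (p-2)) t * |u N w|)
        = ∑ w, g w ^ (p-1) / (p-1) * |u N w| := by
      rw [MeasureTheory.integral_finset_sum _ (fun w _ => hint2 w)]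
      refine Finset.sum_congr rfl fun w _ => ?_
      rw [MeasureTheory.integral_mul_const, layer_int (by linarith) (hgnn w) (hgT w),
        show p - 2 + 1 = p - 1 by ring]
    have hmono : (∫ t in Set.Ioc (0:ℝ) T,
        ∑ w, (Set.Iio (g w)).indicator (fun t => t ^ (p-1)) t)
        ≤ ∫ t in Set.Ioc (0:ℝ) T,
        ∑ w, (Set.Iio (g w)).indicator (fun t => t ^ (p-2)) t * |u N w| := by
      refine MeasureTheory.setIntegral_mono_on
        (MeasureTheory.integrable_finset_sum _ (fun w _ => hint1 w))
        (MeasureTheory.integrable_finset_sum _ (fun w _ => hint2 w))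
        measurableSet_Ioc ?_
      intro t ht
      obtain ⟨ht0, htT⟩ := ht
      have e1 : ∑ w, (Set.Iio (g w)).indicator (fun t => t ^ (p-1)) t
          = ((Finset.univ.filter (fun w : Fin N → Fin m => t < g w)).card : ℝ) * t ^ (p-1) := by
        simp only [Set.indicator_apply, Set.mem_Iio]
        rw [← Finset.sum_filter, Finset.sum_const, nsmul_eq_mul]
      have e2 : ∑ w, (Set.Iio (g w)).indicator (fun t => t ^ (p-2)) t * |u N w|
          = t ^ (p-2) * ∑ w ∈ Finset.univ.filter (fun w : Fin N → Fin m => t < g w), |u N w| := by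
        simp only [Set.indicator_apply, Set.mem_Iio, ite_mul, zero_mul]
        rw [← Finset.sum_filter, Finset.mul_sum]
      rw [e1, e2]
      have hweak := weak_ineq hm u loc avg t ht0
      have htp2 : (0:ℝ) ≤ t ^ (p-2) := Real.rpow_nonneg (le_of_lt ht0) _
      have e3 : t ^ (p-1) = t ^ (p-2) * t := by
        rw [show p - 1 = (p-2) + 1 by ring, Real.rpow_add ht0, Real.rpow_one]
      rw [e3]
      calc ((Finset.univ.filter (fun w : Fin N → Fin m => t < g w)).card : ℝ) * (t ^ (p-2) * t)
          = t ^ (p-2) * (t * ((Finset.univ.filter (fun w : Fin N → Fin m => t < g w)).card : ℝ)) := by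
            ring
        _ ≤ t ^ (p-2) * ∑ w ∈ Finset.univ.filter (fun w : Fin N → Fin m => t < g w), |u N w| :=
            mul_le_mul_of_nonneg_left hweak htp2
    calc X = p * ∫ t in Set.Ioc (0:ℝ) T,
          ∑ w, (Set.Iio (g w)).indicator (fun t => t ^ (p-1)) t := hXeq
      _ ≤ p * ∫ t in Set.Ioc (0:ℝ) T,
          ∑ w, (Set.Iio (g w)).indicator (fun t => t ^ (p-2)) t * |u N w| :=
          mul_le_mul_of_nonneg_left hmono (le_of_lt hp0)
      _ = p * ∑ w, g w ^ (p-1) / (p-1) * |u N w| := by rw [hZeq]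
      _ = (p/(p-1)) * Z := by
          rw [hZdef, Finset.mul_sum, Finset.mul_sum]
          refine Finset.sum_congr rfl fun w _ => ?_
          ring
  -- Step 2: Hölder
  have step2 : Z ≤ Y ^ (1/p) * X ^ ((p-1)/p) := by
    have hconj : Real.HolderConjugate p (p/(p-1)) := Real.HolderConjugate.conjExponent hp
    have := Real.inner_le_Lp_mul_Lq Finset.univ (fun w => |u N w|) (fun w => g w ^ (p-1)) hconj
    have e1 : ∀ w : Fin N → Fin m, |(|u N w|)| ^ p = |u N w| ^ p := fun w => by rw [abs_abs]
    have e2 : ∀ w : Fin N → Fin m, |g w ^ (p-1)| ^ (p/(p-1)) = g w ^ p := fun w => by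
      rw [abs_of_nonneg (Real.rpow_nonneg (hgnn w) _), ← Real.rpow_mul (hgnn w)]
      congr 1
      field_simp
    simp only [e1, e2] at this
    rw [hZdef, hYdef, hXdef]
    refine le_trans this (le_of_eq ?_)
    congr 1
    rw [one_div_div]
  -- Step 3: absorb
  rcases eq_or_lt_of_le hX0 with hX0' | hX0'
  · rw [← hX0']
    positivity
  · have hsplit : X = X ^ (1/p) * X ^ ((p-1)/p) := by
      rw [← Real.rpow_add hX0', show 1/p + (p-1)/p = 1 by field_simp; ring, Real.rpow_one]
    have hXp1 : 0 < X ^ ((p-1)/p) := Real.rpow_pos_of_pos hX0' _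
    have hstep : X ^ (1/p) * X ^ ((p-1)/p) ≤ ((p/(p-1)) * Y ^ (1/p)) * X ^ ((p-1)/p) := by
      rw [← hsplit, mul_assoc]
      calc X ≤ (p/(p-1)) * Z := step1
        _ ≤ (p/(p-1)) * (Y ^ (1/p) * X ^ ((p-1)/p)) :=
          mul_le_mul_of_nonneg_left step2 (by positivity)
    have hcancel : X ^ (1/p) ≤ (p/(p-1)) * Y ^ (1/p) :=
      le_of_mul_le_mul_right hstep hXp1
    have hfinal := Real.rpow_le_rpow (Real.rpow_nonneg hX0 _) hcancel (le_of_lt hp0)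
    rw [← Real.rpow_mul hX0, one_div_mul_cancel (ne_of_gt hp0), Real.rpow_one,
      Real.mul_rpow (by positivity) (Real.rpow_nonneg hY0 _), ← Real.rpow_mul hY0,
      one_div_mul_cancel (ne_of_gt hp0), Real.rpow_one] at hfinal
    exact hfinal

theorem finite_main (hm : 2 ≤ m) {p q : ℝ} (hp : 1 < p) (hpq : p < q) (hq : 1 < q)
    (u : ℕ → (Fin N → Fin m) → ℝ)
    (loc : ∀ n ≤ N, ∀ w w', (∀ i : Fin N, (i : ℕ) < n → w i = w' i) → u n w = u n w')
    (avg : ∀ n, ∀ h : n < N, ∀ w, (m : ℝ) * u n w =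
      ∑ j : Fin m, u (n + 1) (Function.update w ⟨n, h⟩ j))
    {a : ℝ} (ha : 0 ≤ a)
    (hA : ∀ n ≤ N, ∑ w, |u n w| ^ p ≤ (m:ℝ)^N * a ^ p) :
    ∑ w, |∑ n ∈ Finset.Icc 1 N, (m:ℝ) ^ (-((1/p - 1/q) * (n:ℝ))) * (u n w - u (n-1) w)| ^ q ≤
      (2 * ((m:ℝ) ^ (1/q:ℝ) / ((m:ℝ) ^ (1/q:ℝ) - 1)
          + (m:ℝ) ^ (1/p - 1/q) / ((m:ℝ) ^ (1/p - 1/q) - 1))) ^ q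
        * (p/(p-1)) ^ p * ((m:ℝ)^N * a ^ q) := by
  have hm0 : 0 < m := by omega
  have hm1 : (1:ℝ) < (m:ℝ) := by exact_mod_cast (by omega : 1 < m)
  have hq0 : (0:ℝ) < q := by linarith
  have hp0 : (0:ℝ) < p := by linarith
  have hα : (0:ℝ) < 1/p - 1/q := by
    have := one_div_lt_one_div_of_lt hp0 hpq
    linarith
  have hr : (1:ℝ) < (m:ℝ) ^ (1/q:ℝ) :=
    Real.one_lt_rpow_iff_of_pos (by linarith) |>.2 (Or.inl ⟨hm1, by positivity⟩)
  have hs : (1:ℝ) < (m:ℝ) ^ (1/p - 1/q) :=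
    Real.one_lt_rpow_iff_of_pos (by linarith) |>.2 (Or.inl ⟨hm1, hα⟩)
  set K1 : ℝ := 2 * ((m:ℝ) ^ (1/q:ℝ) / ((m:ℝ) ^ (1/q:ℝ) - 1)
      + (m:ℝ) ^ (1/p - 1/q) / ((m:ℝ) ^ (1/p - 1/q) - 1)) with hK1
  have hK1nn : 0 ≤ K1 := by
    rw [hK1]
    have h1 : (0:ℝ) < (m:ℝ) ^ (1/q:ℝ) - 1 := by linarith
    have h2 : (0:ℝ) < (m:ℝ) ^ (1/p - 1/q) - 1 := by linarith
    positivity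
  have hHed : ∀ w, |∑ n ∈ Finset.Icc 1 N,
      (m:ℝ) ^ (-((1/p - 1/q) * (n:ℝ))) * (u n w - u (n-1) w)| ≤
      K1 * (a ^ (1 - p/q) * mx u w ^ (p/q)) := by
    intro w
    rw [hK1, mul_assoc]
    exact hedberg hm1 hp hpq hq ha (mx_nonneg u w) N (fun n => u n w)
      (fun n hn => ptwise hm0 hp u loc ha hn (hA n hn) w)
      (fun n hn => le_mx u hn w)
  have hterm : ∀ w, |∑ n ∈ Finset.Icc 1 N,
      (m:ℝ) ^ (-((1/p - 1/q) * (n:ℝ))) * (u n w - u (n-1) w)| ^ q ≤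
      K1 ^ q * (a ^ (q - p) * mx u w ^ p) := by
    intro w
    have h1 := Real.rpow_le_rpow (abs_nonneg _) (hHed w) (le_of_lt hq0)
    refine le_trans h1 (le_of_eq ?_)
    rw [Real.mul_rpow hK1nn
        (mul_nonneg (Real.rpow_nonneg ha _) (Real.rpow_nonneg (mx_nonneg u w) _)),
      Real.mul_rpow (Real.rpow_nonneg ha _) (Real.rpow_nonneg (mx_nonneg u w) _),
      ← Real.rpow_mul ha, ← Real.rpow_mul (mx_nonneg u w),
      show (1 - p/q) * q = q - p by rw [sub_mul, one_mul, div_mul_cancel₀ _ (ne_of_gt hq0)],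
      show (p/q) * q = p from div_mul_cancel₀ _ (ne_of_gt hq0)]
  have hK1q : 0 ≤ K1 ^ q := Real.rpow_nonneg hK1nn _
  have haqp : 0 ≤ a ^ (q - p) := Real.rpow_nonneg ha _
  have hppp : 0 ≤ (p/(p-1)) ^ p := Real.rpow_nonneg (div_nonneg (by linarith) (by linarith)) _
  have hdoob := doob hm0 hp u loc avg
  have haq : a ^ (q - p) * a ^ p = a ^ q := by
    rw [← Real.rpow_add' ha (by rw [sub_add_cancel]; exact ne_of_gt hq0), sub_add_cancel]
  calc ∑ w, |∑ n ∈ Finset.Icc 1 N,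
        (m:ℝ) ^ (-((1/p - 1/q) * (n:ℝ))) * (u n w - u (n-1) w)| ^ q
      ≤ ∑ w, K1 ^ q * (a ^ (q - p) * mx u w ^ p) := Finset.sum_le_sum fun w _ => hterm w
    _ = K1 ^ q * (a ^ (q - p) * ∑ w, mx u w ^ p) := by
        simp only [← Finset.mul_sum]
    _ ≤ K1 ^ q * (a ^ (q - p) * ((p/(p-1)) ^ p * ∑ w, |u N w| ^ p)) := by
        exact mul_le_mul_of_nonneg_left (mul_le_mul_of_nonneg_left hdoob haqp) hK1q
    _ ≤ K1 ^ q * (a ^ (q - p) * ((p/(p-1)) ^ p * ((m:ℝ)^N * a ^ p))) := by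
        exact mul_le_mul_of_nonneg_left (mul_le_mul_of_nonneg_left
          (mul_le_mul_of_nonneg_left (hA N le_rfl) hppp) haqp) hK1q
    _ = K1 ^ q * (p/(p-1)) ^ p * ((m:ℝ)^N * a ^ q) := by
        rw [← haq]; ring


section Reduction
open MeasureTheory

variable {m : ℕ}

lemma measurableSet_cyl {n : ℕ} (w : Fin n → Fin m) :
    MeasurableSet (MartingaleModel.cyl m n w) := by
  have : MartingaleModel.cyl m n w
      = ⋂ i : Fin n, (fun x : ℕ → Fin m => x (i : ℕ)) ⁻¹' {w i} := by
    ext x; simp [MartingaleModel.cyl, Set.mem_iInter]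
  rw [this]
  exact MeasurableSet.iInter fun i => (measurable_pi_apply _) (measurableSet_singleton _)

/-- Extension of a finite word by zeros. -/
def ext0 (m N : ℕ) (hm : 0 < m) (w : Fin N → Fin m) : ℕ → Fin m :=
  fun i => if h : i < N then w ⟨i, h⟩ else ⟨0, hm⟩

lemma ext0_lt {N i : ℕ} (hm : 0 < m) (h : i < N) (w : Fin N → Fin m) :
    ext0 m N hm w i = w ⟨i, h⟩ := dif_pos h

lemma lintegral_dep (hm : 0 < m) (P : Measure (ℕ → Fin m))
    (hPcyl : ∀ (n : ℕ) (w : Fin n → Fin m),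
      P (MartingaleModel.cyl m n w) = ((m : ℝ≥0∞))⁻¹ ^ n)
    (N : ℕ) (h : (ℕ → Fin m) → ℝ≥0∞)
    (hdep : ∀ x y, (∀ i < N, x i = y i) → h x = h y) :
    ∫⁻ x, h x ∂P = ∑ w : Fin N → Fin m, h (ext0 m N hm w) * ((m : ℝ≥0∞))⁻¹ ^ N := by
  have key : ∀ x, h x = ∑ w : Fin N → Fin m,
      (MartingaleModel.cyl m N w).indicator (fun _ => h (ext0 m N hm w)) x := by
    intro x
    rw [Finset.sum_eq_single (fun i : Fin N => x (i : ℕ))]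
    · rw [Set.indicator_of_mem]
      · exact hdep x (ext0 m N hm _)
          (fun i hi => (ext0_lt hm hi (fun j : Fin N => x (j : ℕ))).symm)
      · intro i; rfl
    · intro w _ hw
      apply Set.indicator_of_notMem
      intro hx
      exact hw (funext fun i => (hx i).symm)
    · intro hmem
      exact absurd (Finset.mem_univ _) hmem
  calc ∫⁻ x, h x ∂P
      = ∫⁻ x, ∑ w : Fin N → Fin m,
          (MartingaleModel.cyl m N w).indicator (fun _ => h (ext0 m N hm w)) x ∂P :=
        lintegral_congr key
    _ = ∑ w : Fin N → Fin m, ∫⁻ x,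
          (MartingaleModel.cyl m N w).indicator (fun _ => h (ext0 m N hm w)) x ∂P :=
        lintegral_finset_sum _ (fun w _ => (measurable_const.indicator (measurableSet_cyl w)))
    _ = ∑ w : Fin N → Fin m, h (ext0 m N hm w) * ((m : ℝ≥0∞))⁻¹ ^ N := by
        refine Finset.sum_congr rfl fun w _ => ?_
        rw [lintegral_indicator_const (measurableSet_cyl w), hPcyl]

end Reduction
end MHLSAux

open MHLSAux MeasureTheory in
/-- **Martingale Hardy–Littlewood–Sobolev inequality.** For `1 < p < q < ∞` and
`α = 1/p - 1/q`, the Riesz potential `I_α` maps `L_p` to `L_q`: there is a constant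
`C = C(m,p,q)` such that every real-valued martingale `F` adapted to the `m`-adic
filtration with `sup_n ‖F_n‖_{L_p(P)} < ∞` satisfies, for every `N ≥ 1`,
`‖∑_{n=1}^N m^{-αn} f_n‖_{L_q(P)} ≤ C · sup_n ‖F_n‖_{L_p(P)}`. Here `P` is the uniform
product probability measure on `ℕ → Fin m`, characterized by its values on cylinders. -/
theorem martingale_hardy_littlewood_sobolev (m : ℕ) (hm : 3 ≤ m)
    (P : Measure (ℕ → Fin m)) (hP : IsProbabilityMeasure P)
    (hPcyl : ∀ (n : ℕ) (w : Fin n → Fin m), P (cyl m n w) = ((m : ℝ≥0∞))⁻¹ ^ n)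
    (p q : ℝ) (hp : 1 < p) (hpq : p < q) :
    ∃ C : ℝ≥0, ∀ F : ℕ → (ℕ → Fin m) → ℝ, IsMartingaleFun m F →
      (⨆ n, eLpNorm (F n) (ENNReal.ofReal p) P) < ⊤ →
      ∀ N, 1 ≤ N →
        eLpNorm (rieszSum m (1 / p - 1 / q) F N) (ENNReal.ofReal q) P ≤
          C * ⨆ n, eLpNorm (F n) (ENNReal.ofReal p) P := by
  have hm0 : 0 < m := by omega
  have hm1 : (1:ℝ) < (m:ℝ) := by exact_mod_cast (by omega : 1 < m)
  have hq : 1 < q := lt_trans hp hpq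
  have hp0 : (0:ℝ) < p := by linarith
  have hq0 : (0:ℝ) < q := by linarith
  have hα : (0:ℝ) < 1/p - 1/q := by
    have := one_div_lt_one_div_of_lt hp0 hpq
    linarith
  have hr : (1:ℝ) < (m:ℝ) ^ (1/q:ℝ) :=
    Real.one_lt_rpow_iff_of_pos (by linarith) |>.2 (Or.inl ⟨hm1, by positivity⟩)
  have hs : (1:ℝ) < (m:ℝ) ^ (1/p - 1/q) :=
    Real.one_lt_rpow_iff_of_pos (by linarith) |>.2 (Or.inl ⟨hm1, hα⟩)
  set K1 : ℝ := 2 * ((m:ℝ) ^ (1/q:ℝ) / ((m:ℝ) ^ (1/q:ℝ) - 1)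
      + (m:ℝ) ^ (1/p - 1/q) / ((m:ℝ) ^ (1/p - 1/q) - 1)) with hK1def
  have hK1nn : 0 ≤ K1 := by
    rw [hK1def]
    have h1 : (0:ℝ) < (m:ℝ) ^ (1/q:ℝ) - 1 := by linarith
    have h2 : (0:ℝ) < (m:ℝ) ^ (1/p - 1/q) - 1 := by linarith
    positivity
  have hppp : 0 ≤ (p/(p-1)) ^ p :=
    Real.rpow_nonneg (div_nonneg (by linarith) (by linarith)) _
  set Creal : ℝ := (K1 ^ q * (p/(p-1)) ^ p) ^ (1/q:ℝ) with hCdef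
  have hCnn : 0 ≤ Creal :=
    Real.rpow_nonneg (mul_nonneg (Real.rpow_nonneg hK1nn _) hppp) _
  refine ⟨Creal.toNNReal, ?_⟩
  intro F hF hsup N hN
  set A := ⨆ n, eLpNorm (F n) (ENNReal.ofReal p) P with hAdef
  have hAne : A ≠ ⊤ := ne_of_lt hsup
  set a := A.toReal with hadef
  have ha : 0 ≤ a := ENNReal.toReal_nonneg
  have hofa : ENNReal.ofReal a = A := ENNReal.ofReal_toReal hAne
  -- the finite model
  set u : ℕ → (Fin N → Fin m) → ℝ := fun n w => F n (ext0 m N hm0 w) with hu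
  have loc : ∀ n ≤ N, ∀ w w' : Fin N → Fin m,
      (∀ i : Fin N, (i : ℕ) < n → w i = w' i) → u n w = u n w' := by
    intro n hn w w' hww'
    refine hF.1 n _ _ (fun i hi => ?_)
    have hiN : i < N := by omega
    rw [ext0_lt hm0 hiN, ext0_lt hm0 hiN]
    exact hww' ⟨i, hiN⟩ hi
  have avg : ∀ n, ∀ h : n < N, ∀ w : Fin N → Fin m, (m : ℝ) * u n w =
      ∑ j : Fin m, u (n + 1) (Function.update w ⟨n, h⟩ j) := by
    intro n hnN w
    have h2 := hF.2 n (ext0 m N hm0 w)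
    rw [smul_eq_mul] at h2
    rw [hu]
    rw [h2]
    refine Finset.sum_congr rfl fun j _ => ?_
    refine hF.1 (n+1) _ _ (fun i hi => ?_)
    have hiN : i < N := by omega
    by_cases hin : i = n
    · subst hin
      rw [Function.update_self, ext0_lt hm0 hiN,
        show (⟨i, hiN⟩ : Fin N) = ⟨i, hnN⟩ from rfl, Function.update_self]
    · rw [Function.update_of_ne hin, ext0_lt hm0 hiN, ext0_lt hm0 hiN,
        Function.update_of_ne (by simp only [ne_eq, Fin.mk.injEq]; exact hin)]
  -- L^p bounds
  have hAn : ∀ n ≤ N, ∑ w : Fin N → Fin m, |u n w| ^ p ≤ (m:ℝ)^N * a ^ p := by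
    intro n hn
    have hdep : ∀ x y, (∀ i < N, x i = y i) →
        (‖F n x‖₊ : ℝ≥0∞) ^ p = (‖F n y‖₊ : ℝ≥0∞) ^ p := by
      intro x y hxy
      rw [hF.1 n x y (fun i hi => hxy i (by omega))]
    have hint := lintegral_dep hm0 P hPcyl N (fun x => (‖F n x‖₊ : ℝ≥0∞) ^ p) hdep
    have hle : eLpNorm (F n) (ENNReal.ofReal p) P ≤ A := by
      rw [hAdef]; exact le_iSup (fun k => eLpNorm (F k) (ENNReal.ofReal p) P) n
    rw [eLpNorm_eq_lintegral_rpow_enorm_toReal (by simp [hp0] : ENNReal.ofReal p ≠ 0)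
      ENNReal.ofReal_ne_top, ENNReal.toReal_ofReal (le_of_lt hp0)] at hle
    have hlint : ∫⁻ x, (‖F n x‖₊ : ℝ≥0∞) ^ p ∂P ≤ A ^ p := by
      have h1 := ENNReal.rpow_le_rpow hle (le_of_lt hp0)
      rwa [← ENNReal.rpow_mul, one_div_mul_cancel (ne_of_gt hp0), ENNReal.rpow_one] at h1
    rw [hint, ← Finset.sum_mul] at hlint
    have hmul : (∑ w : Fin N → Fin m, (‖F n (ext0 m N hm0 w)‖₊ : ℝ≥0∞) ^ p)
        ≤ A ^ p * (m : ℝ≥0∞) ^ N := by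
      have hc : ((m : ℝ≥0∞))⁻¹ ^ N * (m : ℝ≥0∞) ^ N = 1 := by
        rw [← mul_pow, ENNReal.inv_mul_cancel
          (Nat.cast_ne_zero.2 (by omega)) (by simp), one_pow]
      calc (∑ w : Fin N → Fin m, (‖F n (ext0 m N hm0 w)‖₊ : ℝ≥0∞) ^ p)
          = (∑ w : Fin N → Fin m, (‖F n (ext0 m N hm0 w)‖₊ : ℝ≥0∞) ^ p)
            * (((m : ℝ≥0∞))⁻¹ ^ N * (m : ℝ≥0∞) ^ N) := by rw [hc, mul_one]
        _ = ((∑ w : Fin N → Fin m, (‖F n (ext0 m N hm0 w)‖₊ : ℝ≥0∞) ^ p)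
            * ((m : ℝ≥0∞))⁻¹ ^ N) * (m : ℝ≥0∞) ^ N := by rw [mul_assoc]
        _ ≤ A ^ p * (m : ℝ≥0∞) ^ N := mul_le_mul_left hlint _
    have heq : ∀ w : Fin N → Fin m, (‖F n (ext0 m N hm0 w)‖₊ : ℝ≥0∞) ^ p
        = ENNReal.ofReal (|u n w| ^ p) := by
      intro w
      rw [← enorm_eq_nnnorm, ← ofReal_norm, Real.norm_eq_abs,
        ENNReal.ofReal_rpow_of_nonneg (abs_nonneg _) (le_of_lt hp0)]
    rw [Finset.sum_congr rfl (fun w _ => heq w), ← ENNReal.ofReal_sum_of_nonneg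
      (fun w _ => by positivity)] at hmul
    have htop : A ^ p * (m : ℝ≥0∞) ^ N ≠ ⊤ := by
      apply ENNReal.mul_ne_top (ENNReal.rpow_ne_top_of_nonneg (le_of_lt hp0) hAne)
      exact ENNReal.pow_ne_top (ENNReal.natCast_ne_top m)
    have := (ENNReal.ofReal_le_iff_le_toReal htop).1 hmul
    rw [ENNReal.toReal_mul, ← ENNReal.toReal_rpow, ENNReal.toReal_pow,
      ENNReal.toReal_natCast, ← hadef, mul_comm] at this
    exact this
  have hfin := finite_main (m := m) (N := N) (by omega) hp hpq hq u loc avg ha hAn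
  -- convert eLpNorm of rieszSum
  have hSdep : ∀ x y, (∀ i < N, x i = y i) →
      (‖rieszSum m (1/p - 1/q) F N x‖₊ : ℝ≥0∞) ^ q
        = (‖rieszSum m (1/p - 1/q) F N y‖₊ : ℝ≥0∞) ^ q := by
    intro x y hxy
    have : rieszSum m (1/p - 1/q) F N x = rieszSum m (1/p - 1/q) F N y := by
      unfold MartingaleModel.rieszSum
      refine Finset.sum_congr rfl fun n hn => ?_
      obtain ⟨hn1, hn2⟩ := Finset.mem_Icc.1 hn
      rw [hF.1 n x y (fun i hi => hxy i (by omega)),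
        hF.1 (n-1) x y (fun i hi => hxy i (by omega))]
    rw [this]
  have hSint := lintegral_dep hm0 P hPcyl N
    (fun x => (‖rieszSum m (1/p - 1/q) F N x‖₊ : ℝ≥0∞) ^ q) hSdep
  have hSw : ∀ w : Fin N → Fin m, rieszSum m (1/p - 1/q) F N (ext0 m N hm0 w)
      = ∑ n ∈ Finset.Icc 1 N, (m:ℝ) ^ (-((1/p - 1/q) * (n:ℝ))) * (u n w - u (n-1) w) := by
    intro w
    unfold MartingaleModel.rieszSum
    refine Finset.sum_congr rfl fun n hn => ?_
    rw [smul_eq_mul]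
  -- final computation
  rw [eLpNorm_eq_lintegral_rpow_enorm_toReal (by simp [hq0] : ENNReal.ofReal q ≠ 0)
    ENNReal.ofReal_ne_top, ENNReal.toReal_ofReal (le_of_lt hq0)]
  simp only [enorm_eq_nnnorm]
  rw [hSint]
  have heqS : ∀ w : Fin N → Fin m,
      (‖rieszSum m (1/p - 1/q) F N (ext0 m N hm0 w)‖₊ : ℝ≥0∞) ^ q
      = ENNReal.ofReal (|∑ n ∈ Finset.Icc 1 N,
          (m:ℝ) ^ (-((1/p - 1/q) * (n:ℝ))) * (u n w - u (n-1) w)| ^ q) := by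
    intro w
    rw [← enorm_eq_nnnorm, ← ofReal_norm, Real.norm_eq_abs,
      ENNReal.ofReal_rpow_of_nonneg (abs_nonneg _) (le_of_lt hq0), hSw w]
  simp only [heqS]
  rw [← Finset.sum_mul, ← ENNReal.ofReal_sum_of_nonneg (fun w _ => by positivity)]
  have hbound : ENNReal.ofReal (∑ w : Fin N → Fin m, |∑ n ∈ Finset.Icc 1 N,
      (m:ℝ) ^ (-((1/p - 1/q) * (n:ℝ))) * (u n w - u (n-1) w)| ^ q) * ((m:ℝ≥0∞))⁻¹ ^ N
      ≤ ENNReal.ofReal (K1 ^ q * (p/(p-1)) ^ p * a ^ q) := by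
    calc ENNReal.ofReal (∑ w : Fin N → Fin m, |∑ n ∈ Finset.Icc 1 N,
        (m:ℝ) ^ (-((1/p - 1/q) * (n:ℝ))) * (u n w - u (n-1) w)| ^ q) * ((m:ℝ≥0∞))⁻¹ ^ N
        ≤ ENNReal.ofReal (K1 ^ q * (p/(p-1)) ^ p * ((m:ℝ)^N * a ^ q)) * ((m:ℝ≥0∞))⁻¹ ^ N :=
          mul_le_mul_left (ENNReal.ofReal_le_ofReal hfin) _
      _ = ENNReal.ofReal (K1 ^ q * (p/(p-1)) ^ p * a ^ q)
          * (ENNReal.ofReal ((m:ℝ)^N) * ((m:ℝ≥0∞))⁻¹ ^ N) := by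
          have e : K1 ^ q * (p/(p-1)) ^ p * ((m:ℝ)^N * a ^ q)
              = (K1 ^ q * (p/(p-1)) ^ p * a ^ q) * (m:ℝ)^N := by ring
          rw [e, ENNReal.ofReal_mul (mul_nonneg (mul_nonneg
            (Real.rpow_nonneg hK1nn _) hppp) (Real.rpow_nonneg ha _)), mul_assoc]
      _ = ENNReal.ofReal (K1 ^ q * (p/(p-1)) ^ p * a ^ q) := by
          rw [show ENNReal.ofReal ((m:ℝ)^N) = ((m:ℝ≥0∞))^N by
            rw [ENNReal.ofReal_pow (by positivity), ENNReal.ofReal_natCast],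
            ← mul_pow, ENNReal.mul_inv_cancel (Nat.cast_ne_zero.2 (by omega)) (by simp),
            one_pow, mul_one]
  calc (ENNReal.ofReal (∑ w : Fin N → Fin m, |∑ n ∈ Finset.Icc 1 N,
      (m:ℝ) ^ (-((1/p - 1/q) * (n:ℝ))) * (u n w - u (n-1) w)| ^ q) * ((m:ℝ≥0∞))⁻¹ ^ N) ^ (1/q:ℝ)
      ≤ (ENNReal.ofReal (K1 ^ q * (p/(p-1)) ^ p * a ^ q)) ^ (1/q:ℝ) :=
        ENNReal.rpow_le_rpow hbound (by positivity)
    _ = ENNReal.ofReal ((K1 ^ q * (p/(p-1)) ^ p * a ^ q) ^ (1/q:ℝ)) :=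
        ENNReal.ofReal_rpow_of_nonneg (by positivity) (by positivity)
    _ = ENNReal.ofReal (Creal * a) := by
        congr 1
        rw [Real.mul_rpow (mul_nonneg (Real.rpow_nonneg hK1nn _) hppp) (Real.rpow_nonneg ha _),
          ← Real.rpow_mul ha, mul_one_div, div_self (ne_of_gt hq0), Real.rpow_one, hCdef]
    _ = ENNReal.ofReal Creal * ENNReal.ofReal a := ENNReal.ofReal_mul hCnn
    _ = ↑Creal.toNNReal * A := by rw [hofa]; rfl
end
end

section
/- For every p ∈ (1,∞) the Riesz potential I_{(p−1)/p} does not map L_1 to L_p: there exists a real-valued martingale F adapted to (ℱ_n) with sup_n E|F_n| ≤ 2 such that sup_{N ≥ 1} ‖Σ_{n=1}^N m^{−((p−1)/p)·n}·f_n‖_{L_p(P)} = +∞. -/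
open MeasureTheory ENNReal NNReal

noncomputable section

open MartingaleModel

namespace HLS

/-- The martingale. -/
def Ff (m : ℕ) : ℕ → (ℕ → Fin m) → ℝ := fun n x =>
  if ∀ i < n, (x i : ℕ) = 0 then (m : ℝ) ^ n else 0

/-- The event: first `j` coordinates vanish, coordinate `j` does not. -/
def B (m j : ℕ) : Set (ℕ → Fin m) :=
  {x | (∀ i < j, (x i : ℕ) = 0) ∧ (x j : ℕ) ≠ 0}

lemma measurableSet_B (m j : ℕ) : MeasurableSet (B m j) := by
  have h1 : MeasurableSet {x : ℕ → Fin m | ∀ i < j, (x i : ℕ) = 0} := by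
    have : {x : ℕ → Fin m | ∀ i < j, (x i : ℕ) = 0}
        = ⋂ i ∈ Finset.range j, (fun x : ℕ → Fin m => x i) ⁻¹' {a : Fin m | (a : ℕ) = 0} := by
      ext x; simp [Set.mem_iInter]
    rw [this]
    exact MeasurableSet.biInter (Finset.range j).countable_toSet
      (fun i _ => (measurable_pi_apply i) (.of_discrete))
  have h2 : MeasurableSet {x : ℕ → Fin m | (x j : ℕ) ≠ 0} := by
    have : {x : ℕ → Fin m | (x j : ℕ) ≠ 0}
        = (fun x : ℕ → Fin m => x j) ⁻¹' {a : Fin m | (a : ℕ) ≠ 0} := rfl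
    rw [this]
    exact (measurable_pi_apply j) (.of_discrete)
  exact h1.inter h2

lemma B_disjoint (m : ℕ) {i j : ℕ} (h : i ≠ j) : Disjoint (B m i) (B m j) := by
  rcases h.lt_or_gt with h' | h' <;>
  · rw [Set.disjoint_left]
    rintro x ⟨hx1, hx2⟩ ⟨hy1, hy2⟩
    first
      | exact hy2 (hx1 _ h')
      | exact hx2 (hy1 _ h')

lemma adapted_Ff (m : ℕ) : AdaptedFun m (Ff m) := by
  intro n x y hxy
  unfold Ff
  have : (∀ i < n, (x i : ℕ) = 0) ↔ (∀ i < n, (y i : ℕ) = 0) := by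
    constructor <;> intro h i hi
    · rw [← hxy i hi]; exact h i hi
    · rw [hxy i hi]; exact h i hi
  simp only [this]

lemma mart_Ff (m : ℕ) (hm : 3 ≤ m) : IsMartingaleFun m (Ff m) := by
  haveI : NeZero m := ⟨by omega⟩
  refine ⟨adapted_Ff m, fun n x => ?_⟩
  have key : ∀ j : Fin m,
      Ff m (n + 1) (Function.update x n j)
        = if (∀ i < n, (x i : ℕ) = 0) ∧ (j : ℕ) = 0 then (m : ℝ) ^ (n + 1) else 0 := by
    intro j
    unfold Ff
    congr 1
    · simp only [eq_iff_iff]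
      constructor
      · intro h
        refine ⟨fun i hi => ?_, ?_⟩
        · have := h i (by omega)
          rwa [Function.update_apply, if_neg (by omega)] at this
        · have := h n (by omega)
          rwa [Function.update_apply, if_pos rfl] at this
      · rintro ⟨h1, h2⟩ i hi
        rw [Function.update_apply]
        by_cases hin : i = n
        · rw [if_pos hin]; exact h2
        · rw [if_neg hin]; exact h1 i (by omega)
  rw [Finset.sum_congr rfl (fun j _ => key j)]
  by_cases h : ∀ i < n, (x i : ℕ) = 0
  · have : ∀ j : Fin m,
        (if (∀ i < n, (x i : ℕ) = 0) ∧ (j : ℕ) = 0 then (m : ℝ) ^ (n + 1) else 0)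
        = (if j = (0 : Fin m) then (m : ℝ) ^ (n + 1) else 0) := by
      intro j
      have hval : ((0 : Fin m) : ℕ) = 0 := Fin.val_zero m
      by_cases hj : (j : ℕ) = 0
      · rw [if_pos ⟨h, hj⟩, if_pos (Fin.ext (by rw [hval, hj]))]
      · rw [if_neg (by tauto), if_neg (fun he => hj (by rw [he, hval]))]
    rw [Finset.sum_congr rfl (fun j _ => this j), Finset.sum_ite_eq' Finset.univ (0 : Fin m)]
    unfold Ff
    rw [if_pos h, if_pos (Finset.mem_univ _), smul_eq_mul]
    ring
  · have : ∀ j : Fin m,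
        (if (∀ i < n, (x i : ℕ) = 0) ∧ (j : ℕ) = 0 then (m : ℝ) ^ (n + 1) else 0) = 0 := by
      intro j; rw [if_neg]; tauto
    rw [Finset.sum_congr rfl (fun j _ => this j), Finset.sum_const_zero]
    unfold Ff
    rw [if_neg h, smul_eq_mul, mul_zero]


lemma measurableSet_zeros (m n : ℕ) :
    MeasurableSet {x : ℕ → Fin m | ∀ i < n, (x i : ℕ) = 0} := by
  have : {x : ℕ → Fin m | ∀ i < n, (x i : ℕ) = 0}
      = ⋂ i ∈ Finset.range n, (fun x : ℕ → Fin m => x i) ⁻¹' {a : Fin m | (a : ℕ) = 0} := by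
    ext x; simp [Set.mem_iInter]
  rw [this]
  exact MeasurableSet.biInter (Finset.range n).countable_toSet
    (fun i _ => (measurable_pi_apply i) .of_discrete)

lemma Ff_on_B (m : ℕ) {j : ℕ} {x : ℕ → Fin m} (hx : x ∈ B m j) (n : ℕ) :
    Ff m n x = if n ≤ j then (m : ℝ) ^ n else 0 := by
  obtain ⟨h1, h2⟩ := hx
  unfold Ff
  by_cases hn : n ≤ j
  · rw [if_pos (fun i hi => h1 i (lt_of_lt_of_le hi hn)), if_pos hn]
  · rw [if_neg, if_neg hn]
    intro h
    exact h2 (h j (by omega))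

lemma zeros_eq_cyl (m n : ℕ) (hm : 3 ≤ m) :
    {x : ℕ → Fin m | ∀ i < n, (x i : ℕ) = 0}
      = cyl m n (fun _ => (⟨0, by omega⟩ : Fin m)) := by
  ext x
  constructor
  · intro h i
    exact Fin.ext (h i i.isLt)
  · intro h i hi
    have := h ⟨i, hi⟩
    rw [this]

lemma eLpNorm_Ff_le (m : ℕ) (hm : 3 ≤ m) (P : Measure (ℕ → Fin m))
    (hPcyl : ∀ (n : ℕ) (w : Fin n → Fin m), P (cyl m n w) = ((m : ℝ≥0∞))⁻¹ ^ n)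
    (n : ℕ) : eLpNorm (Ff m n) 1 P ≤ 2 := by
  have hms : MeasurableSet {x : ℕ → Fin m | ∀ i < n, (x i : ℕ) = 0} :=
    measurableSet_zeros m n
  rw [eLpNorm_one_eq_lintegral_enorm]
  change ∫⁻ x, (‖Ff m n x‖₊ : ℝ≥0∞) ∂P ≤ 2
  have heq : ∀ x : ℕ → Fin m, (‖Ff m n x‖₊ : ℝ≥0∞)
      = {x : ℕ → Fin m | ∀ i < n, (x i : ℕ) = 0}.indicator
          (fun _ => ((‖(m : ℝ) ^ n‖₊ : ℝ≥0∞))) x := by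
    intro x
    unfold Ff
    by_cases h : x ∈ {x : ℕ → Fin m | ∀ i < n, (x i : ℕ) = 0}
    · have h' : ∀ i < n, (x i : ℕ) = 0 := h
      rw [if_pos h', Set.indicator_of_mem h]
    · have h' : ¬ ∀ i < n, (x i : ℕ) = 0 := h
      rw [if_neg h', Set.indicator_of_notMem h]
      simp
  rw [lintegral_congr heq, lintegral_indicator hms, setLIntegral_const,
    zeros_eq_cyl m n hm, hPcyl]
  have h1 : (‖(m : ℝ) ^ n‖₊ : ℝ≥0∞) = (m : ℝ≥0∞) ^ n := by
    rw [nnnorm_pow]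
    norm_cast
  rw [h1, ← mul_pow, ENNReal.mul_inv_cancel (by positivity) (by simp), one_pow]
  exact one_le_two

lemma P_B_ge (m : ℕ) (hm : 3 ≤ m) (P : Measure (ℕ → Fin m))
    (hPcyl : ∀ (n : ℕ) (w : Fin n → Fin m), P (cyl m n w) = ((m : ℝ≥0∞))⁻¹ ^ n)
    (j : ℕ) : ((m : ℝ≥0∞))⁻¹ ^ (j + 1) ≤ P (B m j) := by
  set w : Fin (j + 1) → Fin m := fun i => if (i : ℕ) = j then ⟨1, by omega⟩ else ⟨0, by omega⟩
    with hw
  have hsub : cyl m (j + 1) w ⊆ B m j := by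
    intro x hx
    constructor
    · intro i hi
      have := hx ⟨i, by omega⟩
      rw [this, hw]
      simp only []
      rw [if_neg (by simpa using Nat.ne_of_lt hi)]
    · have := hx ⟨j, by omega⟩
      rw [this, hw]
      simp only []
      rw [if_pos (by simp)]
      simp
  calc ((m : ℝ≥0∞))⁻¹ ^ (j + 1) = P (cyl m (j + 1) w) := (hPcyl (j + 1) w).symm
    _ ≤ P (B m j) := measure_mono hsub

lemma rpow_aux (m : ℕ) (hm : 3 ≤ m) (p : ℝ) (hp : 1 < p) (n : ℕ) :
    (m : ℝ) ^ (-(((p - 1) / p) * (n : ℕ))) * (m : ℝ) ^ (n : ℕ)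
      = ((m : ℝ) ^ (1 / p : ℝ)) ^ n := by
  have hm0 : (0 : ℝ) < m := by positivity
  have hp0 : p ≠ 0 := by positivity
  rw [← Real.rpow_natCast (m : ℝ) n, ← Real.rpow_add hm0]
  have hexp : -(((p - 1) / p) * (n : ℕ)) + (n : ℕ) = (1 / p) * (n : ℕ) := by
    field_simp
    ring
  rw [hexp, Real.rpow_mul hm0.le, Real.rpow_natCast]

lemma rpow_pow (m : ℕ) (hm : 3 ≤ m) (p : ℝ) (hp : 1 < p) (k : ℕ) :
    (((m : ℝ) ^ (1 / p : ℝ)) ^ k) ^ p = (m : ℝ) ^ k := by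
  have hm0 : (0 : ℝ) < m := by positivity
  have hp0 : p ≠ 0 := by positivity
  rw [← Real.rpow_natCast ((m : ℝ) ^ (1 / p : ℝ)) k, ← Real.rpow_mul hm0.le,
    ← Real.rpow_mul hm0.le]
  have : 1 / p * (k : ℕ) * p = (k : ℕ) := by field_simp
  rw [this, Real.rpow_natCast]

/-- Value of the Riesz partial sum on the event `B m j`. -/
lemma rieszSum_on_B (m : ℕ) (hm : 3 ≤ m) (p : ℝ) (hp : 1 < p)
    {j N : ℕ} (hjN : j + 1 ≤ N) {x : ℕ → Fin m} (hx : x ∈ B m j) :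
    rieszSum m ((p - 1) / p) (Ff m) N x
      = (1 - 1 / (m : ℝ)) * ∑ n ∈ Finset.Icc 1 j, ((m : ℝ) ^ (1 / p : ℝ)) ^ n
        - ((m : ℝ) ^ (1 / p : ℝ)) ^ (j + 1) / m := by
  have hm0 : (0 : ℝ) < m := by positivity
  have hmne : (m : ℝ) ≠ 0 := ne_of_gt hm0
  have hF := Ff_on_B m hx
  unfold rieszSum
  rw [show Finset.Icc 1 N = Finset.Ioc 0 N from Finset.Icc_add_one_left_eq_Ioc 0 N]
  rw [← Finset.sum_Ioc_consecutive _ (Nat.zero_le (j + 1)) hjN]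
  have hzero : ∑ n ∈ Finset.Ioc (j + 1) N,
      ((m : ℝ) ^ (-(((p - 1) / p) * (n : ℕ))) : ℝ) • (Ff m n x - Ff m (n - 1) x) = 0 := by
    apply Finset.sum_eq_zero
    intro n hn
    rw [Finset.mem_Ioc] at hn
    rw [hF n, hF (n - 1), if_neg (by omega), if_neg (by omega)]
    simp
  rw [hzero, add_zero, Finset.sum_Ioc_succ_top (Nat.zero_le j)]
  have hlast : ((m : ℝ) ^ (-(((p - 1) / p) * ((j + 1 : ℕ) : ℕ))) : ℝ) •
      (Ff m (j + 1) x - Ff m (j + 1 - 1) x)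
        = -(((m : ℝ) ^ (1 / p : ℝ)) ^ (j + 1) / m) := by
    rw [hF (j + 1), hF (j + 1 - 1), if_neg (by omega), if_pos (by omega)]
    have h1 : (j + 1 - 1 : ℕ) = j := by omega
    rw [h1, smul_eq_mul, zero_sub, mul_neg]
    congr 1
    have h2 : (m : ℝ) ^ (j : ℕ) = (m : ℝ) ^ ((j + 1 : ℕ) : ℕ) / m := by
      rw [pow_succ]
      field_simp
    rw [h2, ← mul_div_assoc, rpow_aux m hm p hp (j + 1)]
  rw [hlast]
  have hmain : ∑ n ∈ Finset.Ioc 0 j,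
      ((m : ℝ) ^ (-(((p - 1) / p) * (n : ℕ))) : ℝ) • (Ff m n x - Ff m (n - 1) x)
        = ∑ n ∈ Finset.Icc 1 j, (1 - 1 / (m : ℝ)) * ((m : ℝ) ^ (1 / p : ℝ)) ^ n := by
    rw [← Finset.Icc_add_one_left_eq_Ioc 0 j]
    apply Finset.sum_congr rfl
    intro n hn
    rw [Finset.mem_Icc] at hn
    rw [hF n, hF (n - 1), if_pos hn.2, if_pos (by omega)]
    have h2 : (m : ℝ) ^ (n - 1 : ℕ) = (m : ℝ) ^ (n : ℕ) / m := by
      have : n - 1 + 1 = n := by omega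
      rw [← this, pow_succ]
      field_simp
      rw [Nat.add_sub_cancel]
    rw [h2, smul_eq_mul]
    have h3 : (m : ℝ) ^ (n : ℕ) - (m : ℝ) ^ (n : ℕ) / m
        = (m : ℝ) ^ (n : ℕ) * (1 - 1 / m) := by ring
    rw [h3, ← mul_assoc, rpow_aux m hm p hp n]
    ring
  rw [hmain, ← Finset.mul_sum]
  ring

lemma exists_lower (m : ℕ) (hm : 3 ≤ m) (p : ℝ) (hp : 1 < p) :
    ∃ c : ℝ, 0 < c ∧ ∃ J : ℕ, ∀ j, J ≤ j →
      c * ((m : ℝ) ^ (1 / p : ℝ)) ^ (j + 1)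
        ≤ (1 - 1 / (m : ℝ)) * ∑ n ∈ Finset.Icc 1 j, ((m : ℝ) ^ (1 / p : ℝ)) ^ n
          - ((m : ℝ) ^ (1 / p : ℝ)) ^ (j + 1) / m := by
  have hm0 : (0 : ℝ) < m := by positivity
  have hm1 : (1 : ℝ) < m := by
    have : (3 : ℝ) ≤ m := by exact_mod_cast hm
    linarith
  set r := (m : ℝ) ^ (1 / p : ℝ) with hrdef
  have hr1 : 1 < r := by
    rw [hrdef]
    exact Real.one_lt_rpow_iff_of_pos hm0 |>.mpr (Or.inl ⟨hm1, by positivity⟩)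
  have hrm : r < m := by
    have h1 : (1 / p : ℝ) < 1 := by rw [div_lt_one (by linarith)]; linarith
    have := Real.rpow_lt_rpow_of_exponent_lt hm1 h1
    rw [Real.rpow_one] at this
    exact this
  have hr0 : (0 : ℝ) < r - 1 := by linarith
  have hq : (0 : ℝ) < 1 - 1 / m := by
    have : (1 : ℝ) / m < 1 := by rw [div_lt_one hm0]; linarith
    linarith
  set q : ℝ := 1 - 1 / m with hqdef
  set c₀ : ℝ := q / (r - 1) - 1 / m with hc₀def
  have hc₀ : 0 < c₀ := by
    rw [hc₀def, sub_pos, div_lt_div_iff₀ hm0 hr0]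
    have hqm : q * m = m - 1 := by rw [hqdef]; field_simp
    rw [hqm]
    linarith
  set D : ℝ := q * r / (r - 1) with hDdef
  have hD : 0 < D := by positivity
  obtain ⟨J, hJ⟩ := pow_unbounded_of_one_lt (D / (c₀ / 2)) hr1
  refine ⟨c₀ / 2, by positivity, J, fun j hj => ?_⟩
  have hsum : ∑ n ∈ Finset.Icc 1 j, r ^ n = (r ^ (j + 1) - r ^ 1) / (r - 1) := by
    rw [← Finset.Ico_add_one_right_eq_Icc, geom_sum_Ico (ne_of_gt hr1) (by omega)]
  have hval : q * ∑ n ∈ Finset.Icc 1 j, r ^ n - r ^ (j + 1) / m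
      = c₀ * r ^ (j + 1) - D := by
    rw [hsum, hc₀def, hDdef]
    field_simp
    ring
  rw [hval]
  have hpowpos : (0 : ℝ) < r ^ (j + 1) := by positivity
  have h2 : r ^ J ≤ r ^ (j + 1) := pow_le_pow_right₀ (le_of_lt hr1) (by omega)
  rw [div_lt_iff₀ (by positivity : (0:ℝ) < c₀ / 2)] at hJ
  nlinarith [mul_le_mul_of_nonneg_right h2 (le_of_lt (half_pos hc₀))]

end HLS

/-- **Failure of the limiting Hardy–Littlewood–Sobolev inequality.** For every
`p ∈ (1,∞)` the Riesz potential `I_{(p-1)/p}` does not map `L_1` to `L_p`: there is a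
real-valued martingale `F` adapted to the `m`-adic filtration with `sup_n E|F_n| ≤ 2`
such that `sup_{N ≥ 1} ‖∑_{n=1}^N m^{-((p-1)/p)n} f_n‖_{L_p(P)} = ∞`. -/
theorem riesz_potential_not_L1_to_Lp (m : ℕ) (hm : 3 ≤ m)
    (P : Measure (ℕ → Fin m)) (hP : IsProbabilityMeasure P)
    (hPcyl : ∀ (n : ℕ) (w : Fin n → Fin m), P (cyl m n w) = ((m : ℝ≥0∞))⁻¹ ^ n)
    (p : ℝ) (hp : 1 < p) :
    ∃ F : ℕ → (ℕ → Fin m) → ℝ, IsMartingaleFun m F ∧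
      (∀ n, eLpNorm (F n) 1 P ≤ 2) ∧
      (⨆ (N : ℕ) (_ : 1 ≤ N),
        eLpNorm (rieszSum m ((p - 1) / p) F N) (ENNReal.ofReal p) P) = ⊤ := by
  classical
  have hp0 : (0 : ℝ) < p := by linarith
  have hppos : (0 : ℝ) < 1 / p := by positivity
  refine ⟨HLS.Ff m, HLS.mart_Ff m hm, HLS.eLpNorm_Ff_le m hm P hPcyl, ?_⟩
  obtain ⟨c, hc, J, hJ⟩ := HLS.exists_lower m hm p hp
  set r : ℝ := (m : ℝ) ^ (1 / p : ℝ) with hrdef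
  have hm0 : (0 : ℝ) < m := by positivity
  have hr0 : (0 : ℝ) < r := Real.rpow_pos_of_pos hm0 _
  set ε : ℝ≥0∞ := ENNReal.ofReal (c ^ p) with hεdef
  have hε : 0 < ε := ENNReal.ofReal_pos.mpr (Real.rpow_pos_of_pos hc _)
  rw [iSup_eq_top]
  intro b hb
  -- choose n₀
  have hbp_ne_top : b ^ p ≠ ⊤ := by
    exact ENNReal.rpow_ne_top_of_nonneg (le_of_lt hp0) hb.ne
  have hdiv_ne_top : b ^ p / ε ≠ ⊤ := by
    exact (ENNReal.div_lt_top hbp_ne_top hε.ne').ne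
  obtain ⟨n₀, hn₀⟩ := ENNReal.exists_nat_gt hdiv_ne_top
  have hbpn : b ^ p < (n₀ : ℝ≥0∞) * ε := by
    rw [ENNReal.div_lt_iff (Or.inl hε.ne') (Or.inr hbp_ne_top)] at hn₀
    exact hn₀
  set N : ℕ := J + n₀ + 1 with hNdef
  refine ⟨N, ?_⟩
  have hN1 : 1 ≤ N := by omega
  rw [iSup_pos hN1]
  set T : Finset ℕ := Finset.Icc J (J + n₀) with hTdef
  -- the integral lower bound
  set f : (ℕ → Fin m) → ℝ := rieszSum m ((p - 1) / p) (HLS.Ff m) N with hfdef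
  have hptoReal : (ENNReal.ofReal p).toReal = p := ENNReal.toReal_ofReal (le_of_lt hp0)
  rw [eLpNorm_eq_lintegral_rpow_enorm_toReal (by simpa using hp0)
    ENNReal.ofReal_ne_top, hptoReal]
  -- pointwise minorant
  have hpt : ∀ x : ℕ → Fin m,
      ∑ j ∈ T, (HLS.B m j).indicator
        (fun _ => ENNReal.ofReal ((c * r ^ (j + 1)) ^ p)) x
      ≤ (‖f x‖₊ : ℝ≥0∞) ^ p := by
    intro x
    by_cases hx : ∃ j ∈ T, x ∈ HLS.B m j
    · obtain ⟨j₀, hj₀T, hj₀⟩ := hx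
      have hsum : ∑ j ∈ T, (HLS.B m j).indicator
          (fun _ => ENNReal.ofReal ((c * r ^ (j + 1)) ^ p)) x
          = ENNReal.ofReal ((c * r ^ (j₀ + 1)) ^ p) := by
        rw [Finset.sum_eq_single_of_mem j₀ hj₀T]
        · rw [Set.indicator_of_mem hj₀]
        · intro j hjT hne
          rw [Set.indicator_of_notMem]
          intro hxj
          exact (HLS.B_disjoint m hne).ne_of_mem hxj hj₀ rfl
      rw [hsum]
      have hj₀J : J ≤ j₀ := (Finset.mem_Icc.mp hj₀T).1
      have hj₀N : j₀ + 1 ≤ N := by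
        have := (Finset.mem_Icc.mp hj₀T).2; omega
      have hv := HLS.rieszSum_on_B m hm p hp hj₀N hj₀
      have hlow := hJ j₀ hj₀J
      have hv0 : 0 ≤ f x := by
        rw [hfdef, hv]
        have : (0:ℝ) < c * r ^ (j₀ + 1) := by positivity
        linarith
      have hnorm : (‖f x‖₊ : ℝ≥0∞) = ENNReal.ofReal (f x) := by
        rw [← Real.enorm_eq_ofReal hv0]; rfl
      rw [hnorm]
      calc ENNReal.ofReal ((c * r ^ (j₀ + 1)) ^ p)
          = ENNReal.ofReal (c * r ^ (j₀ + 1)) ^ p := by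
            rw [ENNReal.ofReal_rpow_of_pos (by positivity)]
        _ ≤ ENNReal.ofReal (f x) ^ p := by
            apply ENNReal.rpow_le_rpow _ (le_of_lt hp0)
            apply ENNReal.ofReal_le_ofReal
            rw [hfdef, hv]
            exact hlow
    · push_neg at hx
      rw [Finset.sum_eq_zero]
      · exact zero_le
      · intro j hjT
        exact Set.indicator_of_notMem (hx j hjT) _
  have hint : ∑ j ∈ T, ENNReal.ofReal ((c * r ^ (j + 1)) ^ p) * P (HLS.B m j)
      ≤ ∫⁻ x, (‖f x‖₊ : ℝ≥0∞) ^ p ∂P := by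
    calc ∑ j ∈ T, ENNReal.ofReal ((c * r ^ (j + 1)) ^ p) * P (HLS.B m j)
        = ∫⁻ x, ∑ j ∈ T, (HLS.B m j).indicator
            (fun _ => ENNReal.ofReal ((c * r ^ (j + 1)) ^ p)) x ∂P := by
          rw [lintegral_finset_sum]
          · apply Finset.sum_congr rfl
            intro j _
            rw [lintegral_indicator (HLS.measurableSet_B m j), setLIntegral_const]
          · intro j _
            exact measurable_const.indicator (HLS.measurableSet_B m j)
      _ ≤ ∫⁻ x, (‖f x‖₊ : ℝ≥0∞) ^ p ∂P := lintegral_mono hpt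
  -- each term is at least ε
  have hterm : ∀ j ∈ T, ε ≤ ENNReal.ofReal ((c * r ^ (j + 1)) ^ p) * P (HLS.B m j) := by
    intro j _
    have hcr : (c * r ^ (j + 1)) ^ p = c ^ p * (m : ℝ) ^ (j + 1) := by
      rw [Real.mul_rpow (le_of_lt hc) (by positivity), HLS.rpow_pow m hm p hp (j + 1)]
    rw [hcr, ENNReal.ofReal_mul (by positivity)]
    have hofm : ENNReal.ofReal ((m : ℝ) ^ (j + 1)) = (m : ℝ≥0∞) ^ (j + 1) := by
      rw [ENNReal.ofReal_pow (by positivity), ENNReal.ofReal_natCast]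
    rw [hofm]
    calc ε = ε * ((m : ℝ≥0∞) ^ (j + 1) * ((m : ℝ≥0∞))⁻¹ ^ (j + 1)) := by
          rw [← mul_pow, ENNReal.mul_inv_cancel (by positivity) (by simp), one_pow, mul_one]
      _ ≤ ε * ((m : ℝ≥0∞) ^ (j + 1) * P (HLS.B m j)) := by
          apply mul_le_mul_right
          exact mul_le_mul_right (HLS.P_B_ge m hm P hPcyl j) _
      _ = ε * (m : ℝ≥0∞) ^ (j + 1) * P (HLS.B m j) := by rw [mul_assoc]
  have hcard : (T.card : ℝ≥0∞) = (n₀ + 1 : ℕ) := by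
    rw [hTdef, Nat.card_Icc]
    congr 1
    omega
  have htotal : (n₀ : ℝ≥0∞) * ε ≤ ∫⁻ x, (‖f x‖₊ : ℝ≥0∞) ^ p ∂P := by
    calc (n₀ : ℝ≥0∞) * ε ≤ (T.card : ℝ≥0∞) * ε := by
          apply mul_le_mul_left
          rw [hcard]
          exact_mod_cast Nat.le_succ n₀
      _ = ∑ _j ∈ T, ε := by rw [Finset.sum_const, nsmul_eq_mul]
      _ ≤ ∑ j ∈ T, ENNReal.ofReal ((c * r ^ (j + 1)) ^ p) * P (HLS.B m j) :=
          Finset.sum_le_sum hterm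
      _ ≤ _ := hint
  -- conclude
  have hfinal : b ^ p < ∫⁻ x, (‖f x‖₊ : ℝ≥0∞) ^ p ∂P := lt_of_lt_of_le hbpn htotal
  have := ENNReal.rpow_lt_rpow hfinal (by positivity : (0:ℝ) < 1 / p)
  rw [← ENNReal.rpow_mul, mul_one_div, div_self (ne_of_gt hp0), ENNReal.rpow_one] at this
  exact this
end
end

section
/- For every p ∈ (1,∞) there is a constant C = C(m,p) such that every real-valued martingale F adapted to (ℱ_n) with E[sup_n |F_n|] < ∞ satisfies, for every N ≥ 1, ‖Σ_{n=1}^N m^{−((p−1)/p)·n}·f_n‖_{L_{p,1}(P)} ≤ C·E[sup_n |F_n|]; that is, the Riesz potential I_{(p−1)/p} maps the martingale Hardy space H_1 into the Lorentz space L_{p,1}. -/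
open MeasureTheory ENNReal NNReal

noncomputable section

open MartingaleModel

namespace MartingaleModel

/-- The Lorentz `L_{p,1}` quasinorm `‖g‖_{L_{p,1}} = ∫₀^∞ μ({x : ‖g(x)‖ > t})^{1/p} dt`. -/
def lorentzNorm {X : Type*} [MeasurableSpace X] (μ : Measure X) (p : ℝ)
    {E : Type*} [NormedAddCommGroup E] (g : X → E) : ℝ≥0∞ :=
  ∫⁻ t in Set.Ioi (0 : ℝ), (μ {x | t < ‖g x‖}) ^ (1 / p)

end MartingaleModel

namespace RPaux

lemma tsum_tail_geom (r : ℝ≥0∞) (K : ℕ) :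
    ∑' k : ℕ, (if K ≤ k then r ^ k else 0) = r ^ K * (1 - r)⁻¹ := by
  have hinj : Function.Injective (fun i : ℕ => K + i) := fun a b h => by
    simpa using h
  have hsupp : Function.support (fun k : ℕ => if K ≤ k then r ^ k else 0) ⊆
      Set.range (fun i : ℕ => K + i) := by
    intro k hk
    by_cases h : K ≤ k
    · exact ⟨k - K, by simp; omega⟩
    · simp [h] at hk
  rw [← Function.Injective.tsum_eq hinj hsupp]
  have : ∀ i : ℕ, (if K ≤ K + i then r ^ (K + i) else 0) = r ^ K * r ^ i := by
    intro i; rw [if_pos (Nat.le_add_right _ _), pow_add]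
  simp_rw [this]
  rw [ENNReal.tsum_mul_left, ENNReal.tsum_geometric]

lemma geo_head (r : ℝ≥0∞) (hr0 : r ≠ 0) (hrt : r ≠ ⊤) (K : ℕ) :
    ∑ k ∈ Finset.range K, r ^ k ≤ r ^ (K - 1) * (1 - r⁻¹)⁻¹ := by
  rw [← Finset.sum_range_reflect]
  have h1 : ∀ k ∈ Finset.range K, r ^ (K - 1 - k) ≤ r ^ (K - 1) * (r⁻¹) ^ k := by
    intro k hk
    rw [Finset.mem_range] at hk
    have h2 : r ^ (K - 1) = r ^ (K - 1 - k) * r ^ k := by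
      rw [← pow_add]; congr 1; omega
    rw [h2, mul_assoc, ← mul_pow, ENNReal.mul_inv_cancel hr0 hrt, one_pow, mul_one]
  refine le_trans (Finset.sum_le_sum h1) ?_
  refine le_trans (Finset.sum_le_sum (g := fun k => r ^ (K-1) * r⁻¹ ^ k)
    (fun k _ => le_rfl)) ?_
  calc ∑ k ∈ Finset.range K, r ^ (K-1) * r⁻¹ ^ k
      ≤ ∑' k : ℕ, r ^ (K-1) * r⁻¹ ^ k := ENNReal.sum_le_tsum _
    _ = r ^ (K-1) * (1 - r⁻¹)⁻¹ := by rw [ENNReal.tsum_mul_left, ENNReal.tsum_geometric]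

/-- `W j = 2^j` as `ℝ≥0∞`, for `j : ℤ`. -/
noncomputable def W (j : ℤ) : ℝ≥0∞ := (2 : ℝ≥0∞) ^ (j : ℝ)

lemma W_eq_ofReal (j : ℤ) : W j = ENNReal.ofReal ((2:ℝ) ^ j) := by
  rw [W, ← Real.rpow_intCast, ← ENNReal.ofReal_rpow_of_pos two_pos]
  norm_num

lemma W_ne_top (j : ℤ) : W j ≠ ⊤ := by rw [W_eq_ofReal]; exact ENNReal.ofReal_ne_top

lemma W_pos (j : ℤ) : 0 < W j := by
  rw [W_eq_ofReal]; exact ENNReal.ofReal_pos.2 (zpow_pos two_pos _)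

lemma W_mono {j j' : ℤ} (h : j ≤ j') : W j ≤ W j' :=
  ENNReal.rpow_le_rpow_of_exponent_le one_le_two (by exact_mod_cast h)

lemma W_lt_W {j j' : ℤ} (h : j < j') : W j < W j' :=
  ENNReal.rpow_lt_rpow_of_exponent_lt one_lt_two ofNat_ne_top (by exact_mod_cast h)

lemma W_lt_W_iff {j j' : ℤ} : W j < W j' ↔ j < j' := by
  constructor
  · intro h
    by_contra hc
    exact absurd (W_mono (not_lt.1 hc)) (not_le.2 h)
  · exact W_lt_W

lemma W_add_one (j : ℤ) : W (j + 1) = 2 * W j := by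
  rw [W, W, Int.cast_add, Int.cast_one, add_comm, ENNReal.rpow_add _ _ two_ne_zero ofNat_ne_top,
    ENNReal.rpow_one]

lemma HZ (J : ℤ) : ∑' j : ℤ, (if j ≤ J then W j else 0) = 2 * W J := by
  have hinj : Function.Injective (fun i : ℕ => J - (i : ℤ)) := fun a b h => by
    have : J - (a:ℤ) = J - (b:ℤ) := h
    omega
  have hsupp : Function.support (fun j : ℤ => if j ≤ J then W j else 0) ⊆
      Set.range (fun i : ℕ => J - (i : ℤ)) := by
    intro j hj
    by_cases h : j ≤ J
    · exact ⟨(J - j).toNat, by simp; omega⟩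
    · simp [h] at hj
  rw [← Function.Injective.tsum_eq hinj hsupp]
  have hterm : ∀ i : ℕ, (if J - (i:ℤ) ≤ J then W (J - i) else 0) = W J * (2⁻¹) ^ i := by
    intro i
    rw [if_pos (by omega)]
    rw [W, W, Int.cast_sub, Int.cast_natCast, sub_eq_add_neg,
      ENNReal.rpow_add _ _ two_ne_zero ofNat_ne_top, ENNReal.rpow_neg,
      ENNReal.rpow_natCast, ENNReal.inv_pow]
  simp_rw [hterm]
  rw [ENNReal.tsum_mul_left, ENNReal.tsum_geometric, ENNReal.one_sub_inv_two, inv_inv, mul_comm]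

lemma layer_low (v : ℝ≥0∞) : v ≤ ∑' j : ℤ, (if W j < v then 2 * W j else 0) := by
  rcases eq_or_ne v 0 with rfl | hv0
  · exact zero_le
  rcases eq_or_ne v ⊤ with rfl | hvt
  · rw [top_le_iff]
    by_contra hne
    obtain ⟨M, hM⟩ := ENNReal.exists_nat_gt hne
    have h1 : ∀ j : ℤ, 2 * W j ≤ ∑' j : ℤ, (if W j < (⊤:ℝ≥0∞) then 2 * W j else 0) := by
      intro j
      have := ENNReal.le_tsum (f := fun j : ℤ => if W j < (⊤:ℝ≥0∞) then 2 * W j else 0) j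
      rwa [if_pos (lt_top_iff_ne_top.2 (W_ne_top j))] at this
    have h2 : ((M:ℝ≥0∞)) ≤ 2 * W M := by
      calc ((M:ℝ≥0∞)) ≤ 2 ^ M := by
            exact_mod_cast (Nat.lt_two_pow_self (n := M)).le
        _ = W M := by rw [W, Int.cast_natCast, ENNReal.rpow_natCast]
        _ ≤ 2 * W M := le_mul_of_one_le_left (zero_le) one_le_two
    exact absurd ((h2.trans (h1 M)).trans_lt hM) (lt_irrefl _)
  -- main case
  have hvR : 0 < v.toReal := ENNReal.toReal_pos hv0 hvt
  obtain ⟨n, hn1, hn2⟩ := exists_mem_Ico_zpow hvR one_lt_two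
  have hWn : W n ≤ v := by
    rw [W_eq_ofReal, ← ENNReal.ofReal_toReal hvt]
    exact ENNReal.ofReal_le_ofReal hn1
  have hvW : v ≤ W (n + 1) := by
    rw [W_eq_ofReal, ← ENNReal.ofReal_toReal hvt]
    exact ENNReal.ofReal_le_ofReal hn2.le
  calc v ≤ W (n + 1) := hvW
    _ = 2 * (2 * W (n - 1)) := by
        rw [← W_add_one, ← W_add_one]; congr 1; omega
    _ = 2 * ∑' j : ℤ, (if j ≤ n - 1 then W j else 0) := by rw [HZ]
    _ = ∑' j : ℤ, (if j ≤ n - 1 then 2 * W j else 0) := by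
        rw [← ENNReal.tsum_mul_left]; congr 1; funext j; rw [mul_ite, mul_zero]
    _ ≤ ∑' j : ℤ, (if W j < v then 2 * W j else 0) := by
        apply ENNReal.tsum_le_tsum
        intro j
        by_cases h : j ≤ n - 1
        · rw [if_pos h, if_pos]
          exact lt_of_lt_of_le (lt_of_le_of_lt (W_mono h) (W_lt_W (by omega))) hWn
        · rw [if_neg h]; exact zero_le

lemma layer_high (v : ℝ≥0∞) : ∑' j : ℤ, (if W j < v then W j else 0) ≤ 2 * v := by
  rcases eq_or_ne v ⊤ with rfl | hvt
  · exact le_top.trans_eq (by simp)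
  rcases eq_or_ne v 0 with rfl | hv0
  · simp
  have hvR : 0 < v.toReal := ENNReal.toReal_pos hv0 hvt
  obtain ⟨n, hn1, hn2⟩ := exists_mem_Ico_zpow hvR one_lt_two
  have hWn : W n ≤ v := by
    rw [W_eq_ofReal, ← ENNReal.ofReal_toReal hvt]
    exact ENNReal.ofReal_le_ofReal hn1
  have hvW : v ≤ W (n + 1) := by
    rw [W_eq_ofReal, ← ENNReal.ofReal_toReal hvt]
    exact ENNReal.ofReal_le_ofReal hn2.le
  calc ∑' j : ℤ, (if W j < v then W j else 0)
      ≤ ∑' j : ℤ, (if j ≤ n then W j else 0) := by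
        apply ENNReal.tsum_le_tsum
        intro j
        by_cases h : W j < v
        · rw [if_pos h, if_pos]
          have h2 : W j < W (n+1) := lt_of_lt_of_le h hvW
          have := W_lt_W_iff.1 h2
          omega
        · rw [if_neg h]; exact zero_le
    _ = 2 * W n := HZ n
    _ ≤ 2 * v := mul_le_mul_right hWn _

variable {m : ℕ}

/-- Extend a word of length `n` to a full sequence (by `0`). -/
def extw (hm : 0 < m) {n : ℕ} (w : Fin n → Fin m) : ℕ → Fin m :=
  fun i => if h : i < n then w ⟨i, h⟩ else ⟨0, hm⟩

lemma cyl_measurable (n : ℕ) (w : Fin n → Fin m) : MeasurableSet (cyl m n w) := by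
  have : cyl m n w = ⋂ i : Fin n, (fun x : ℕ → Fin m => x (i:ℕ)) ⁻¹' {w i} := by
    ext x; simp [cyl, Set.mem_iInter]
  rw [this]
  exact MeasurableSet.iInter fun i =>
    (measurable_pi_apply (i:ℕ)) (MeasurableSet.singleton (w i))

lemma mem_cyl {n : ℕ} {w : Fin n → Fin m} {x : ℕ → Fin m} :
    x ∈ cyl m n w ↔ ∀ i : Fin n, x (i:ℕ) = w i := Iff.rfl

lemma extw_mem_cyl_agree (hm : 0 < m) {n : ℕ} {x : ℕ → Fin m} :
    ∀ i < n, extw hm (fun i : Fin n => x (i:ℕ)) i = x i := by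
  intro i hi; simp [extw, hi]

/-- A set determined by the first `n` coordinates is measurable. -/
lemma det_measurableSet (hm : 0 < m) {n : ℕ} {A : Set (ℕ → Fin m)}
    (hA : ∀ x ∈ A, ∀ y : ℕ → Fin m, (∀ i < n, y i = x i) → y ∈ A) :
    MeasurableSet A := by
  have hrep : A = ⋃ (w : Fin n → Fin m) (_ : extw hm w ∈ A), cyl m n w := by
    ext x
    constructor
    · intro hx
      refine Set.mem_iUnion.2 ⟨fun i : Fin n => x (i:ℕ), Set.mem_iUnion.2 ⟨?_, ?_⟩⟩
      · exact hA x hx _ (extw_mem_cyl_agree hm)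
      · intro i; rfl
    · intro hx
      obtain ⟨w, hw⟩ := Set.mem_iUnion.1 hx
      obtain ⟨hwA, hxw⟩ := Set.mem_iUnion.1 hw
      refine hA _ hwA x ?_
      intro i hi
      have := hxw ⟨i, hi⟩
      rw [this]
      simp [extw, hi]
  rw [hrep]
  exact MeasurableSet.iUnion fun w => MeasurableSet.iUnion fun _ => cyl_measurable n w

/-- A nonempty set determined by the first `n` coordinates has measure at least `m⁻ⁿ`. -/
lemma det_measure_ge (hm : 0 < m) {P : Measure (ℕ → Fin m)}
    (hPcyl : ∀ (n : ℕ) (w : Fin n → Fin m), P (cyl m n w) = ((m : ℝ≥0∞))⁻¹ ^ n)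
    {n : ℕ} {A : Set (ℕ → Fin m)}
    (hA : ∀ x ∈ A, ∀ y : ℕ → Fin m, (∀ i < n, y i = x i) → y ∈ A)
    {x₀ : ℕ → Fin m} (hx₀ : x₀ ∈ A) :
    ((m : ℝ≥0∞))⁻¹ ^ n ≤ P A := by
  rw [← hPcyl n (fun i : Fin n => x₀ (i:ℕ))]
  apply measure_mono
  intro y hy
  refine hA x₀ hx₀ y ?_
  intro i hi
  exact hy ⟨i, hi⟩

/-- A function determined by the first `n` coordinates is measurable. -/
lemma det_fun_measurable (hm : 0 < m) {n : ℕ} {f : (ℕ → Fin m) → ℝ≥0∞}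
    (hf : ∀ x y : ℕ → Fin m, (∀ i < n, x i = y i) → f x = f y) :
    Measurable f := by
  have hπ : Measurable (fun x : ℕ → Fin m => (fun i : Fin n => x (i:ℕ))) :=
    measurable_pi_lambda _ fun i => measurable_pi_apply _
  have hg : Measurable (fun w : Fin n → Fin m => f (extw hm w)) :=
    measurable_of_countable _
  have : f = (fun w : Fin n → Fin m => f (extw hm w)) ∘
      (fun x : ℕ → Fin m => (fun i : Fin n => x (i:ℕ))) := by
    funext x
    exact (hf _ x (extw_mem_cyl_agree hm)).symm
  rw [this]
  exact hg.comp hπ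

lemma pow_rpow_comm (x : ℝ≥0∞) (r : ℝ) (n : ℕ) : (x ^ n) ^ r = (x ^ r) ^ n := by
  rw [← ENNReal.rpow_natCast x n, ← ENNReal.rpow_mul, ← ENNReal.rpow_natCast (x ^ r) n,
    ← ENNReal.rpow_mul, mul_comm]

lemma inner_sum {α β : ℝ} (hα0 : 0 < α) (hβ0 : 0 < β) (hαβ : α + β = 1)
    {y : ℝ≥0∞} (hy : y ≤ 1) :
    ∑' k : ℕ, ((2:ℝ≥0∞) ^ α) ^ k * min (((2:ℝ≥0∞))⁻¹ ^ k) y ≤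
      ((1 - ((2:ℝ≥0∞) ^ α)⁻¹)⁻¹ + (1 - (2:ℝ≥0∞) ^ (-β))⁻¹) * y ^ β := by
  set a : ℝ≥0∞ := (2:ℝ≥0∞) ^ α with ha
  set σ : ℝ≥0∞ := (2:ℝ≥0∞) ^ (-β) with hσ
  rcases eq_or_ne y 0 with rfl | hy0
  · simp [ENNReal.zero_rpow_of_pos hβ0]
  have hytop : y ≠ ⊤ := (hy.trans_lt ENNReal.one_lt_top).ne
  have ha0 : a ≠ 0 := by
    rw [ha]; exact (ENNReal.rpow_pos two_pos ofNat_ne_top).ne'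
  have hat : a ≠ ⊤ := by
    rw [ha]; exact ENNReal.rpow_ne_top_of_nonneg hα0.le ofNat_ne_top
  have hσa : σ = a * 2⁻¹ := by
    rw [hσ, ha, ← ENNReal.rpow_neg_one 2, ← ENNReal.rpow_add _ _ two_ne_zero ofNat_ne_top]
    congr 1; linarith
  have hσ2 : ((2:ℝ≥0∞))⁻¹ ^ (β:ℝ) = σ := by
    rw [ENNReal.inv_rpow, hσ, ENNReal.rpow_neg]
  obtain ⟨K₀, hK₀⟩ := ENNReal.exists_inv_two_pow_lt hy0
  have hex : ∃ K : ℕ, (2:ℝ≥0∞)⁻¹ ^ K < y := ⟨K₀, hK₀⟩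
  set K := Nat.find hex with hKdef
  have hK : (2:ℝ≥0∞)⁻¹ ^ K < y := Nat.find_spec hex
  have hKmin : ∀ k, k < K → y ≤ (2:ℝ≥0∞)⁻¹ ^ k := fun k hk => not_lt.1 (Nat.find_min hex hk)
  have hK1 : 1 ≤ K := by
    by_contra h
    have h0 : K = 0 := by omega
    rw [h0, pow_zero] at hK
    exact absurd (hK.trans_le hy) (lt_irrefl _)
  have hpt : ∀ k : ℕ, a ^ k * min ((2:ℝ≥0∞)⁻¹ ^ k) y ≤
      (if k < K then a ^ k * y else 0) + (if K ≤ k then σ ^ k else 0) := by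
    intro k
    by_cases h : k < K
    · rw [if_pos h, if_neg (by omega), add_zero]
      exact mul_le_mul_right (min_le_right _ _) _
    · rw [if_neg h, if_pos (by omega), zero_add, hσa, mul_pow]
      exact mul_le_mul_right (min_le_left _ _) _
  calc ∑' k : ℕ, a ^ k * min (((2:ℝ≥0∞))⁻¹ ^ k) y
      ≤ ∑' k : ℕ, ((if k < K then a ^ k * y else 0) + (if K ≤ k then σ ^ k else 0)) :=
        ENNReal.tsum_le_tsum hpt
    _ = (∑' k : ℕ, (if k < K then a ^ k * y else 0)) + ∑' k : ℕ, (if K ≤ k then σ ^ k else 0) :=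
        ENNReal.tsum_add
    _ ≤ (1 - a⁻¹)⁻¹ * y ^ β + (1 - σ)⁻¹ * y ^ β := by
        apply add_le_add
        · -- head part
          have he : ∑' k : ℕ, (if k < K then a ^ k * y else 0) =
              ∑ k ∈ Finset.range K, a ^ k * y := by
            rw [tsum_eq_sum (s := Finset.range K) (fun k hk => by
              rw [Finset.mem_range] at hk; rw [if_neg hk])]
            exact Finset.sum_congr rfl (fun k hk => by
              rw [Finset.mem_range] at hk; rw [if_pos hk])
          rw [he]
          have : ∑ k ∈ Finset.range K, a ^ k * y = (∑ k ∈ Finset.range K, a ^ k) * y :=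
            (Finset.sum_mul _ _ _).symm
          rw [this]
          have hsum : (∑ k ∈ Finset.range K, a ^ k) * y ≤ (a ^ (K-1) * (1 - a⁻¹)⁻¹) * y :=
            mul_le_mul_left (geo_head a ha0 hat K) _
          refine hsum.trans ?_
          have h2 : y ≤ (2:ℝ≥0∞)⁻¹ ^ (K - 1) := hKmin _ (by omega)
          have h3 : a ^ (K - 1) ≤ y ^ (-α) := by
            have h4 : (((2:ℝ≥0∞))⁻¹ ^ (K-1) : ℝ≥0∞) ^ (-α : ℝ) ≤ y ^ (-α : ℝ) := by
              rw [ENNReal.rpow_neg, ENNReal.rpow_neg]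
              exact ENNReal.inv_le_inv.2 (ENNReal.rpow_le_rpow h2 hα0.le)
            refine le_trans (le_of_eq ?_) h4
            rw [pow_rpow_comm]
            congr 1
            rw [ENNReal.rpow_neg, ENNReal.inv_rpow, inv_inv, ha]
          have h5 : a ^ (K-1) * y ≤ y ^ β := by
            calc a ^ (K-1) * y ≤ y ^ (-α) * y := mul_le_mul_left h3 _
              _ = y ^ β := by
                  nth_rewrite 2 [← ENNReal.rpow_one y]
                  rw [← ENNReal.rpow_add _ _ hy0 hytop]
                  congr 1; linarith
          calc a ^ (K-1) * (1 - a⁻¹)⁻¹ * y = (1 - a⁻¹)⁻¹ * (a ^ (K-1) * y) := by ring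
            _ ≤ (1 - a⁻¹)⁻¹ * y ^ β := mul_le_mul_right h5 _
            _ = (1 - a⁻¹)⁻¹ * y ^ β := rfl
        · -- tail part
          rw [tsum_tail_geom]
          have hσK : σ ^ K ≤ y ^ β := by
            have h1 : ((2:ℝ≥0∞)⁻¹ ^ K : ℝ≥0∞) ^ (β:ℝ) ≤ y ^ β := ENNReal.rpow_le_rpow hK.le hβ0.le
            refine le_trans (le_of_eq ?_) h1
            rw [pow_rpow_comm, hσ2]
          calc σ ^ K * (1 - σ)⁻¹ ≤ y ^ β * (1 - σ)⁻¹ := mul_le_mul_left hσK _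
            _ = (1 - σ)⁻¹ * y ^ β := mul_comm _ _
    _ = ((1 - a⁻¹)⁻¹ + (1 - σ)⁻¹) * y ^ β := (add_mul _ _ _).symm

end RPaux

open RPaux

/-- **`I_{(p-1)/p}` maps the martingale Hardy space `H_1` into the Lorentz space
`L_{p,1}`.** For every `p ∈ (1,∞)` there is `C = C(m,p)` such that every real-valued
martingale `F` adapted to the `m`-adic filtration with `E[sup_n |F_n|] < ∞` satisfies
`‖∑_{n=1}^N m^{-((p-1)/p)n} f_n‖_{L_{p,1}(P)} ≤ C · E[sup_n |F_n|]` for every `N ≥ 1`. -/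
theorem riesz_potential_H1_to_Lorentz (m : ℕ) (hm : 3 ≤ m)
    (P : Measure (ℕ → Fin m)) (hP : IsProbabilityMeasure P)
    (hPcyl : ∀ (n : ℕ) (w : Fin n → Fin m), P (cyl m n w) = ((m : ℝ≥0∞))⁻¹ ^ n)
    (p : ℝ) (hp : 1 < p) :
    ∃ C : ℝ≥0, ∀ F : ℕ → (ℕ → Fin m) → ℝ, IsMartingaleFun m F →
      (∫⁻ x, (⨆ n, (‖F n x‖₊ : ℝ≥0∞)) ∂P) < ⊤ →
      ∀ N, 1 ≤ N →
        lorentzNorm P p (rieszSum m ((p - 1) / p) F N) ≤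
          C * ∫⁻ x, (⨆ n, (‖F n x‖₊ : ℝ≥0∞)) ∂P := by
  classical
  have hm0 : 0 < m := by omega
  have hm1 : (1:ℝ≥0∞) < (m:ℝ≥0∞) := by exact_mod_cast (by omega : 1 < m)
  have hp0 : (0:ℝ) < p := by linarith
  set α : ℝ := (p - 1) / p with hαdef
  set β : ℝ := 1 / p with hβdef
  have hα0 : 0 < α := div_pos (by linarith) hp0
  have hβ0 : 0 < β := by rw [hβdef]; positivity
  have hαβ : α + β = 1 := by rw [hαdef, hβdef]; field_simp; ring
  set a : ℝ≥0∞ := (2:ℝ≥0∞) ^ α with ha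
  set σ : ℝ≥0∞ := (2:ℝ≥0∞) ^ (-β) with hσ
  set ρ : ℝ≥0∞ := ((m:ℝ≥0∞))⁻¹ ^ α with hρ
  have ha1 : 1 < a := by rw [ha]; exact ENNReal.one_lt_rpow one_lt_two hα0
  have hσ1 : σ < 1 := by
    rw [hσ]; exact ENNReal.rpow_lt_one_of_one_lt_of_neg one_lt_two (by linarith)
  have hρ1 : ρ < 1 := by
    rw [hρ]; exact ENNReal.rpow_lt_one (ENNReal.inv_lt_one.2 hm1) hα0
  have hσa : σ = a * 2⁻¹ := by
    rw [hσ, ha, ← ENNReal.rpow_neg_one 2, ← ENNReal.rpow_add _ _ two_ne_zero ofNat_ne_top]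
    congr 1; linarith
  have hσ2a : σ * 2 = a := by
    rw [hσa, mul_assoc, ENNReal.inv_mul_cancel two_ne_zero ofNat_ne_top, mul_one]
  have hσ2 : ((2:ℝ≥0∞))⁻¹ ^ (β:ℝ) = σ := by
    rw [ENNReal.inv_rpow, hσ, ENNReal.rpow_neg]
  set c5 : ℝ≥0∞ := (1 - a⁻¹)⁻¹ + (1 - σ)⁻¹ with hc5
  have hc5top : c5 ≠ ⊤ := by
    have h1 : a⁻¹ < 1 := ENNReal.inv_lt_one.2 ha1
    rw [hc5]
    refine ENNReal.add_ne_top.2 ⟨ENNReal.inv_ne_top.2 ?_, ENNReal.inv_ne_top.2 ?_⟩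
    · rw [Ne, tsub_eq_zero_iff_le]; exact not_le.2 h1
    · rw [Ne, tsub_eq_zero_iff_le]; exact not_le.2 hσ1
  set C1 : ℝ≥0∞ := 4 * (1 - ρ)⁻¹ with hC1
  have hC1top : C1 ≠ ⊤ := by
    rw [hC1]
    refine ENNReal.mul_ne_top (by norm_num) (ENNReal.inv_ne_top.2 ?_)
    rw [Ne, tsub_eq_zero_iff_le]; exact not_le.2 hρ1
  set CC : ℝ≥0∞ := C1 * (1 + 2 * c5) * 4 with hCC
  have hCCtop : CC ≠ ⊤ := by
    rw [hCC]
    exact ENNReal.mul_ne_top (ENNReal.mul_ne_top hC1top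
      (ENNReal.add_ne_top.2 ⟨one_ne_top, ENNReal.mul_ne_top (by norm_num) hc5top⟩)) (by norm_num)
  refine ⟨CC.toNNReal, ?_⟩
  intro F hF hFint N hN
  obtain ⟨hFad, -⟩ := hF
  set A : ℝ≥0∞ := ∫⁻ x, (⨆ n, (‖F n x‖₊ : ℝ≥0∞)) ∂P with hA
  have hAtop : A ≠ ⊤ := hFint.ne
  -- the maximal process Λ
  set Λ : ℕ → (ℕ → Fin m) → ℝ≥0∞ :=
    fun n x => (Finset.range (n+1)).sup (fun k => (‖F k x - F 0 x‖₊ : ℝ≥0∞)) with hΛdef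
  have hΛdet : ∀ (n:ℕ) (x z : ℕ → Fin m), (∀ i < n, x i = z i) → Λ n x = Λ n z := by
    intro n x z hxz
    apply Finset.sup_congr rfl
    intro k hk
    rw [Finset.mem_range] at hk
    have h1 : F k x = F k z := hFad k x z (fun i hi => hxz i (by omega))
    have h0 : F 0 x = F 0 z := hFad 0 x z (fun i hi => absurd hi (by omega))
    rw [h1, h0]
  have hΛmeas : ∀ n, Measurable (Λ n) := fun n => det_fun_measurable hm0 (hΛdet n)
  have hΛmono : ∀ (n n':ℕ), n ≤ n' → ∀ x, Λ n x ≤ Λ n' x := by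
    intro n n' h x
    exact Finset.sup_mono (Finset.range_subset_range.2 (by omega))
  have hΛle : ∀ (n:ℕ) (x : ℕ → Fin m), (‖F n x - F 0 x‖₊ : ℝ≥0∞) ≤ Λ n x :=
    fun n x => Finset.le_sup (f := fun k => (‖F k x - F 0 x‖₊ : ℝ≥0∞))
      (Finset.self_mem_range_succ n)
  set Λi : (ℕ → Fin m) → ℝ≥0∞ := fun x => ⨆ n, Λ n x with hΛi
  have hΛimeas : Measurable Λi := Measurable.iSup hΛmeas
  have hΛiint : ∫⁻ x, Λi x ∂P ≤ 2 * A := by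
    calc ∫⁻ x, Λi x ∂P ≤ ∫⁻ x, 2 * (⨆ n, (‖F n x‖₊ : ℝ≥0∞)) ∂P := by
          apply lintegral_mono
          intro x
          apply iSup_le; intro n
          apply Finset.sup_le; intro k _
          calc (‖F k x - F 0 x‖₊ : ℝ≥0∞) ≤ (‖F k x‖₊ : ℝ≥0∞) + (‖F 0 x‖₊ : ℝ≥0∞) := by
                exact_mod_cast nnnorm_sub_le _ _
            _ ≤ (⨆ n, (‖F n x‖₊:ℝ≥0∞)) + (⨆ n, (‖F n x‖₊:ℝ≥0∞)) :=
                add_le_add (le_iSup (fun n => ((‖F n x‖₊:ℝ≥0∞))) k)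
                  (le_iSup (fun n => ((‖F n x‖₊:ℝ≥0∞))) 0)
            _ = 2 * _ := (two_mul _).symm
      _ = 2 * A := by rw [lintegral_const_mul' _ _ ofNat_ne_top, hA]
  -- the dominating functional Ψ
  set Ψ : (ℕ → Fin m) → ℝ≥0∞ := fun x => ∑ n ∈ Finset.Icc 1 N, ρ^n * (2 * Λ n x) with hΨdef
  have hΨmeas : Measurable Ψ := by
    apply Finset.measurable_sum
    intro n _
    exact ((hΛmeas n).const_mul 2).const_mul _
  have step1 : ∀ x, (‖rieszSum m α F N x‖₊ : ℝ≥0∞) ≤ Ψ x := by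
    intro x
    have hcoef : ∀ n:ℕ, (‖((m:ℝ) ^ (-(α * (n:ℝ))) : ℝ)‖₊ : ℝ≥0∞) = ρ ^ n := by
      intro n
      have hmR : (0:ℝ) < (m:ℝ) := by exact_mod_cast hm0
      have h1 : ((m:ℝ) ^ (-(α * (n:ℝ))) : ℝ) = ((m:ℝ)⁻¹) ^ (α * (n:ℝ)) := by
        rw [Real.inv_rpow hmR.le, ← Real.rpow_neg hmR.le]
      rw [h1, ← enorm_eq_nnnorm, Real.enorm_eq_ofReal (Real.rpow_nonneg (by positivity) _),
        ← ENNReal.ofReal_rpow_of_pos (by positivity)]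
      have h2 : ENNReal.ofReal ((m:ℝ)⁻¹) = ((m:ℝ≥0∞))⁻¹ := by
        rw [ENNReal.ofReal_inv_of_pos hmR, ENNReal.ofReal_natCast]
      rw [h2, ENNReal.rpow_mul, ENNReal.rpow_natCast, hρ]
    have hdiff : ∀ n:ℕ, 1 ≤ n → (‖F n x - F (n-1) x‖₊ : ℝ≥0∞) ≤ 2 * Λ n x := by
      intro n hn
      have h1 : F n x - F (n-1) x = (F n x - F 0 x) - (F (n-1) x - F 0 x) := by ring
      rw [h1]
      calc (‖(F n x - F 0 x) - (F (n-1) x - F 0 x)‖₊:ℝ≥0∞)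
          ≤ (‖F n x - F 0 x‖₊:ℝ≥0∞) + (‖F (n-1) x - F 0 x‖₊:ℝ≥0∞) := by
            exact_mod_cast nnnorm_sub_le _ _
        _ ≤ Λ n x + Λ n x :=
            add_le_add (hΛle n x) (le_trans (hΛle (n-1) x) (hΛmono (n-1) n (by omega) x))
        _ = 2 * Λ n x := (two_mul _).symm
    calc (‖rieszSum m α F N x‖₊ : ℝ≥0∞)
        ≤ ∑ n ∈ Finset.Icc 1 N,
            (‖((m:ℝ) ^ (-(α * (n:ℝ))) : ℝ) • (F n x - F (n-1) x)‖₊ : ℝ≥0∞) := by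
          simp only [rieszSum]
          exact_mod_cast nnnorm_sum_le _ _
      _ ≤ Ψ x := by
          rw [hΨdef]
          apply Finset.sum_le_sum
          intro n hn
          rw [Finset.mem_Icc] at hn
          rw [nnnorm_smul, ENNReal.coe_mul, hcoef n]
          exact mul_le_mul_right (hdiff n hn.1) _
  -- level sets
  set S : ℤ → ℕ → Set (ℕ → Fin m) := fun j n => {x | W j < Λ n x} with hSdef
  have hSdet : ∀ (j:ℤ) (n:ℕ), ∀ x ∈ S j n, ∀ z : ℕ → Fin m, (∀ i < n, z i = x i) → z ∈ S j n := by
    intro j n x hx z hz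
    have h1 : Λ n z = Λ n x := hΛdet n z x hz
    show W j < Λ n z
    rw [h1]
    exact hx
  have hSmeas : ∀ j n, MeasurableSet (S j n) := fun j n => det_measurableSet hm0 (hSdet j n)
  set Si : ℤ → Set (ℕ → Fin m) := fun j => {x | W j < Λi x} with hSidef
  have hSimeas : ∀ j, MeasurableSet (Si j) := fun j => measurableSet_lt measurable_const hΛimeas
  have hSsub : ∀ j n, S j n ⊆ Si j := by
    intro j n x hx
    exact lt_of_lt_of_le hx (le_iSup (fun n => Λ n x) n)
  set y : ℤ → ℝ≥0∞ := fun j => P (Si j) with hydef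
  have hy1 : ∀ j, y j ≤ 1 := fun j => prob_le_one
  have hytop : ∀ j, y j ≠ ⊤ := fun j => ((hy1 j).trans_lt ENNReal.one_lt_top).ne
  -- the budget B
  set B : ℝ≥0∞ := ∑' j : ℤ, W j * y j with hB
  have hBA : B ≤ 4 * A := by
    have h1 : B = ∫⁻ x, ∑' j : ℤ, (Si j).indicator (fun _ => W j) x ∂P := by
      rw [lintegral_tsum (fun j => (measurable_const.indicator (hSimeas j)).aemeasurable), hB]
      apply tsum_congr; intro j
      rw [lintegral_indicator_const (hSimeas j)]
    rw [h1]
    calc ∫⁻ x, ∑' j : ℤ, (Si j).indicator (fun _ => W j) x ∂P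
        ≤ ∫⁻ x, 2 * Λi x ∂P := by
          apply lintegral_mono; intro x
          have h2 : ∀ j:ℤ, (Si j).indicator (fun _ => W j) x = (if W j < Λi x then W j else 0) := by
            intro j
            by_cases h : W j < Λi x
            · rw [if_pos h, Set.indicator_of_mem (show x ∈ Si j from h)]
            · rw [if_neg h, Set.indicator_of_notMem (show x ∉ Si j from h)]
          show ∑' j : ℤ, (Si j).indicator (fun _ => W j) x ≤ 2 * Λi x
          rw [tsum_congr h2]
          exact layer_high (Λi x)
      _ = 2 * ∫⁻ x, Λi x ∂P := lintegral_const_mul' _ _ ofNat_ne_top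
      _ ≤ 2 * (2*A) := mul_le_mul_right hΛiint _
      _ = 4 * A := by ring
  have hBtop : B ≠ ⊤ :=
    ne_top_of_le_ne_top (ENNReal.mul_ne_top ofNat_ne_top hAtop) hBA
  -- key estimate per level j
  have key : ∀ (E : Set (ℕ → Fin m)) (j : ℤ),
      ∑ n ∈ Finset.Icc 1 N, ρ^n * P (S j n ∩ E) ≤
        (1-ρ)⁻¹ * ((y j)^α * min (P E) (y j)) := by
    intro E j
    by_cases hne : ∃ n:ℕ, (S j n).Nonempty
    · have hn₀ : (S j (Nat.find hne)).Nonempty := Nat.find_spec hne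
      set n₀ := Nat.find hne with hn₀def
      have hρn₀ : ρ ^ n₀ ≤ (y j) ^ α := by
        obtain ⟨x₀, hx₀⟩ := hn₀
        have h1 : ((m:ℝ≥0∞))⁻¹ ^ n₀ ≤ P (S j n₀) :=
          det_measure_ge hm0 hPcyl (hSdet j n₀) hx₀
        have h2 : ((m:ℝ≥0∞))⁻¹ ^ n₀ ≤ y j := h1.trans (measure_mono (hSsub j n₀))
        calc ρ ^ n₀ = (((m:ℝ≥0∞))⁻¹ ^ n₀) ^ α := by rw [hρ, pow_rpow_comm]
          _ ≤ (y j) ^ α := ENNReal.rpow_le_rpow h2 hα0.le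
      have hterm : ∀ n ∈ Finset.Icc 1 N, ρ^n * P (S j n ∩ E) ≤
          (if n₀ ≤ n then ρ^n else 0) * min (P E) (y j) := by
        intro n _
        rcases Set.eq_empty_or_nonempty (S j n) with hSe | hSne
        · rw [hSe]; simp
        · rw [if_pos (Nat.find_le hSne)]
          exact mul_le_mul_right (le_min (measure_mono Set.inter_subset_right)
            ((measure_mono Set.inter_subset_left).trans (measure_mono (hSsub j n)))) _
      calc ∑ n ∈ Finset.Icc 1 N, ρ^n * P (S j n ∩ E)
          ≤ ∑ n ∈ Finset.Icc 1 N, (if n₀ ≤ n then ρ^n else 0) * min (P E) (y j) :=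
            Finset.sum_le_sum hterm
        _ = (∑ n ∈ Finset.Icc 1 N, (if n₀ ≤ n then ρ^n else 0)) * min (P E) (y j) :=
            (Finset.sum_mul _ _ _).symm
        _ ≤ (∑' n:ℕ, (if n₀ ≤ n then ρ^n else 0)) * min (P E) (y j) :=
            mul_le_mul_left (ENNReal.sum_le_tsum _) _
        _ = ρ^n₀ * (1-ρ)⁻¹ * min (P E) (y j) := by rw [tsum_tail_geom]
        _ ≤ (y j)^α * (1-ρ)⁻¹ * min (P E) (y j) :=
            mul_le_mul_left (mul_le_mul_left hρn₀ _) _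
        _ = (1-ρ)⁻¹ * ((y j)^α * min (P E) (y j)) := by ring
    · push_neg at hne
      have hz : ∀ n ∈ Finset.Icc 1 N, ρ^n * P (S j n ∩ E) = 0 := by
        intro n _
        rw [hne n]
        simp
      rw [Finset.sum_eq_zero hz]
      exact zero_le
  -- the concave majorant G
  set G : ℝ≥0∞ → ℝ≥0∞ := fun s => ∑' j:ℤ, W j * ((y j)^α * min s (y j)) with hG
  have hGmono : ∀ s s' : ℝ≥0∞, s ≤ s' → G s ≤ G s' := by
    intro s s' h
    exact ENNReal.tsum_le_tsum fun j =>
      mul_le_mul_right (mul_le_mul_right (min_le_min h le_rfl) _) _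
  have hG1B : G 1 ≤ B := by
    apply ENNReal.tsum_le_tsum; intro j
    apply mul_le_mul_right
    calc (y j)^α * min 1 (y j) ≤ (y j)^α * (y j) := mul_le_mul_right (min_le_right _ _) _
      _ ≤ 1 * y j := mul_le_mul_left (ENNReal.rpow_le_one (hy1 j) hα0.le) _
      _ = y j := one_mul _
  have hGcross : ∀ s s' : ℝ≥0∞, s' ≤ s → G s * s' ≤ G s' * s := by
    intro s s' h
    rw [hG, ← ENNReal.tsum_mul_right, ← ENNReal.tsum_mul_right]
    apply ENNReal.tsum_le_tsum; intro j
    have hmin : min s (y j) * s' ≤ min s' (y j) * s := by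
      rcases le_total (y j) s' with h1 | h1
      · rw [min_eq_right h1, min_eq_right (h1.trans h)]
        exact mul_le_mul_right h _
      · rw [min_eq_left h1]
        calc min s (y j) * s' ≤ s * s' := mul_le_mul_left (min_le_left _ _) _
          _ = s' * s := mul_comm _ _
    calc W j * ((y j)^α * min s (y j)) * s' = (W j * (y j)^α) * (min s (y j) * s') := by ring
      _ ≤ (W j * (y j)^α) * (min s' (y j) * s) := mul_le_mul_right hmin _
      _ = W j * ((y j)^α * min s' (y j)) * s := by ring
  -- integral of Ψ over an arbitrary set
  have EPsi : ∀ E : Set (ℕ → Fin m), ∫⁻ x in E, Ψ x ∂P ≤ C1 * G (P E) := by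
    intro E
    have h3 : ∀ n:ℕ, ∫⁻ x in E, Λ n x ∂P ≤ ∑' j:ℤ, 2 * W j * P (S j n ∩ E) := by
      intro n
      calc ∫⁻ x in E, Λ n x ∂P
          ≤ ∫⁻ x in E, ∑' j:ℤ, (S j n).indicator (fun _ => 2 * W j) x ∂P := by
            apply lintegral_mono
            intro x
            refine le_trans (layer_low (Λ n x)) (le_of_eq (tsum_congr fun j => ?_))
            by_cases h : W j < Λ n x
            · rw [if_pos h, Set.indicator_of_mem (show x ∈ S j n from h)]
            · rw [if_neg h, Set.indicator_of_notMem (show x ∉ S j n from h)]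
        _ = ∑' j:ℤ, ∫⁻ x in E, (S j n).indicator (fun _ => 2*W j) x ∂P :=
            lintegral_tsum (fun j => (measurable_const.indicator (hSmeas j n)).aemeasurable)
        _ = ∑' j:ℤ, 2*W j * P (S j n ∩ E) := by
            apply tsum_congr; intro j
            rw [lintegral_indicator_const (hSmeas j n), Measure.restrict_apply (hSmeas j n)]
    have hρ2top : ∀ n:ℕ, ρ^n * 2 ≠ ⊤ :=
      fun n => ENNReal.mul_ne_top (pow_ne_top (hρ1.trans ENNReal.one_lt_top).ne) ofNat_ne_top
    calc ∫⁻ x in E, Ψ x ∂P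
        = ∑ n ∈ Finset.Icc 1 N, ∫⁻ x in E, ρ^n * 2 * Λ n x ∂P := by
          have : ∀ x, Ψ x = ∑ n ∈ Finset.Icc 1 N, ρ^n * 2 * Λ n x := by
            intro x; rw [hΨdef]
            exact Finset.sum_congr rfl (fun n _ => by ring)
          simp_rw [this]
          exact lintegral_finset_sum' _ (fun n _ => ((hΛmeas n).const_mul _).aemeasurable)
      _ = ∑ n ∈ Finset.Icc 1 N, ρ^n * 2 * ∫⁻ x in E, Λ n x ∂P :=
          Finset.sum_congr rfl (fun n _ => lintegral_const_mul' _ _ (hρ2top n))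
      _ ≤ ∑ n ∈ Finset.Icc 1 N, ρ^n * 2 * (∑' j:ℤ, 2 * W j * P (S j n ∩ E)) :=
          Finset.sum_le_sum (fun n _ => mul_le_mul_right (h3 n) _)
      _ = ∑' j:ℤ, ∑ n ∈ Finset.Icc 1 N, ρ^n * 2 * (2 * W j * P (S j n ∩ E)) := by
          rw [show ∑ n ∈ Finset.Icc 1 N, ρ^n * 2 * (∑' j:ℤ, 2 * W j * P (S j n ∩ E)) =
              ∑ n ∈ Finset.Icc 1 N, ∑' j:ℤ, ρ^n * 2 * (2 * W j * P (S j n ∩ E)) from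
            Finset.sum_congr rfl (fun n _ => ENNReal.tsum_mul_left.symm)]
          exact (Summable.tsum_finsetSum (fun n _ => ENNReal.summable)).symm
      _ = ∑' j:ℤ, 4 * W j * ∑ n ∈ Finset.Icc 1 N, ρ^n * P (S j n ∩ E) := by
          apply tsum_congr; intro j
          rw [Finset.mul_sum]
          exact Finset.sum_congr rfl (fun n _ => by ring)
      _ ≤ ∑' j:ℤ, 4 * W j * ((1-ρ)⁻¹ * ((y j)^α * min (P E) (y j))) :=
          ENNReal.tsum_le_tsum (fun j => mul_le_mul_right (key E j) _)
      _ = C1 * G (P E) := by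
          rw [hG, hC1, ← ENNReal.tsum_mul_left]
          apply tsum_congr; intro j
          ring
  -- core distributional inequality
  have core : ∀ T:ℝ≥0∞, T * P {x | T < Ψ x} ≤ C1 * G (P {x | T < Ψ x}) := by
    intro T
    calc T * P {x | T < Ψ x} = ∫⁻ _ in {x | T < Ψ x}, T ∂P := (setLIntegral_const _ _).symm
      _ ≤ ∫⁻ x in {x | T < Ψ x}, Ψ x ∂P :=
          setLIntegral_mono hΨmeas (fun x hx => (le_of_lt hx))
      _ ≤ C1 * G (P {x | T < Ψ x}) := EPsi _
  -- thresholds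
  set tk : ℕ → ℝ≥0∞ := fun k => C1 * 2^k * G (((2:ℝ≥0∞))⁻¹^k) with htk
  have htkTop : ∀ k, tk k ≠ ⊤ := by
    intro k
    have h1 : G (((2:ℝ≥0∞))⁻¹^k) ≤ B :=
      le_trans (hGmono _ 1 (pow_le_one₀ (zero_le) (ENNReal.inv_le_one.2 one_le_two))) hG1B
    have : tk k ≤ C1 * 2^k * B := mul_le_mul_right h1 _
    exact ne_top_of_le_ne_top (ENNReal.mul_ne_top
      (ENNReal.mul_ne_top hC1top (pow_ne_top ofNat_ne_top)) hBtop) this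
  have hdist : ∀ (k:ℕ) (T:ℝ≥0∞), tk k < T → P {x | T < Ψ x} ≤ ((2:ℝ≥0∞))⁻¹^k := by
    intro k T hT
    by_contra hc
    push_neg at hc
    set s := P {x | T < Ψ x} with hs
    have hs1 : s ≤ 1 := prob_le_one
    have hstop : s ≠ ⊤ := (hs1.trans_lt ENNReal.one_lt_top).ne
    have hs0 : s ≠ 0 := by
      intro h; rw [h] at hc; exact absurd hc (not_lt.2 (zero_le))
    have h1 : T * s ≤ C1 * G s := core T
    have h2' : G s * ((2:ℝ≥0∞))⁻¹^k ≤ G (((2:ℝ≥0∞))⁻¹^k) * s := hGcross s _ hc.le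
    have h3 : (T * ((2:ℝ≥0∞))⁻¹^k) * s ≤ (C1 * G (((2:ℝ≥0∞))⁻¹^k)) * s := by
      calc (T * ((2:ℝ≥0∞))⁻¹^k) * s = (T * s) * ((2:ℝ≥0∞))⁻¹^k := by ring
        _ ≤ (C1 * G s) * ((2:ℝ≥0∞))⁻¹^k := mul_le_mul_left h1 _
        _ = C1 * (G s * ((2:ℝ≥0∞))⁻¹^k) := by ring
        _ ≤ C1 * (G (((2:ℝ≥0∞))⁻¹^k) * s) := mul_le_mul_right h2' _
        _ = (C1 * G (((2:ℝ≥0∞))⁻¹^k)) * s := by ring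
    have h4 : T * ((2:ℝ≥0∞))⁻¹^k ≤ C1 * G (((2:ℝ≥0∞))⁻¹^k) :=
      (ENNReal.mul_le_mul_iff_left hs0 hstop).1 h3
    have h5 : T ≤ tk k := by
      have h6 : ((2:ℝ≥0∞))⁻¹^k * 2^k = 1 := by
        rw [← mul_pow, ENNReal.inv_mul_cancel two_ne_zero ofNat_ne_top, one_pow]
      calc T = T * (((2:ℝ≥0∞))⁻¹^k * 2^k) := by rw [h6, mul_one]
        _ = (T * ((2:ℝ≥0∞))⁻¹^k) * 2^k := by ring
        _ ≤ (C1 * G (((2:ℝ≥0∞))⁻¹^k)) * 2^k := mul_le_mul_left h4 _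
        _ = tk k := by rw [htk]; ring
    exact absurd hT (not_lt.2 h5)
  -- pointwise majorant for the distribution integrand
  have hσpow : ∀ k:ℕ, (((2:ℝ≥0∞))⁻¹^k)^(β:ℝ) = σ^k := by
    intro k
    rw [pow_rpow_comm, hσ2]
  have hmaj : ∀ t:ℝ, t ∈ Set.Ioi (0:ℝ) → (P {x | ENNReal.ofReal t < Ψ x})^(β:ℝ) ≤
      (Set.Iic ((tk 0).toReal)).indicator (fun _ => (1:ℝ≥0∞)) t
      + ∑' k:ℕ, (Set.Ioc ((tk k).toReal) ((tk (k+1)).toReal)).indicator (fun _ => σ^k) t := by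
    intro t ht
    rw [Set.mem_Ioi] at ht
    by_cases h0 : ENNReal.ofReal t ≤ tk 0
    · have hmem : t ∈ Set.Iic ((tk 0).toReal) :=
        Set.mem_Iic.2 ((ENNReal.ofReal_le_iff_le_toReal (htkTop 0)).1 h0)
      rw [Set.indicator_of_mem hmem]
      exact le_trans (ENNReal.rpow_le_one prob_le_one hβ0.le) (self_le_add_right _ _)
    · push_neg at h0
      by_cases hex : ∃ k:ℕ, ENNReal.ofReal t ≤ tk k
      · have hk₁ : ENNReal.ofReal t ≤ tk (Nat.find hex) := Nat.find_spec hex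
        set k₁ := Nat.find hex with hk₁def
        have hk₁0 : k₁ ≠ 0 := by
          intro h; rw [h] at hk₁; exact absurd h0 (not_lt.2 hk₁)
        have hk₁' : tk (k₁ - 1) < ENNReal.ofReal t := not_le.1 (Nat.find_min hex (by omega))
        have hPb : (P {x | ENNReal.ofReal t < Ψ x})^(β:ℝ) ≤ σ^(k₁-1) := by
          calc (P {x | ENNReal.ofReal t < Ψ x})^(β:ℝ)
              ≤ (((2:ℝ≥0∞))⁻¹^(k₁-1))^(β:ℝ) :=
                ENNReal.rpow_le_rpow (hdist _ _ hk₁') hβ0.le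
            _ = σ^(k₁-1) := hσpow _
        have hmem : t ∈ Set.Ioc ((tk (k₁-1)).toReal) ((tk ((k₁-1)+1)).toReal) := by
          constructor
          · exact (ENNReal.lt_ofReal_iff_toReal_lt (htkTop _)).1 hk₁'
          · have he : (k₁ - 1) + 1 = k₁ := by omega
            rw [he]
            exact (ENNReal.ofReal_le_iff_le_toReal (htkTop k₁)).1 hk₁
        refine le_trans hPb (le_trans ?_ (le_add_self))
        calc σ^(k₁-1)
            = (Set.Ioc ((tk (k₁-1)).toReal) ((tk ((k₁-1)+1)).toReal)).indicator
                (fun _ => σ^(k₁-1)) t := (Set.indicator_of_mem hmem (fun _ => σ^(k₁-1))).symm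
          _ ≤ ∑' k:ℕ, (Set.Ioc ((tk k).toReal) ((tk (k+1)).toReal)).indicator
                (fun _ => σ^k) t := ENNReal.le_tsum (k₁-1)
      · push_neg at hex
        have hP0 : P {x | ENNReal.ofReal t < Ψ x} = 0 := by
          by_contra hc
          obtain ⟨k, hk⟩ := ENNReal.exists_inv_two_pow_lt hc
          exact absurd (hdist k _ (hex k)) (not_le.2 hk)
        rw [hP0, ENNReal.zero_rpow_of_pos hβ0]
        exact zero_le
  -- double sum estimate
  have hdouble : ∑' k:ℕ, a^k * G (((2:ℝ≥0∞))⁻¹^k) ≤ c5 * B := by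
    have h1 : ∀ k:ℕ, a^k * G (((2:ℝ≥0∞))⁻¹^k) =
        ∑' j:ℤ, (W j * (y j)^α) * (a^k * min (((2:ℝ≥0∞))⁻¹^k) (y j)) := by
      intro k
      rw [hG, ← ENNReal.tsum_mul_left]
      apply tsum_congr; intro j; ring
    calc ∑' k:ℕ, a^k * G (((2:ℝ≥0∞))⁻¹^k)
        = ∑' k:ℕ, ∑' j:ℤ, (W j * (y j)^α) * (a^k * min (((2:ℝ≥0∞))⁻¹^k) (y j)) :=
          tsum_congr h1
      _ = ∑' j:ℤ, ∑' k:ℕ, (W j * (y j)^α) * (a^k * min (((2:ℝ≥0∞))⁻¹^k) (y j)) :=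
          ENNReal.tsum_comm
      _ = ∑' j:ℤ, (W j * (y j)^α) * ∑' k:ℕ, a^k * min (((2:ℝ≥0∞))⁻¹^k) (y j) :=
          tsum_congr (fun j => ENNReal.tsum_mul_left)
      _ ≤ ∑' j:ℤ, (W j * (y j)^α) * (c5 * (y j)^β) := by
          apply ENNReal.tsum_le_tsum; intro j
          apply mul_le_mul_right
          have hin := inner_sum hα0 hβ0 hαβ (hy1 j)
          rw [← ha, ← hσ, ← hc5] at hin
          exact hin
      _ = ∑' j:ℤ, c5 * (W j * y j) := by
          apply tsum_congr; intro j
          rcases eq_or_ne (y j) 0 with h | h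
          · rw [h, ENNReal.zero_rpow_of_pos hα0, ENNReal.zero_rpow_of_pos hβ0]
            simp
          · have hy2 : (y j)^(α:ℝ) * (y j)^(β:ℝ) = y j := by
              rw [← ENNReal.rpow_add _ _ h (hytop j), hαβ, ENNReal.rpow_one]
            calc (W j * (y j)^α)*(c5*(y j)^β) = c5 * (W j * ((y j)^α * (y j)^β)) := by ring
              _ = c5 * (W j * y j) := by rw [hy2]
      _ = c5 * B := by rw [ENNReal.tsum_mul_left, hB]
  -- final assembly
  have hfinal : lorentzNorm P p (rieszSum m α F N) ≤ CC * A := by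
    have hmono1 : ∀ t:ℝ, t ∈ Set.Ioi (0:ℝ) →
        (P {x | t < ‖rieszSum m α F N x‖})^(1/p) ≤
        (Set.Iic ((tk 0).toReal)).indicator (fun _ => (1:ℝ≥0∞)) t
        + ∑' k:ℕ, (Set.Ioc ((tk k).toReal) ((tk (k+1)).toReal)).indicator (fun _ => σ^k) t := by
      intro t ht
      refine le_trans ?_ (hmaj t ht)
      rw [← hβdef]
      apply ENNReal.rpow_le_rpow _ hβ0.le
      apply measure_mono
      intro x hx
      rw [Set.mem_setOf_eq] at hx ⊢
      calc ENNReal.ofReal t < ENNReal.ofReal ‖rieszSum m α F N x‖ :=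
          (ENNReal.ofReal_lt_ofReal_iff (lt_trans (Set.mem_Ioi.1 ht) hx)).2 hx
        _ = (‖rieszSum m α F N x‖₊ : ℝ≥0∞) := ofReal_norm_eq_enorm _
        _ ≤ Ψ x := step1 x
    have hmeas1 : Measurable (fun t:ℝ =>
        (Set.Iic ((tk 0).toReal)).indicator (fun _ => (1:ℝ≥0∞)) t) :=
      measurable_const.indicator measurableSet_Iic
    have hmeas2 : Measurable (fun t:ℝ =>
        ∑' k:ℕ, (Set.Ioc ((tk k).toReal) ((tk (k+1)).toReal)).indicator (fun _ => σ^k) t) :=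
      Measurable.ennreal_tsum (fun k => measurable_const.indicator measurableSet_Ioc)
    have hint1 : ∫⁻ t in Set.Ioi (0:ℝ),
        (Set.Iic ((tk 0).toReal)).indicator (fun _ => (1:ℝ≥0∞)) t ≤ tk 0 := by
      rw [lintegral_indicator_const measurableSet_Iic, one_mul,
        Measure.restrict_apply measurableSet_Iic]
      have he : Set.Iic ((tk 0).toReal) ∩ Set.Ioi (0:ℝ) = Set.Ioc 0 ((tk 0).toReal) := by
        ext u; simp [Set.mem_Ioc, Set.mem_Iic, Set.mem_Ioi, and_comm]
      rw [he, Real.volume_Ioc, sub_zero, ENNReal.ofReal_toReal (htkTop 0)]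
    have hint2 : ∀ k:ℕ, ∫⁻ t in Set.Ioi (0:ℝ),
        (Set.Ioc ((tk k).toReal) ((tk (k+1)).toReal)).indicator (fun _ => σ^k) t
          ≤ σ^k * tk (k+1) := by
      intro k
      rw [lintegral_indicator_const measurableSet_Ioc,
        Measure.restrict_apply measurableSet_Ioc]
      apply mul_le_mul_right
      calc volume (Set.Ioc ((tk k).toReal) ((tk (k+1)).toReal) ∩ Set.Ioi (0:ℝ))
          ≤ volume (Set.Ioc ((tk k).toReal) ((tk (k+1)).toReal)) :=
            measure_mono Set.inter_subset_left
        _ = ENNReal.ofReal ((tk (k+1)).toReal - (tk k).toReal) := Real.volume_Ioc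
        _ ≤ ENNReal.ofReal ((tk (k+1)).toReal) :=
            ENNReal.ofReal_le_ofReal (sub_le_self _ ENNReal.toReal_nonneg)
        _ = tk (k+1) := ENNReal.ofReal_toReal (htkTop (k+1))
    have htk1 : tk 0 ≤ C1 * B := by
      rw [htk]
      simp only [pow_zero, mul_one]
      exact mul_le_mul_right hG1B _
    have htkk : ∀ k:ℕ, σ^k * tk (k+1) ≤ 2 * C1 * (a^k * G (((2:ℝ≥0∞))⁻¹^k)) := by
      intro k
      have hGstep : G (((2:ℝ≥0∞))⁻¹^(k+1)) ≤ G (((2:ℝ≥0∞))⁻¹^k) := by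
        apply hGmono
        rw [pow_succ]
        exact mul_le_of_le_one_right' (ENNReal.inv_le_one.2 one_le_two)
      calc σ^k * tk (k+1) = σ^k * (C1 * 2^(k+1) * G (((2:ℝ≥0∞))⁻¹^(k+1))) := by rw [htk]
        _ ≤ σ^k * (C1 * 2^(k+1) * G (((2:ℝ≥0∞))⁻¹^k)) :=
            mul_le_mul_right (mul_le_mul_right hGstep _) _
        _ = 2 * C1 * ((σ^k * 2^k) * G (((2:ℝ≥0∞))⁻¹^k)) := by rw [pow_succ]; ring
        _ = 2 * C1 * (a^k * G (((2:ℝ≥0∞))⁻¹^k)) := by rw [← mul_pow, hσ2a]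
    calc lorentzNorm P p (rieszSum m α F N)
        = ∫⁻ t in Set.Ioi (0:ℝ), (P {x | t < ‖rieszSum m α F N x‖})^(1/p) := rfl
      _ ≤ ∫⁻ t in Set.Ioi (0:ℝ),
          ((Set.Iic ((tk 0).toReal)).indicator (fun _ => (1:ℝ≥0∞)) t
           + ∑' k:ℕ, (Set.Ioc ((tk k).toReal) ((tk (k+1)).toReal)).indicator (fun _ => σ^k) t) :=
          setLIntegral_mono (hmeas1.add hmeas2) hmono1
      _ = (∫⁻ t in Set.Ioi (0:ℝ), (Set.Iic ((tk 0).toReal)).indicator (fun _ => (1:ℝ≥0∞)) t)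
          + ∫⁻ t in Set.Ioi (0:ℝ),
            ∑' k:ℕ, (Set.Ioc ((tk k).toReal) ((tk (k+1)).toReal)).indicator (fun _ => σ^k) t :=
          lintegral_add_left hmeas1 _
      _ ≤ tk 0 + ∑' k:ℕ, σ^k * tk (k+1) := by
          apply add_le_add hint1
          rw [lintegral_tsum (fun k => (measurable_const.indicator measurableSet_Ioc).aemeasurable)]
          exact ENNReal.tsum_le_tsum hint2
      _ ≤ C1 * B + ∑' k:ℕ, 2 * C1 * (a^k * G (((2:ℝ≥0∞))⁻¹^k)) :=
          add_le_add htk1 (ENNReal.tsum_le_tsum htkk)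
      _ = C1 * B + 2 * C1 * ∑' k:ℕ, a^k * G (((2:ℝ≥0∞))⁻¹^k) := by rw [ENNReal.tsum_mul_left]
      _ ≤ C1 * B + 2 * C1 * (c5 * B) := add_le_add_right (mul_le_mul_right hdouble _) _
      _ = (C1 * (1 + 2 * c5)) * B := by ring
      _ ≤ (C1 * (1 + 2 * c5)) * (4 * A) := mul_le_mul_right hBA _
      _ = CC * A := by rw [hCC]; ring
  rw [ENNReal.coe_toNNReal hCCtop]
  exact hfinal
end
end

section
/- Besov embedding: suppose W satisfies the second structural condition and let p ∈ (1,∞). Then there is a constant C = C(m,ℓ,W,p) such that every F ∈ 𝔚 satisfies Σ_{n=1}^∞ m^{−((p−1)/p)·n}·‖f_n‖_{L_p(P)} ≤ C·‖F‖_{L_1} (i.e., I_{(p−1)/p} maps 𝔚 into the martingale Besov space B_p^{0,1}, equivalently 𝔚 embeds into B_p^{−(p−1)/p,1}); here ‖f_n‖_{L_p(P)} is the L_p norm of x ↦ ‖f_n(x)‖ (Euclidean norm on ℝ^ℓ). -/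
open MeasureTheory ENNReal NNReal

noncomputable section

open MartingaleModel

namespace MartingaleModel

/-- The tuple in `V^ℓ` of values of the martingale difference `f_{n+1}` on the `m`
children of the atom of `ℱ_n` containing `x`. -/
def diffTuple (m : ℕ) {E : Type*} [AddCommGroup E]
    (F : ℕ → (ℕ → Fin m) → E) (n : ℕ) (x : ℕ → Fin m) : Fin m → E :=
  fun j => F (n + 1) (Function.update x n j) - F n x

/-- Membership of a martingale in the Sobolev-type space `𝔚`:
every difference tuple lies in `W`. -/
def MemW (m l : ℕ) (W : Submodule ℝ (Fin m → EuclideanSpace ℝ (Fin l)))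
    (F : ℕ → (ℕ → Fin m) → EuclideanSpace ℝ (Fin l)) : Prop :=
  ∀ (n : ℕ) (x : ℕ → Fin m), diffTuple m F n x ∈ W

/-- The second structural condition: `W` contains no nonzero vector `v ⊗ a` in which
`v` has `m - 1` equal coordinates. -/
def SecondStructural (m l : ℕ) (W : Submodule ℝ (Fin m → EuclideanSpace ℝ (Fin l))) : Prop :=
  ∀ (v : Fin m → ℝ) (a : EuclideanSpace ℝ (Fin l)),
    (∑ j, v j = 0) → (∃ j₀ c, ∀ j, j ≠ j₀ → v j = c) →
    (fun j => v j • a) ∈ W → (fun j => v j • a) = 0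

end MartingaleModel

namespace MartingaleAux

/-- `x^p ≤ x * T^(p-1)` for `0 ≤ x ≤ T`, `1 ≤ p`. -/
lemma rpow_le_mul_rpow_pred {x T p : ℝ} (hx : 0 ≤ x) (hxT : x ≤ T) (hp : 1 ≤ p) :
    x ^ p ≤ x * T ^ (p - 1) := by
  rcases eq_or_lt_of_le hx with h0 | h0
  · rw [← h0, Real.zero_rpow (by linarith), zero_mul]
  · calc x ^ p = x ^ (1 + (p - 1)) := by ring_nf
    _ = x ^ (1:ℝ) * x ^ (p - 1) := Real.rpow_add h0 _ _
    _ ≤ x ^ (1:ℝ) * T ^ (p - 1) := by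
        refine mul_le_mul_of_nonneg_left ?_ (Real.rpow_nonneg hx 1)
        exact Real.rpow_le_rpow hx hxT (by linarith)
    _ = x * T ^ (p - 1) := by rw [Real.rpow_one]

/-- S1 : sum of p-th powers is at most p-th power of sum. -/
lemma sum_rpow_le_rpow_sum {ι : Type*} (s : Finset ι) (f : ι → ℝ) (hf : ∀ i ∈ s, 0 ≤ f i)
    {p : ℝ} (hp : 1 ≤ p) :
    ∑ i ∈ s, f i ^ p ≤ (∑ i ∈ s, f i) ^ p := by
  set T := ∑ i ∈ s, f i with hT
  have hT0 : 0 ≤ T := Finset.sum_nonneg hf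
  have h1 : ∑ i ∈ s, f i ^ p ≤ ∑ i ∈ s, f i * T ^ (p - 1) := by
    refine Finset.sum_le_sum fun i hi => ?_
    exact rpow_le_mul_rpow_pred (hf i hi) (Finset.single_le_sum hf hi) hp
  rw [← Finset.sum_mul] at h1
  rcases eq_or_lt_of_le hT0 with h0 | h0
  · have hall : ∀ i ∈ s, f i = 0 := by
      intro i hi
      have hs0 : ∑ i ∈ s, f i = 0 := by rw [← hT, ← h0]
      exact (Finset.sum_eq_zero_iff_of_nonneg hf).1 hs0 i hi
    have : ∑ i ∈ s, f i ^ p = 0 := Finset.sum_eq_zero fun i hi => by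
      rw [hall i hi, Real.zero_rpow (by linarith)]
    rw [this, ← h0, Real.zero_rpow (by linarith)]
  · calc ∑ i ∈ s, f i ^ p ≤ T * T ^ (p - 1) := h1
    _ = T ^ (1:ℝ) * T ^ (p-1) := by rw [Real.rpow_one]
    _ = T ^ p := by rw [← Real.rpow_add h0]; ring_nf

/-- S2 : subadditivity of `t ↦ t^(1/p)` on nonnegative reals, `0 ≤ z ≤ 1`. -/
lemma rpow_add_le_add_rpow_real {x y z : ℝ} (hx : 0 ≤ x) (hy : 0 ≤ y)
    (hz0 : 0 ≤ z) (hz1 : z ≤ 1) : (x + y) ^ z ≤ x ^ z + y ^ z := by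
  have := NNReal.rpow_add_le_add_rpow x.toNNReal y.toNNReal hz0 hz1
  have hco : ((x.toNNReal + y.toNNReal : ℝ≥0) : ℝ) = x + y := by
    simp [Real.coe_toNNReal _ hx, Real.coe_toNNReal _ hy]
  calc (x + y) ^ z = (((x.toNNReal + y.toNNReal : ℝ≥0) : ℝ)) ^ z := by rw [hco]
    _ = (((x.toNNReal + y.toNNReal : ℝ≥0) ^ z : ℝ≥0) : ℝ) := by
        rw [NNReal.coe_rpow]
    _ ≤ ((x.toNNReal ^ z + y.toNNReal ^ z : ℝ≥0) : ℝ) := by exact_mod_cast this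
    _ = x ^ z + y ^ z := by
        push_cast [NNReal.coe_rpow, Real.coe_toNNReal _ hx, Real.coe_toNNReal _ hy]
        ring

/-- S3 : splitting inequality. -/
lemma add_rpow_le_split {x y ε p : ℝ} (hx : 0 ≤ x) (hy : 0 ≤ y) (hε : 0 < ε) (hp : 1 ≤ p) :
    (x + y) ^ p ≤ (1 + ε) ^ p * x ^ p + (1 + ε⁻¹) ^ p * y ^ p := by
  have hp0 : (0:ℝ) ≤ p := by linarith
  rcases le_or_gt y (ε * x) with h | h
  · have h1 : x + y ≤ (1 + ε) * x := by nlinarith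
    calc (x + y) ^ p ≤ ((1 + ε) * x) ^ p :=
          Real.rpow_le_rpow (by linarith) h1 hp0
      _ = (1 + ε) ^ p * x ^ p := Real.mul_rpow (by positivity) hx
      _ ≤ _ := by
          have : (0:ℝ) ≤ (1 + ε⁻¹) ^ p * y ^ p := by positivity
          linarith
  · have hx' : x ≤ ε⁻¹ * y := by
      rw [← mul_le_mul_iff_of_pos_left hε]
      calc ε * x ≤ y := le_of_lt h
        _ = ε * (ε⁻¹ * y) := by field_simp
    have h1 : x + y ≤ (1 + ε⁻¹) * y := by nlinarith
    calc (x + y) ^ p ≤ ((1 + ε⁻¹) * y) ^ p :=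
          Real.rpow_le_rpow (by linarith) h1 hp0
      _ = (1 + ε⁻¹) ^ p * y ^ p := Real.mul_rpow (by positivity) hy
      _ ≤ _ := by
          have : (0:ℝ) ≤ (1 + ε) ^ p * x ^ p := by positivity
          linarith


/-- S5 : strict inequality when two entries are positive. -/
lemma sum_rpow_lt_rpow_sum {ι : Type*} [Fintype ι] [DecidableEq ι] (c : ι → ℝ) (hc : ∀ k, 0 ≤ c k)
    {i j : ι} (hij : i ≠ j) (hi : 0 < c i) (hj : 0 < c j) {p : ℝ} (hp : 1 < p) :
    ∑ k, c k ^ p < (∑ k, c k) ^ p := by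
  set T := ∑ k, c k with hT
  have hiT : c i + c j ≤ T := by
    rw [hT]
    have := Finset.add_sum_erase Finset.univ c (Finset.mem_univ i)
    rw [← this]
    have hj' : j ∈ Finset.univ.erase i := Finset.mem_erase.2 ⟨hij.symm, Finset.mem_univ j⟩
    have := Finset.single_le_sum (f := c) (fun k _ => hc k) hj'
    linarith
  have hciT : c i < T := by linarith
  have hT0 : 0 < T := by linarith
  have hstrict : c i ^ p < c i * T ^ (p - 1) := by
    calc c i ^ p = c i ^ (1 + (p-1)) := by ring_nf
      _ = c i ^ (1:ℝ) * c i ^ (p-1) := Real.rpow_add hi _ _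
      _ = c i * c i ^ (p-1) := by rw [Real.rpow_one]
      _ < c i * T ^ (p-1) := by
          refine mul_lt_mul_of_pos_left ?_ hi
          exact Real.rpow_lt_rpow (hc i) hciT (by linarith)
  have hrest : ∑ k ∈ Finset.univ.erase i, c k ^ p ≤
      ∑ k ∈ Finset.univ.erase i, c k * T ^ (p - 1) := by
    refine Finset.sum_le_sum fun k _ => ?_
    refine rpow_le_mul_rpow_pred (hc k) ?_ (le_of_lt hp)
    exact Finset.single_le_sum (f := c) (fun k _ => hc k) (Finset.mem_univ k)
  have hsplit : ∑ k, c k ^ p = c i ^ p + ∑ k ∈ Finset.univ.erase i, c k ^ p :=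
    (Finset.add_sum_erase Finset.univ (fun k => c k ^ p) (Finset.mem_univ i)).symm
  have hsplit2 : (∑ k, c k * T ^ (p-1)) = c i * T ^ (p-1) + ∑ k ∈ Finset.univ.erase i, c k * T ^ (p - 1) :=
    (Finset.add_sum_erase Finset.univ (fun k => c k * T ^ (p-1)) (Finset.mem_univ i)).symm
  have : ∑ k, c k ^ p < ∑ k, c k * T ^ (p-1) := by
    rw [hsplit, hsplit2]
    exact add_lt_add_of_lt_of_le hstrict hrest
  calc ∑ k, c k ^ p < ∑ k, c k * T ^ (p-1) := this
    _ = T * T ^ (p-1) := by rw [← Finset.sum_mul]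
    _ = T ^ (1:ℝ) * T ^ (p-1) := by rw [Real.rpow_one]
    _ = T ^ p := by rw [← Real.rpow_add hT0]; ring_nf


/-- The key geometric lemma: under the second structural condition there is a
uniform gain in the power-mean inequality along tuples from `W`. -/
lemma geom_lemma (m l : ℕ) (hm : 3 ≤ m) (hl : 1 ≤ l)
    (W : Submodule ℝ (Fin m → EuclideanSpace ℝ (Fin l)))
    (hWV : ∀ b ∈ W, ∑ j : Fin m, b j = 0)
    (hW : ∀ (v : Fin m → ℝ) (a : EuclideanSpace ℝ (Fin l)),
      (∑ j, v j = 0) → (∃ j₀ c, ∀ j, j ≠ j₀ → v j = c) →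
      (fun j => v j • a) ∈ W → (fun j => v j • a) = 0)
    (p : ℝ) (hp : 1 < p) :
    ∃ θ : ℝ, 0 < θ ∧ θ < 1 ∧
      ∀ (A : EuclideanSpace ℝ (Fin l)) (b : Fin m → EuclideanSpace ℝ (Fin l)), b ∈ W →
        ∑ j, ‖A + b j‖ ^ p ≤ θ * (∑ j, ‖A + b j‖) ^ p := by
  have hp0 : (0:ℝ) < p := lt_trans one_pos hp
  have hm0 : 0 < m := by omega
  have hmR : (0:ℝ) < m := by exact_mod_cast hm0
  set E := EuclideanSpace ℝ (Fin l)
  -- numerator and denominator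
  set sden : E × (Fin m → E) → ℝ := fun z => ∑ j, ‖z.1 + z.2 j‖ with hsden
  set num : E × (Fin m → E) → ℝ := fun z => ∑ j, ‖z.1 + z.2 j‖ ^ p with hnumdef
  set den : E × (Fin m → E) → ℝ := fun z => (sden z) ^ p with hdendef
  set C : Set (E × (Fin m → E)) := Metric.sphere 0 1 ∩ {z | z.2 ∈ W} with hCdef
  -- basic facts
  have hsden_nonneg : ∀ z, 0 ≤ sden z := fun z => Finset.sum_nonneg fun j _ => norm_nonneg _
  have hzero_of_sden : ∀ z, z.2 ∈ W → sden z = 0 → z = 0 := by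
    intro z hzW h0
    have hall : ∀ j : Fin m, ‖z.1 + z.2 j‖ = 0 := by
      intro j
      have := (Finset.sum_eq_zero_iff_of_nonneg (fun j _ => norm_nonneg (z.1 + z.2 j))).1 h0 j
        (Finset.mem_univ j)
      exact this
    have hbj : ∀ j : Fin m, z.2 j = -z.1 := by
      intro j
      have := norm_eq_zero.1 (hall j)
      linear_combination (norm := abel) this
    have hsum0 : ∑ j : Fin m, z.2 j = 0 := hWV _ hzW
    have hsum1 : ∑ j : Fin m, z.2 j = (m:ℕ) • (-z.1) := by
      rw [Finset.sum_congr rfl fun j _ => hbj j]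
      simp [Finset.card_univ]
    have hz1 : z.1 = 0 := by
      rw [hsum0] at hsum1
      have : (m:ℕ) • z.1 = 0 := by
        have := hsum1.symm
        rw [smul_neg] at this
        simpa [neg_eq_zero] using this
      have hmn : (m:ℕ) ≠ 0 := by omega
      rw [← Nat.cast_smul_eq_nsmul ℝ] at this
      exact (smul_eq_zero.1 this).resolve_left (by exact_mod_cast hmn)
    have hz2 : z.2 = 0 := by
      funext j
      rw [hbj j, hz1, neg_zero]; rfl
    exact Prod.ext hz1 hz2
  have hden_pos : ∀ z ∈ C, 0 < sden z := by
    intro z hz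
    rcases lt_or_eq_of_le (hsden_nonneg z) with h | h
    · exact h
    · exfalso
      have hz0 : z = 0 := hzero_of_sden z hz.2 h.symm
      have : ‖z‖ = 1 := mem_sphere_zero_iff_norm.1 hz.1
      rw [hz0] at this
      simp at this
  -- compactness and nonemptiness
  have hWclosed : IsClosed ((W : Set (Fin m → E))) := Submodule.closed_of_finiteDimensional W
  have hCcompact : IsCompact C :=
    (isCompact_sphere (0 : E × (Fin m → E)) 1).inter_right (hWclosed.preimage continuous_snd)
  have hA1 : ∃ A : E, ‖A‖ = 1 := by
    refine ⟨EuclideanSpace.single (⟨0, by omega⟩ : Fin l) (1:ℝ), ?_⟩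
    rw [EuclideanSpace.norm_single]; norm_num
  obtain ⟨A₁, hA₁⟩ := hA1
  have hz₁ : ((A₁, 0) : E × (Fin m → E)) ∈ C := by
    constructor
    · rw [mem_sphere_zero_iff_norm, Prod.norm_def]
      simp [hA₁]
    · exact W.zero_mem
  -- continuity
  have hnorm_cont : ∀ j : Fin m, Continuous fun z : E × (Fin m → E) => ‖z.1 + z.2 j‖ :=
    fun j => by fun_prop
  have hnum_cont : Continuous num :=
    continuous_finset_sum _ fun j _ => (hnorm_cont j).rpow_const fun z => Or.inr (le_of_lt hp0)
  have hsden_cont : Continuous sden := continuous_finset_sum _ fun j _ => hnorm_cont j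
  have hden_cont : Continuous den := hsden_cont.rpow_const fun z => Or.inr (le_of_lt hp0)
  have hhcont : ContinuousOn (fun z => num z / den z) C := by
    refine hnum_cont.continuousOn.div hden_cont.continuousOn ?_
    intro z hz
    exact ne_of_gt (Real.rpow_pos_of_pos (hden_pos z hz) p)
  obtain ⟨z₀, hz₀C, hmax⟩ := hCcompact.exists_isMaxOn ⟨(A₁, 0), hz₁⟩ hhcont
  set θ₀ : ℝ := num z₀ / den z₀ with hθ₀def
  have hden₀pos : 0 < den z₀ := Real.rpow_pos_of_pos (hden_pos z₀ hz₀C) p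
  -- θ₀ < 1
  have hθ₀lt : θ₀ < 1 := by
    rw [hθ₀def, div_lt_one hden₀pos]
    set c : Fin m → ℝ := fun j => ‖z₀.1 + z₀.2 j‖ with hcdef
    have hcnn : ∀ j, 0 ≤ c j := fun j => norm_nonneg _
    by_cases htwo : ∃ i j : Fin m, i ≠ j ∧ 0 < c i ∧ 0 < c j
    · obtain ⟨i, j, hij, hi, hj⟩ := htwo
      exact sum_rpow_lt_rpow_sum c hcnn hij hi hj hp
    · exfalso
      push_neg at htwo
      have hspos : 0 < ∑ j, c j := hden_pos z₀ hz₀C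
      have hex : ∃ j, 0 < c j := by
        by_contra h'
        push_neg at h'
        have : ∑ j, c j ≤ 0 := Finset.sum_nonpos fun j _ => h' j
        linarith
      obtain ⟨j₀, hj₀⟩ := hex
      have hothers : ∀ j, j ≠ j₀ → c j = 0 := by
        intro j hj
        have h1 : c j ≤ 0 := htwo j₀ j (Ne.symm hj) hj₀
        exact le_antisymm h1 (hcnn j)
      -- the values on all children except one coincide with -A
      set A : E := z₀.1
      have hbj : ∀ j, j ≠ j₀ → z₀.2 j = -A := by
        intro j hj
        have h0 : ‖z₀.1 + z₀.2 j‖ = 0 := hothers j hj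
        have := norm_eq_zero.1 h0
        linear_combination (norm := abel) this
      have hsum0 : ∑ j : Fin m, z₀.2 j = 0 := hWV _ hz₀C.2
      set v : Fin m → ℝ := fun j => if j = j₀ then ((m:ℝ) - 1) else -1 with hvdef
      have hcard : (Finset.univ.erase j₀).card = m - 1 := by
        rw [Finset.card_erase_of_mem (Finset.mem_univ j₀), Finset.card_univ, Fintype.card_fin]
      have hcastm : ((m - 1 : ℕ) : ℝ) = (m:ℝ) - 1 := by
        have : (1:ℕ) ≤ m := by omega
        push_cast [Nat.cast_sub this]
        ring
      have herase_sum : ∀ (f : Fin m → ℝ), (∀ j, j ≠ j₀ → f j = -1) →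
          ∑ j ∈ Finset.univ.erase j₀, f j = -((m:ℝ) - 1) := by
        intro f hf
        rw [Finset.sum_congr rfl fun j hj => hf j (Finset.mem_erase.1 hj).1]
        rw [Finset.sum_const, hcard]
        rw [nsmul_eq_mul, hcastm]
        ring
      have hvsum : ∑ j, v j = 0 := by
        have h1 : v j₀ + ∑ j ∈ Finset.univ.erase j₀, v j = ∑ j, v j :=
          Finset.add_sum_erase Finset.univ v (Finset.mem_univ j₀)
        have h2 : ∑ j ∈ Finset.univ.erase j₀, v j = -((m:ℝ) - 1) :=
          herase_sum v fun j hj => if_neg hj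
        have h3 : v j₀ = (m:ℝ) - 1 := if_pos rfl
        rw [← h1, h2, h3]; ring
      -- identify z₀.2 with v ⊗ A
      have hbj₀' : z₀.2 j₀ = ((m:ℝ) - 1) • A := by
        have h1 : z₀.2 j₀ + ∑ j ∈ Finset.univ.erase j₀, z₀.2 j = 0 := by
          rw [Finset.add_sum_erase Finset.univ z₀.2 (Finset.mem_univ j₀)]
          exact hsum0
        have h2 : ∑ j ∈ Finset.univ.erase j₀, z₀.2 j = ((m - 1 : ℕ)) • (-A) := by
          rw [Finset.sum_congr rfl fun j hj => hbj j (Finset.mem_erase.1 hj).1]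
          rw [Finset.sum_const, hcard]
        have h3 : ((m - 1 : ℕ)) • (-A) = -(((m:ℝ) - 1) • A) := by
          rw [← Nat.cast_smul_eq_nsmul ℝ, hcastm, smul_neg]
        rw [h2, h3] at h1
        linear_combination (norm := abel) h1
      have hfun : (fun j => v j • A) = z₀.2 := by
        funext j
        by_cases hj : j = j₀
        · rw [hj]
          rw [show v j₀ = (m:ℝ) - 1 from if_pos rfl, hbj₀']
        · rw [show v j = -1 from if_neg hj, hbj j hj, neg_one_smul]
      have hWapp : (fun j => v j • A) = 0 :=
        hW v A hvsum ⟨j₀, -1, fun j hj => if_neg hj⟩ (by rw [hfun]; exact hz₀C.2)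
      have hz₂0 : z₀.2 = 0 := by rw [← hfun, hWapp]
      have hA0 : A = 0 := by
        obtain ⟨j₁, hj₁⟩ := Fintype.exists_ne_of_one_lt_card
          (by rw [Fintype.card_fin]; omega : 1 < Fintype.card (Fin m)) j₀
        have := congrFun hWapp j₁
        rw [show v j₁ = -1 from if_neg hj₁, neg_one_smul] at this
        have : A = 0 := by
          have h := this
          simpa [neg_eq_zero] using h
        exact this
      have hz0 : z₀ = 0 := Prod.ext hA0 hz₂0
      have : ‖z₀‖ = 1 := mem_sphere_zero_iff_norm.1 hz₀C.1
      rw [hz0] at this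
      simp at this
  -- global bound on C
  set θ : ℝ := max θ₀ 2⁻¹ with hθdef
  have hθpos : 0 < θ := lt_of_lt_of_le (by norm_num) (le_max_right _ _)
  have hθlt1 : θ < 1 := max_lt hθ₀lt (by norm_num)
  have hboundC : ∀ z ∈ C, num z ≤ θ * den z := by
    intro z hz
    have hdz : 0 < den z := Real.rpow_pos_of_pos (hden_pos z hz) p
    have h1 : num z / den z ≤ θ₀ := hmax hz
    have h2 : num z ≤ θ₀ * den z := by
      rw [div_le_iff₀ hdz] at h1
      linarith [h1]
    calc num z ≤ θ₀ * den z := h2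
      _ ≤ θ * den z := mul_le_mul_of_nonneg_right (le_max_left _ _) (le_of_lt hdz)
  refine ⟨θ, hθpos, hθlt1, ?_⟩
  intro A b hb
  by_cases hz : (A, b) = (0 : E × (Fin m → E))
  · have hA0 : A = 0 := congrArg Prod.fst hz
    have hb0 : b = 0 := congrArg Prod.snd hz
    have : ∀ j : Fin m, ‖A + b j‖ = 0 := by
      intro j; rw [hA0, hb0]; simp
    rw [Finset.sum_congr rfl fun j _ => by rw [this j, Real.zero_rpow (ne_of_gt hp0)],
      Finset.sum_congr rfl fun j _ => this j]
    simp [Real.zero_rpow (ne_of_gt hp0)]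
  · set r : ℝ := ‖((A, b) : E × (Fin m → E))‖ with hrdef
    have hr : 0 < r := norm_pos_iff.2 hz
    have hrinv : 0 < r⁻¹ := inv_pos.2 hr
    set z' : E × (Fin m → E) := (r⁻¹ • A, r⁻¹ • b) with hz'def
    have hz'C : z' ∈ C := by
      constructor
      · rw [mem_sphere_zero_iff_norm]
        have : z' = r⁻¹ • ((A, b) : E × (Fin m → E)) := rfl
        rw [this, norm_smul, norm_inv, Real.norm_of_nonneg (le_of_lt hr)]
        field_simp
        exact hrdef.symm
      · exact W.smul_mem _ hb
    have hkey := hboundC z' hz'C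
    have hc' : ∀ j : Fin m, ‖z'.1 + z'.2 j‖ = r⁻¹ * ‖A + b j‖ := by
      intro j
      have : z'.1 + z'.2 j = r⁻¹ • (A + b j) := by
        rw [hz'def, smul_add]; rfl
      rw [this, norm_smul, norm_inv, Real.norm_of_nonneg (le_of_lt hr)]
    have hnum' : num z' = (r⁻¹) ^ p * ∑ j, ‖A + b j‖ ^ p := by
      rw [hnumdef, Finset.mul_sum]
      refine Finset.sum_congr rfl fun j _ => ?_
      rw [hc' j, Real.mul_rpow (le_of_lt hrinv) (norm_nonneg _)]
    have hden' : den z' = (r⁻¹) ^ p * (∑ j, ‖A + b j‖) ^ p := by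
      rw [hdendef, hsden]
      have : ∑ j, ‖z'.1 + z'.2 j‖ = r⁻¹ * ∑ j, ‖A + b j‖ := by
        rw [Finset.mul_sum]
        exact Finset.sum_congr rfl fun j _ => hc' j
      simp only []
      rw [this, Real.mul_rpow (le_of_lt hrinv) (Finset.sum_nonneg fun j _ => norm_nonneg _)]
    rw [hnum', hden'] at hkey
    have hrp : 0 < (r⁻¹) ^ p := Real.rpow_pos_of_pos hrinv p
    have hkey' : (r⁻¹)^p * (∑ j, ‖A + b j‖ ^ p) ≤ (r⁻¹)^p * (θ * (∑ j, ‖A + b j‖) ^ p) := by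
      calc (r⁻¹)^p * (∑ j, ‖A + b j‖ ^ p) ≤ θ * ((r⁻¹)^p * (∑ j, ‖A + b j‖) ^ p) := hkey
        _ = (r⁻¹)^p * (θ * (∑ j, ‖A + b j‖) ^ p) := by ring
    exact le_of_mul_le_mul_left hkey' hrp

end MartingaleAux

namespace MartingaleAux

/-- Extension of a word by zeros. -/
def wext (m n : ℕ) [NeZero m] (w : Fin n → Fin m) : ℕ → Fin m :=
  fun i => if h : i < n then w ⟨i, h⟩ else 0

lemma wext_lt {m : ℕ} [NeZero m] {n : ℕ} (w : Fin n → Fin m) {i : ℕ} (h : i < n) :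
    wext m n w i = w ⟨i, h⟩ := dif_pos h

lemma cyl_measurable (m n : ℕ) (w : Fin n → Fin m) :
    MeasurableSet (MartingaleModel.cyl m n w) := by
  have : MartingaleModel.cyl m n w = ⋂ i : Fin n, {x : ℕ → Fin m | x (i:ℕ) = w i} := by
    ext x; simp [MartingaleModel.cyl, Set.mem_iInter]
  rw [this]
  refine MeasurableSet.iInter fun i => ?_
  have : {x : ℕ → Fin m | x (i:ℕ) = w i} = (fun x : ℕ → Fin m => x (i:ℕ)) ⁻¹' {w i} := rfl
  rw [this]
  exact measurable_pi_apply (i:ℕ) (measurableSet_singleton (w i))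

/-- Master lemma: the integral of a function determined by the first `n` coordinates
is the normalized sum of its values over words. -/
lemma lintegral_adapted {m : ℕ} [NeZero m] (P : Measure (ℕ → Fin m))
    (hPcyl : ∀ (n : ℕ) (w : Fin n → Fin m), P (MartingaleModel.cyl m n w) = ((m : ℝ≥0∞))⁻¹ ^ n)
    (n : ℕ) (g : (ℕ → Fin m) → ℝ≥0∞)
    (hg : ∀ x y, (∀ i, i < n → x i = y i) → g x = g y) :
    ∫⁻ x, g x ∂P = ∑ w : Fin n → Fin m, ((m : ℝ≥0∞))⁻¹ ^ n * g (wext m n w) := by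
  have hrep : ∀ x, g x =
      ∑ w : Fin n → Fin m, Set.indicator (MartingaleModel.cyl m n w)
        (fun _ => g (wext m n w)) x := by
    intro x
    rw [Finset.sum_eq_single (fun i : Fin n => x (i:ℕ))]
    · rw [Set.indicator_of_mem (by intro i; rfl)]
      refine hg x _ fun i hi => ?_
      rw [wext_lt _ hi]
    · intro w _ hw
      rw [Set.indicator_of_notMem]
      intro hxw
      exact hw (funext fun i => (hxw i).symm)
    · intro h
      exact absurd (Finset.mem_univ _) h
  calc ∫⁻ x, g x ∂P
      = ∫⁻ x, ∑ w : Fin n → Fin m, Set.indicator (MartingaleModel.cyl m n w)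
          (fun _ => g (wext m n w)) x ∂P := lintegral_congr hrep
    _ = ∑ w : Fin n → Fin m, ∫⁻ x, Set.indicator (MartingaleModel.cyl m n w)
          (fun _ => g (wext m n w)) x ∂P :=
        lintegral_finset_sum _ fun w _ => measurable_const.indicator (cyl_measurable m n w)
    _ = ∑ w : Fin n → Fin m, ((m : ℝ≥0∞))⁻¹ ^ n * g (wext m n w) := by
        refine Finset.sum_congr rfl fun w _ => ?_
        rw [lintegral_indicator (cyl_measurable m n w), setLIntegral_const, hPcyl, mul_comm]

/-- Reindexing a sum over words of length `n+1` as a double sum. -/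
lemma sum_words_succ {m : ℕ} [NeZero m] (n : ℕ) (h : (ℕ → Fin m) → ℝ)
    (hdep : ∀ x y, (∀ i, i < n + 1 → x i = y i) → h x = h y) :
    ∑ u : Fin (n+1) → Fin m, h (wext m (n+1) u)
      = ∑ w : Fin n → Fin m, ∑ j : Fin m, h (Function.update (wext m n w) n j) := by
  have hbij : Function.Bijective
      (fun wj : (Fin n → Fin m) × Fin m => (Fin.snoc wj.1 wj.2 : Fin (n+1) → Fin m)) := by
    constructor
    · intro a b hab
      simp only [] at hab
      have h1 : Fin.init (Fin.snoc a.1 a.2 : Fin (n+1) → Fin m) =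
          Fin.init (Fin.snoc b.1 b.2 : Fin (n+1) → Fin m) := congrArg Fin.init hab
      have h2 : (Fin.snoc a.1 a.2 : Fin (n+1) → Fin m) (Fin.last n) =
          (Fin.snoc b.1 b.2 : Fin (n+1) → Fin m) (Fin.last n) := congrFun hab _
      rw [Fin.init_snoc, Fin.init_snoc] at h1
      rw [Fin.snoc_last, Fin.snoc_last] at h2
      exact Prod.ext h1 h2
    · intro u
      exact ⟨(Fin.init u, u (Fin.last n)), Fin.snoc_init_self u⟩
  have key : ∀ (w : Fin n → Fin m) (j : Fin m),
      h (wext m (n+1) (Fin.snoc w j)) = h (Function.update (wext m n w) n j) := by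
    intro w j
    refine hdep _ _ fun i hi => ?_
    by_cases hi' : i < n
    · have h1 : wext m (n+1) (Fin.snoc w j) i = w ⟨i, hi'⟩ := by
        rw [wext_lt _ (by omega : i < n + 1)]
        have hcast : (⟨i, by omega⟩ : Fin (n+1)) = Fin.castSucc ⟨i, hi'⟩ := rfl
        rw [hcast, Fin.snoc_castSucc]
      have h2 : Function.update (wext m n w) n j i = w ⟨i, hi'⟩ := by
        rw [Function.update_of_ne (by omega : i ≠ n), wext_lt _ hi']
      rw [h1, h2]
    · have hin : i = n := by omega
      subst hin
      have h1 : wext m (i+1) (Fin.snoc w j) i = j := by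
        rw [wext_lt _ (by omega : i < i + 1)]
        have hcast : (⟨i, by omega⟩ : Fin (i+1)) = Fin.last i := rfl
        rw [hcast, Fin.snoc_last]
      have h2 : Function.update (wext m i w) i j i = j := Function.update_self _ _ _
      rw [h1, h2]
  calc ∑ u : Fin (n+1) → Fin m, h (wext m (n+1) u)
      = ∑ wj : (Fin n → Fin m) × Fin m, h (wext m (n+1) (Fin.snoc wj.1 wj.2)) :=
        (Fintype.sum_bijective _ hbij _ _ fun wj => rfl).symm
    _ = ∑ w : Fin n → Fin m, ∑ j : Fin m, h (Function.update (wext m n w) n j) := by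
        rw [Fintype.sum_prod_type]
        exact Finset.sum_congr rfl fun w _ => Finset.sum_congr rfl fun j _ => key w j

end MartingaleAux

set_option maxHeartbeats 2000000 in
/-- **Besov embedding.** If `W ⊆ V^ℓ` satisfies the second structural condition and
`p ∈ (1,∞)`, then there is `C = C(m,ℓ,W,p)` such that every `F ∈ 𝔚` satisfies
`∑_{n=1}^∞ m^{-((p-1)/p)n} ‖f_n‖_{L_p(P)} ≤ C·‖F‖_{L_1}`; i.e. `I_{(p-1)/p}` maps `𝔚`
into the martingale Besov space `B_p^{0,1}`, equivalently `𝔚 ↪ B_p^{-(p-1)/p,1}`. -/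
theorem martingale_besov_embedding (m l : ℕ) (hm : 3 ≤ m) (hl : 1 ≤ l)
    (P : Measure (ℕ → Fin m)) (hP : IsProbabilityMeasure P)
    (hPcyl : ∀ (n : ℕ) (w : Fin n → Fin m), P (cyl m n w) = ((m : ℝ≥0∞))⁻¹ ^ n)
    (W : Submodule ℝ (Fin m → EuclideanSpace ℝ (Fin l)))
    (hWV : ∀ b ∈ W, ∑ j : Fin m, b j = 0)
    (hW : SecondStructural m l W) (p : ℝ) (hp : 1 < p) :
    ∃ C : ℝ≥0, ∀ F : ℕ → (ℕ → Fin m) → EuclideanSpace ℝ (Fin l),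
      IsMartingaleFun m F → (⨆ n, eLpNorm (F n) 1 P) < ⊤ → MemW m l W F →
      ∑' n : ℕ, ENNReal.ofReal ((m : ℝ) ^ (-(((p - 1) / p) * (n + 1 : ℕ)))) *
          eLpNorm (fun x => F (n + 1) x - F n x) (ENNReal.ofReal p) P ≤
        C * ⨆ n, eLpNorm (F n) 1 P := by
  haveI : NeZero m := ⟨by omega⟩
  have hp0 : (0:ℝ) < p := lt_trans one_pos hp
  have hp1 : (1:ℝ) ≤ p := le_of_lt hp
  have hpinv0 : (0:ℝ) < p⁻¹ := inv_pos.2 hp0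
  have hpinv1 : p⁻¹ ≤ 1 := by
    rw [inv_le_one_iff₀]; right; exact hp1
  have hmR : (0:ℝ) < m := by exact_mod_cast (by omega : 0 < m)
  have hmR1 : (1:ℝ) ≤ m := by exact_mod_cast (by omega : 1 ≤ m)
  have hmne : (m:ℝ) ≠ 0 := ne_of_gt hmR
  -- the geometric lemma
  obtain ⟨θ, hθ0, hθ1, hA⟩ := MartingaleAux.geom_lemma m l hm hl W hWV hW p hp
  -- constants
  set τ : ℝ := (1 + θ) / 2 with hτdef
  have hθτ : θ < τ := by rw [hτdef]; linarith
  have hτ1 : τ < 1 := by rw [hτdef]; linarith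
  have hτ0 : 0 < τ := by rw [hτdef]; linarith
  set ε : ℝ := (τ / θ) ^ p⁻¹ - 1 with hεdef
  have hτθ1 : 1 < τ / θ := (one_lt_div hθ0).2 hθτ
  have hε0 : 0 < ε := by
    rw [hεdef, sub_pos]
    exact (Real.one_lt_rpow_iff_of_pos (by positivity)).2 (Or.inl ⟨hτθ1, hpinv0⟩)
  have h1ε : (1 + ε) = (τ / θ) ^ p⁻¹ := by rw [hεdef]; ring
  have hθε : θ * (1 + ε) ^ p = τ := by
    rw [h1ε, ← Real.rpow_mul (by positivity : (0:ℝ) ≤ τ / θ) p⁻¹ p,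
      inv_mul_cancel₀ (ne_of_gt hp0), Real.rpow_one,
      mul_div_cancel₀ τ (ne_of_gt hθ0)]
  set K : ℝ := θ * (1 + ε⁻¹) ^ p with hKdef
  have hK0 : 0 ≤ K := by positivity
  set σ : ℝ := τ ^ p⁻¹ with hσdef
  have hσ0 : 0 < σ := Real.rpow_pos_of_pos hτ0 _
  have hσ1 : σ < 1 := Real.rpow_lt_one (le_of_lt hτ0) hτ1 hpinv0
  set K' : ℝ := K ^ p⁻¹ with hK'def
  have hK'0 : 0 ≤ K' := Real.rpow_nonneg hK0 _
  set c₀ : ℝ := 4 * (1 + K') / (1 - σ) with hc₀def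
  have hc₀0 : 0 ≤ c₀ := by
    apply div_nonneg (by linarith) (by linarith)
  refine ⟨c₀.toNNReal, ?_⟩
  intro F hmart hF1 hFW
  obtain ⟨hadapt, hmartid⟩ := hmart
  -- word sums
  set κ : ℕ → ℝ := fun n => ((m:ℝ)⁻¹) ^ n with hκdef
  have hκ0 : ∀ n, 0 < κ n := fun n => by positivity
  set a : ℕ → ℝ := fun n => ∑ w : Fin n → Fin m, κ n * ‖F n (MartingaleAux.wext m n w)‖
    with hadef
  set Q : ℕ → ℝ := fun n => ∑ w : Fin n → Fin m,
      (κ n * ‖F n (MartingaleAux.wext m n w)‖) ^ p with hQdef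
  set φ : ℕ → ℝ := fun n => (Q n) ^ p⁻¹ with hφdef
  have ha0 : ∀ n, 0 ≤ a n := fun n =>
    Finset.sum_nonneg fun w _ => by positivity
  have hQ0 : ∀ n, 0 ≤ Q n := fun n =>
    Finset.sum_nonneg fun w _ => Real.rpow_nonneg (by positivity) _
  have hφ0 : ∀ n, 0 ≤ φ n := fun n => Real.rpow_nonneg (hQ0 n) _

  -- L¹ norms as word sums
  have hL1 : ∀ n, eLpNorm (F n) 1 P = ENNReal.ofReal (a n) := by
    intro n
    rw [eLpNorm_one_eq_lintegral_enorm]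
    simp only [enorm_eq_nnnorm]
    rw [MartingaleAux.lintegral_adapted P hPcyl n (fun x => (‖F n x‖₊ : ℝ≥0∞))
      (fun x y hxy => by simp only [hadapt n x y hxy])]
    have hterm : ∀ w : Fin n → Fin m,
        ((m:ℝ≥0∞))⁻¹ ^ n * (‖F n (MartingaleAux.wext m n w)‖₊ : ℝ≥0∞)
          = ENNReal.ofReal (κ n * ‖F n (MartingaleAux.wext m n w)‖) := by
      intro w
      rw [ENNReal.ofReal_mul (by positivity), ofReal_norm, enorm_eq_nnnorm]
      congr 1
      rw [hκdef]
      rw [ENNReal.ofReal_pow (by positivity), ENNReal.ofReal_inv_of_pos hmR,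
        ENNReal.ofReal_natCast]
    rw [Finset.sum_congr rfl fun w _ => hterm w,
      ← ENNReal.ofReal_sum_of_nonneg (fun w _ => by positivity)]
  set T : ℝ≥0∞ := ⨆ n, eLpNorm (F n) 1 P with hTdef
  have hTne : T ≠ ⊤ := ne_of_lt hF1
  set S : ℝ := T.toReal with hSdef
  have hS0 : 0 ≤ S := ENNReal.toReal_nonneg
  have haS : ∀ n, a n ≤ S := by
    intro n
    have h1 : ENNReal.ofReal (a n) ≤ T := by
      rw [← hL1 n, hTdef]
      exact le_iSup (fun k => eLpNorm (F k) 1 P) n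
    have h2 := ENNReal.toReal_mono hTne h1
    rwa [ENNReal.toReal_ofReal (ha0 n)] at h2
  -- splitting sums over words of length n+1
  have hsucc_a : ∀ n, a (n+1) = ∑ w : Fin n → Fin m, ∑ j : Fin m,
      κ (n+1) * ‖F (n+1) (Function.update (MartingaleAux.wext m n w) n j)‖ := by
    intro n
    exact MartingaleAux.sum_words_succ n (fun x => κ (n+1) * ‖F (n+1) x‖)
      (fun x y hxy => by simp only [hadapt (n+1) x y hxy])
  have hsucc_Q : ∀ n, Q (n+1) = ∑ w : Fin n → Fin m, ∑ j : Fin m,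
      (κ (n+1) * ‖F (n+1) (Function.update (MartingaleAux.wext m n w) n j)‖) ^ p := by
    intro n
    exact MartingaleAux.sum_words_succ n (fun x => (κ (n+1) * ‖F (n+1) x‖) ^ p)
      (fun x y hxy => by simp only [hadapt (n+1) x y hxy])

  -- key recursion
  have hkey : ∀ n, (a n ≤ a (n+1)) ∧ Q (n+1) ≤ τ * Q n + K * (a (n+1) - a n) ^ p := by
    intro n
    set x₀ : (Fin n → Fin m) → (ℕ → Fin m) := fun w => MartingaleAux.wext m n w with hx₀
    set y : (Fin n → Fin m) → ℝ := fun w => κ n * ‖F n (x₀ w)‖ with hy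
    set γ : (Fin n → Fin m) → ℝ := fun w =>
      ∑ j : Fin m, κ (n+1) * ‖F (n+1) (Function.update (x₀ w) n j)‖ with hγ
    have hy0 : ∀ w, 0 ≤ y w := fun w => by rw [hy]; positivity
    have hγ0 : ∀ w, 0 ≤ γ w := fun w => Finset.sum_nonneg fun j _ => by positivity
    have hκm : κ (n+1) * (m:ℝ) = κ n := by
      rw [hκdef]; simp only [pow_succ]; field_simp
    have hyγ : ∀ w, y w ≤ γ w := by
      intro w
      have h1 : ‖(m:ℝ) • F n (x₀ w)‖ = (m:ℝ) * ‖F n (x₀ w)‖ := by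
        rw [norm_smul, Real.norm_natCast]
      have hnorm : (m:ℝ) * ‖F n (x₀ w)‖
          ≤ ∑ j, ‖F (n+1) (Function.update (x₀ w) n j)‖ := by
        rw [← h1, hmartid n (x₀ w)]
        exact norm_sum_le _ _
      calc y w = κ (n+1) * ((m:ℝ) * ‖F n (x₀ w)‖) := by rw [hy, ← mul_assoc, hκm]
        _ ≤ κ (n+1) * ∑ j, ‖F (n+1) (Function.update (x₀ w) n j)‖ :=
            mul_le_mul_of_nonneg_left hnorm (le_of_lt (hκ0 (n+1)))
        _ = γ w := by rw [hγ, Finset.mul_sum]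
    have hysum : ∑ w, y w = a n := rfl
    have hγsum : ∑ w, γ w = a (n+1) := (hsucc_a n).symm
    have hmono : a n ≤ a (n+1) := by
      rw [← hysum, ← hγsum]
      exact Finset.sum_le_sum fun w _ => hyγ w
    refine ⟨hmono, ?_⟩
    -- geometric lemma per word
    have hgeom : ∀ w, ∑ j : Fin m, (κ (n+1) * ‖F (n+1) (Function.update (x₀ w) n j)‖) ^ p
        ≤ θ * (γ w) ^ p := by
      intro w
      have hb := hFW n (x₀ w)
      have hup : ∀ j, F (n+1) (Function.update (x₀ w) n j)
          = F n (x₀ w) + diffTuple m F n (x₀ w) j := by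
        intro j
        show _ = F n (x₀ w) + (F (n+1) (Function.update (x₀ w) n j) - F n (x₀ w))
        abel
      have h1 : ∑ j : Fin m, ‖F n (x₀ w) + diffTuple m F n (x₀ w) j‖ ^ p
          ≤ θ * (∑ j, ‖F n (x₀ w) + diffTuple m F n (x₀ w) j‖) ^ p := hA _ _ hb
      have h2 : ∀ j : Fin m, ‖F (n+1) (Function.update (x₀ w) n j)‖
          = ‖F n (x₀ w) + diffTuple m F n (x₀ w) j‖ := fun j => by rw [hup j]
      have hκp : (0:ℝ) ≤ κ (n+1) := le_of_lt (hκ0 (n+1))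
      calc ∑ j : Fin m, (κ (n+1) * ‖F (n+1) (Function.update (x₀ w) n j)‖) ^ p
          = ∑ j : Fin m, (κ (n+1)) ^ p * ‖F n (x₀ w) + diffTuple m F n (x₀ w) j‖ ^ p := by
            refine Finset.sum_congr rfl fun j _ => ?_
            rw [h2 j, Real.mul_rpow hκp (norm_nonneg _)]
        _ = (κ (n+1)) ^ p * ∑ j : Fin m, ‖F n (x₀ w) + diffTuple m F n (x₀ w) j‖ ^ p := by
            rw [Finset.mul_sum]
        _ ≤ (κ (n+1)) ^ p * (θ * (∑ j, ‖F n (x₀ w) + diffTuple m F n (x₀ w) j‖) ^ p) :=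
            mul_le_mul_of_nonneg_left h1 (Real.rpow_nonneg hκp _)
        _ = θ * (γ w) ^ p := by
            have hγw : γ w = κ (n+1) * ∑ j, ‖F n (x₀ w) + diffTuple m F n (x₀ w) j‖ := by
              rw [hγ]
              simp only []
              rw [Finset.mul_sum]
              exact Finset.sum_congr rfl fun j _ => by rw [h2 j]
            rw [hγw, Real.mul_rpow hκp (Finset.sum_nonneg fun j _ => norm_nonneg _)]
            ring
    -- sum over words
    have hd0 : ∀ w, 0 ≤ γ w - y w := fun w => sub_nonneg.2 (hyγ w)
    calc Q (n+1)
        = ∑ w : Fin n → Fin m, ∑ j : Fin m,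
            (κ (n+1) * ‖F (n+1) (Function.update (x₀ w) n j)‖) ^ p := hsucc_Q n
      _ ≤ ∑ w, θ * (γ w) ^ p := Finset.sum_le_sum fun w _ => hgeom w
      _ = ∑ w, θ * (y w + (γ w - y w)) ^ p := by
          refine Finset.sum_congr rfl fun w _ => ?_
          ring_nf
      _ ≤ ∑ w, θ * ((1+ε)^p * (y w)^p + (1+ε⁻¹)^p * (γ w - y w)^p) := by
          refine Finset.sum_le_sum fun w _ => ?_
          refine mul_le_mul_of_nonneg_left ?_ (le_of_lt hθ0)
          exact MartingaleAux.add_rpow_le_split (hy0 w) (hd0 w) hε0 hp1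
      _ = (θ * (1+ε)^p) * (∑ w, (y w)^p) + (θ * (1+ε⁻¹)^p) * (∑ w, (γ w - y w)^p) := by
          rw [Finset.mul_sum, Finset.mul_sum, ← Finset.sum_add_distrib]
          refine Finset.sum_congr rfl fun w _ => ?_
          ring
      _ ≤ τ * Q n + K * (a (n+1) - a n) ^ p := by
          have h3 : ∑ w, (y w)^p = Q n := rfl
          have h4 : ∑ w, (γ w - y w)^p ≤ (∑ w, (γ w - y w)) ^ p :=
            MartingaleAux.sum_rpow_le_rpow_sum _ _ (fun w _ => hd0 w) hp1
          have h5 : ∑ w, (γ w - y w) = a (n+1) - a n := by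
            rw [Finset.sum_sub_distrib, hysum, hγsum]
          rw [h3, hθε, ← hKdef]
          have h6 : K * (∑ w, (γ w - y w)^p) ≤ K * (a (n+1) - a n)^p := by
            rw [← h5]
            exact mul_le_mul_of_nonneg_left h4 hK0
          linarith [h6]

  -- φ recursion
  have hφrec : ∀ n, φ (n+1) ≤ σ * φ n + K' * (a (n+1) - a n) := by
    intro n
    have hg0 : 0 ≤ a (n+1) - a n := sub_nonneg.2 (hkey n).1
    calc φ (n+1) ≤ (τ * Q n + K * (a (n+1) - a n)^p) ^ p⁻¹ :=
          Real.rpow_le_rpow (hQ0 _) (hkey n).2 (le_of_lt hpinv0)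
      _ ≤ (τ * Q n) ^ p⁻¹ + (K * (a (n+1) - a n)^p) ^ p⁻¹ :=
          MartingaleAux.rpow_add_le_add_rpow_real (by positivity)
            (by positivity) (le_of_lt hpinv0) hpinv1
      _ = σ * φ n + K' * (a (n+1) - a n) := by
          rw [Real.mul_rpow (le_of_lt hτ0) (hQ0 n),
            Real.mul_rpow hK0 (Real.rpow_nonneg hg0 p),
            ← Real.rpow_mul hg0 p p⁻¹, mul_inv_cancel₀ (ne_of_gt hp0), Real.rpow_one]
  -- partial sums of φ are bounded
  have hφ0S : φ 0 ≤ S := by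
    have h1 : Q 0 ≤ (a 0) ^ p :=
      MartingaleAux.sum_rpow_le_rpow_sum _ _ (fun w _ => by positivity) hp1
    calc φ 0 ≤ ((a 0) ^ p) ^ p⁻¹ := Real.rpow_le_rpow (hQ0 0) h1 (le_of_lt hpinv0)
      _ = a 0 := by
          rw [← Real.rpow_mul (ha0 0) p p⁻¹, mul_inv_cancel₀ (ne_of_gt hp0), Real.rpow_one]
      _ ≤ S := haS 0
  have hΦ : ∀ N, ∑ n ∈ Finset.range N, φ n ≤ (1 + K') * S / (1 - σ) := by
    intro N
    have h1σ : 0 < 1 - σ := by linarith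
    match N with
    | 0 =>
      simp only [Finset.range_zero, Finset.sum_empty]
      positivity
    | Nat.succ M =>
      rw [le_div_iff₀ h1σ]
      have h1 : ∑ n ∈ Finset.range (M+1), φ n
          = (∑ n ∈ Finset.range M, φ (n+1)) + φ 0 := Finset.sum_range_succ' φ M
      have h2 : ∑ n ∈ Finset.range M, φ (n+1)
          ≤ σ * (∑ n ∈ Finset.range M, φ n) + K' * (a M - a 0) := by
        calc ∑ n ∈ Finset.range M, φ (n+1)
            ≤ ∑ n ∈ Finset.range M, (σ * φ n + K' * (a (n+1) - a n)) :=
              Finset.sum_le_sum fun n _ => hφrec n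
          _ = σ * (∑ n ∈ Finset.range M, φ n)
              + K' * (∑ n ∈ Finset.range M, (a (n+1) - a n)) := by
              rw [Finset.sum_add_distrib, Finset.mul_sum, Finset.mul_sum]
          _ = σ * (∑ n ∈ Finset.range M, φ n) + K' * (a M - a 0) := by
              rw [Finset.sum_range_sub a M]
      have h3 : ∑ n ∈ Finset.range M, φ n ≤ ∑ n ∈ Finset.range (M+1), φ n := by
        refine Finset.sum_le_sum_of_subset_of_nonneg
          (Finset.range_subset_range.2 (Nat.le_succ M)) fun n _ _ => hφ0 n
      have h4 : a M - a 0 ≤ S := by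
        have := haS M
        have := ha0 0
        linarith
      have h5 : K' * (a M - a 0) ≤ K' * S := by
        apply mul_le_mul_of_nonneg_left h4 hK'0
      have h6 : σ * (∑ n ∈ Finset.range M, φ n) ≤ σ * (∑ n ∈ Finset.range (M+1), φ n) :=
        mul_le_mul_of_nonneg_left h3 (le_of_lt hσ0)
      nlinarith [h1, h2, h5, h6, hφ0S]
  -- difference sums
  set R : ℕ → ℝ := fun n => ∑ u : Fin (n+1) → Fin m,
      (κ (n+1) * ‖F (n+1) (MartingaleAux.wext m (n+1) u)
        - F n (MartingaleAux.wext m (n+1) u)‖) ^ p with hRdef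
  set ψ : ℕ → ℝ := fun n => (R n) ^ p⁻¹ with hψdef
  have hR0 : ∀ n, 0 ≤ R n := fun n =>
    Finset.sum_nonneg fun u _ => Real.rpow_nonneg (by positivity) _
  have hψ0 : ∀ n, 0 ≤ ψ n := fun n => Real.rpow_nonneg (hR0 n) _
  -- bound ψ by φ
  have hψφ : ∀ n, ψ n ≤ 2 * (φ (n+1) + φ n) := by
    intro n
    have hRb : R n ≤ 2 ^ p * Q (n+1) + 2 ^ p * Q n := by
      have hstep1 : R n ≤ 2 ^ p * Q (n+1)
          + 2 ^ p * ∑ u : Fin (n+1) → Fin m,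
              (κ (n+1) * ‖F n (MartingaleAux.wext m (n+1) u)‖) ^ p := by
        have hterm : ∀ u : Fin (n+1) → Fin m,
            (κ (n+1) * ‖F (n+1) (MartingaleAux.wext m (n+1) u)
              - F n (MartingaleAux.wext m (n+1) u)‖) ^ p
            ≤ 2 ^ p * (κ (n+1) * ‖F (n+1) (MartingaleAux.wext m (n+1) u)‖) ^ p
              + 2 ^ p * (κ (n+1) * ‖F n (MartingaleAux.wext m (n+1) u)‖) ^ p := by
          intro u
          have hd : κ (n+1) * ‖F (n+1) (MartingaleAux.wext m (n+1) u)
              - F n (MartingaleAux.wext m (n+1) u)‖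
              ≤ κ (n+1) * ‖F (n+1) (MartingaleAux.wext m (n+1) u)‖
                + κ (n+1) * ‖F n (MartingaleAux.wext m (n+1) u)‖ := by
            rw [← mul_add]
            exact mul_le_mul_of_nonneg_left (norm_sub_le _ _) (le_of_lt (hκ0 (n+1)))
          calc (κ (n+1) * ‖F (n+1) (MartingaleAux.wext m (n+1) u)
              - F n (MartingaleAux.wext m (n+1) u)‖) ^ p
              ≤ (κ (n+1) * ‖F (n+1) (MartingaleAux.wext m (n+1) u)‖
                + κ (n+1) * ‖F n (MartingaleAux.wext m (n+1) u)‖) ^ p :=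
                Real.rpow_le_rpow (by positivity) hd (le_of_lt hp0)
            _ ≤ (1+1) ^ p * (κ (n+1) * ‖F (n+1) (MartingaleAux.wext m (n+1) u)‖) ^ p
                + (1+1⁻¹) ^ p * (κ (n+1) * ‖F n (MartingaleAux.wext m (n+1) u)‖) ^ p :=
                MartingaleAux.add_rpow_le_split (by positivity) (by positivity) one_pos hp1
            _ = 2 ^ p * (κ (n+1) * ‖F (n+1) (MartingaleAux.wext m (n+1) u)‖) ^ p
                + 2 ^ p * (κ (n+1) * ‖F n (MartingaleAux.wext m (n+1) u)‖) ^ p := by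
                norm_num
        calc R n ≤ ∑ u : Fin (n+1) → Fin m,
            (2 ^ p * (κ (n+1) * ‖F (n+1) (MartingaleAux.wext m (n+1) u)‖) ^ p
              + 2 ^ p * (κ (n+1) * ‖F n (MartingaleAux.wext m (n+1) u)‖) ^ p) :=
            Finset.sum_le_sum fun u _ => hterm u
          _ = 2 ^ p * Q (n+1) + 2 ^ p * ∑ u : Fin (n+1) → Fin m,
              (κ (n+1) * ‖F n (MartingaleAux.wext m (n+1) u)‖) ^ p := by
              rw [Finset.sum_add_distrib, ← Finset.mul_sum, ← Finset.mul_sum]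
      have hstep2 : ∑ u : Fin (n+1) → Fin m,
          (κ (n+1) * ‖F n (MartingaleAux.wext m (n+1) u)‖) ^ p ≤ Q n := by
        have hsp : ∑ u : Fin (n+1) → Fin m,
            (κ (n+1) * ‖F n (MartingaleAux.wext m (n+1) u)‖) ^ p
            = ∑ w : Fin n → Fin m, ∑ j : Fin m,
              (κ (n+1) * ‖F n (Function.update (MartingaleAux.wext m n w) n j)‖) ^ p :=
          MartingaleAux.sum_words_succ n (fun x => (κ (n+1) * ‖F n x‖) ^ p)
            (fun x y hxy => by
              simp only [hadapt n x y (fun i hi => hxy i (by omega))])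
        have hupd : ∀ (w : Fin n → Fin m) (j : Fin m),
            F n (Function.update (MartingaleAux.wext m n w) n j)
              = F n (MartingaleAux.wext m n w) := by
          intro w j
          refine hadapt n _ _ fun i hi => ?_
          exact Function.update_of_ne (by omega) _ _
        have hml : (m:ℝ) * (m:ℝ)⁻¹ ^ p ≤ 1 := by
          have h8 : ((m:ℝ)⁻¹) ^ p ≤ ((m:ℝ)⁻¹) ^ (1:ℝ) :=
            Real.rpow_le_rpow_of_exponent_ge (by positivity)
              (by rw [inv_le_one_iff₀]; right; exact hmR1) hp1
          rw [Real.rpow_one] at h8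
          calc (m:ℝ) * (m:ℝ)⁻¹ ^ p ≤ (m:ℝ) * (m:ℝ)⁻¹ :=
              mul_le_mul_of_nonneg_left h8 (le_of_lt hmR)
            _ = 1 := mul_inv_cancel₀ hmne
        rw [hsp]
        have hterm2 : ∀ w : Fin n → Fin m, ∑ j : Fin m,
            (κ (n+1) * ‖F n (Function.update (MartingaleAux.wext m n w) n j)‖) ^ p
            ≤ (κ n * ‖F n (MartingaleAux.wext m n w)‖) ^ p := by
          intro w
          have hc : ∀ j : Fin m,
              (κ (n+1) * ‖F n (Function.update (MartingaleAux.wext m n w) n j)‖) ^ p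
              = (m:ℝ)⁻¹ ^ p * (κ n * ‖F n (MartingaleAux.wext m n w)‖) ^ p := by
            intro j
            rw [hupd w j]
            have hκs : κ (n+1) = (m:ℝ)⁻¹ * κ n := by
              rw [hκdef]; simp only [pow_succ]; ring
            rw [hκs, mul_assoc,
              Real.mul_rpow (by positivity) (by positivity)]
          rw [Finset.sum_congr rfl fun j _ => hc j, Finset.sum_const,
            Finset.card_univ, Fintype.card_fin, nsmul_eq_mul]
          calc (m:ℝ) * ((m:ℝ)⁻¹ ^ p * (κ n * ‖F n (MartingaleAux.wext m n w)‖) ^ p)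
              = ((m:ℝ) * (m:ℝ)⁻¹ ^ p) * (κ n * ‖F n (MartingaleAux.wext m n w)‖) ^ p := by
                ring
            _ ≤ 1 * (κ n * ‖F n (MartingaleAux.wext m n w)‖) ^ p :=
                mul_le_mul_of_nonneg_right hml (Real.rpow_nonneg (by positivity) _)
            _ = (κ n * ‖F n (MartingaleAux.wext m n w)‖) ^ p := one_mul _
        exact Finset.sum_le_sum fun w _ => hterm2 w
      have h9 : 2 ^ p * ∑ u : Fin (n+1) → Fin m,
          (κ (n+1) * ‖F n (MartingaleAux.wext m (n+1) u)‖) ^ p ≤ 2 ^ p * Q n :=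
        mul_le_mul_of_nonneg_left hstep2 (Real.rpow_nonneg (by norm_num) _)
      linarith [hstep1, h9]
    have h2p : ((2:ℝ) ^ p) ^ p⁻¹ = 2 := by
      rw [← Real.rpow_mul (by norm_num : (0:ℝ) ≤ 2) p p⁻¹,
        mul_inv_cancel₀ (ne_of_gt hp0), Real.rpow_one]
    calc ψ n ≤ (2 ^ p * Q (n+1) + 2 ^ p * Q n) ^ p⁻¹ :=
        Real.rpow_le_rpow (hR0 n) hRb (le_of_lt hpinv0)
      _ = (2 ^ p * (Q (n+1) + Q n)) ^ p⁻¹ := by rw [mul_add]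
      _ = ((2:ℝ) ^ p) ^ p⁻¹ * (Q (n+1) + Q n) ^ p⁻¹ :=
          Real.mul_rpow (Real.rpow_nonneg (by norm_num) _) (by positivity)
      _ ≤ 2 * ((Q (n+1)) ^ p⁻¹ + (Q n) ^ p⁻¹) := by
          rw [h2p]
          refine mul_le_mul_of_nonneg_left ?_ (by norm_num)
          exact MartingaleAux.rpow_add_le_add_rpow_real (hQ0 _) (hQ0 _)
            (le_of_lt hpinv0) hpinv1
      _ = 2 * (φ (n+1) + φ n) := rfl
  -- identification of the Besov terms
  have hκE : ∀ n : ℕ, ((m:ℝ≥0∞))⁻¹ ^ n = ENNReal.ofReal (κ n) := by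
    intro n
    rw [hκdef]
    rw [ENNReal.ofReal_pow (by positivity), ENNReal.ofReal_inv_of_pos hmR,
      ENNReal.ofReal_natCast]
  have hLp : ∀ n : ℕ,
      ENNReal.ofReal ((m : ℝ) ^ (-(((p - 1) / p) * (n + 1 : ℕ)))) *
        eLpNorm (fun x => F (n + 1) x - F n x) (ENNReal.ofReal p) P
      = ENNReal.ofReal (ψ n) := by
    intro n
    have hq0 : (ENNReal.ofReal p) ≠ 0 := (ENNReal.ofReal_pos.2 hp0).ne'
    have hqt : (ENNReal.ofReal p) ≠ ⊤ := ENNReal.ofReal_ne_top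
    rw [eLpNorm_eq_lintegral_rpow_enorm_toReal hq0 hqt, ENNReal.toReal_ofReal (le_of_lt hp0)]
    simp only [enorm_eq_nnnorm]
    set Tn : ℝ := ∑ u : Fin (n+1) → Fin m,
        κ (n+1) * ‖F (n+1) (MartingaleAux.wext m (n+1) u)
          - F n (MartingaleAux.wext m (n+1) u)‖ ^ p with hTndef
    have hTn0 : 0 ≤ Tn :=
      Finset.sum_nonneg fun u _ => by positivity
    have hint : ∫⁻ x, (‖F (n+1) x - F n x‖₊ : ℝ≥0∞) ^ p ∂P = ENNReal.ofReal Tn := by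
      have hcongr : ∀ x : ℕ → Fin m, (‖F (n+1) x - F n x‖₊ : ℝ≥0∞) ^ p
          = ENNReal.ofReal (‖F (n+1) x - F n x‖ ^ p) := by
        intro x
        rw [← enorm_eq_nnnorm, ← ofReal_norm,
          ENNReal.ofReal_rpow_of_nonneg (norm_nonneg _) (le_of_lt hp0)]
      rw [lintegral_congr hcongr]
      rw [MartingaleAux.lintegral_adapted P hPcyl (n+1)
        (fun x => ENNReal.ofReal (‖F (n+1) x - F n x‖ ^ p))
        (fun x y hxy => by
          simp only [hadapt (n+1) x y hxy,
            hadapt n x y (fun i hi => hxy i (by omega))])]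
      have hterm : ∀ u : Fin (n+1) → Fin m,
          ((m:ℝ≥0∞))⁻¹ ^ (n+1) * ENNReal.ofReal (‖F (n+1) (MartingaleAux.wext m (n+1) u)
            - F n (MartingaleAux.wext m (n+1) u)‖ ^ p)
          = ENNReal.ofReal (κ (n+1) * ‖F (n+1) (MartingaleAux.wext m (n+1) u)
            - F n (MartingaleAux.wext m (n+1) u)‖ ^ p) := by
        intro u
        rw [ENNReal.ofReal_mul (le_of_lt (hκ0 (n+1))), hκE (n+1)]
      rw [Finset.sum_congr rfl fun u _ => hterm u,
        ← ENNReal.ofReal_sum_of_nonneg (fun u _ => by positivity)]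
    rw [hint, one_div, ENNReal.ofReal_rpow_of_nonneg hTn0 (le_of_lt hpinv0),
      ← ENNReal.ofReal_mul (Real.rpow_nonneg (le_of_lt hmR) _)]
    congr 1
    -- the real identity
    have hκppos : 0 < κ (n+1) := hκ0 (n+1)
    have hκp1 : ∀ c : ℝ, 0 ≤ c →
        (κ (n+1) * c) ^ p = (κ (n+1)) ^ (p-1) * (κ (n+1) * c ^ p) := by
      intro c hc
      rw [Real.mul_rpow (le_of_lt hκppos) hc]
      have h7 : (κ (n+1)) ^ p = (κ (n+1)) ^ (p-1) * κ (n+1) := by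
        conv_lhs => rw [show p = (p-1)+1 by ring]
        rw [Real.rpow_add hκppos, Real.rpow_one]
      rw [h7]; ring
    have hRTn : R n = (κ (n+1)) ^ (p-1) * Tn := by
      rw [hTndef, Finset.mul_sum]
      exact Finset.sum_congr rfl fun u _ => hκp1 _ (norm_nonneg _)
    have hwt : (m:ℝ) ^ (-(((p - 1) / p) * ((n + 1 : ℕ) : ℝ)))
        = ((κ (n+1)) ^ (p-1)) ^ p⁻¹ := by
      have hκr : κ (n+1) = (m:ℝ) ^ (-(((n+1:ℕ)):ℝ)) := by
        show ((m:ℝ)⁻¹) ^ (n+1) = _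
        rw [← Real.rpow_natCast ((m:ℝ)⁻¹) (n+1), Real.inv_rpow (le_of_lt hmR),
          ← Real.rpow_neg (le_of_lt hmR)]
      rw [hκr, ← Real.rpow_mul (le_of_lt hmR), ← Real.rpow_mul (le_of_lt hmR)]
      congr 1
      push_cast
      ring
    show _ = R n ^ p⁻¹
    rw [hRTn, Real.mul_rpow (Real.rpow_nonneg (le_of_lt hκppos) _) hTn0, hwt]
  -- final assembly
  calc ∑' n : ℕ, ENNReal.ofReal ((m : ℝ) ^ (-(((p - 1) / p) * (n + 1 : ℕ)))) *
        eLpNorm (fun x => F (n + 1) x - F n x) (ENNReal.ofReal p) P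
      = ∑' n : ℕ, ENNReal.ofReal (ψ n) := tsum_congr hLp
    _ ≤ ↑c₀.toNNReal * T := by
        rw [ENNReal.tsum_eq_iSup_sum]
        refine iSup_le fun s => ?_
        obtain ⟨N, hN⟩ := s.exists_nat_subset_range
        have hreal : ∑ n ∈ Finset.range N, ψ n ≤ c₀ * S := by
          have hs1 : ∑ n ∈ Finset.range N, ψ n
              ≤ ∑ n ∈ Finset.range N, 2 * (φ (n+1) + φ n) :=
            Finset.sum_le_sum fun n _ => hψφ n
          have hs2 : ∑ n ∈ Finset.range N, 2 * (φ (n+1) + φ n)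
              = 2 * (∑ n ∈ Finset.range N, φ (n+1)) + 2 * (∑ n ∈ Finset.range N, φ n) := by
            rw [Finset.mul_sum, Finset.mul_sum, ← Finset.sum_add_distrib]
            exact Finset.sum_congr rfl fun n _ => by ring
          have hs3 : ∑ n ∈ Finset.range N, φ (n+1) ≤ ∑ n ∈ Finset.range (N+1), φ n := by
            rw [Finset.sum_range_succ' φ N]
            have := hφ0 0
            linarith
          have hb1 := hΦ (N+1)
          have hb2 := hΦ N
          have hfinal : c₀ * S = 4 * ((1 + K') * S / (1 - σ)) := by
            rw [hc₀def]; ring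
          rw [hfinal]
          linarith
        calc ∑ n ∈ s, ENNReal.ofReal (ψ n)
            ≤ ∑ n ∈ Finset.range N, ENNReal.ofReal (ψ n) :=
              Finset.sum_le_sum_of_subset hN
          _ = ENNReal.ofReal (∑ n ∈ Finset.range N, ψ n) :=
              (ENNReal.ofReal_sum_of_nonneg fun n _ => hψ0 n).symm
          _ ≤ ENNReal.ofReal (c₀ * S) := ENNReal.ofReal_le_ofReal hreal
          _ = ↑c₀.toNNReal * T := by
              rw [ENNReal.ofReal_mul hc₀0, ENNReal.ofReal_toReal hTne]
              rfl
end
end
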